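/- arXiv:1411.6317 — 7 statements merged into one kernel-verified Lean document; each statement's English description precedes it below -/
import Mathlib

section
/- For the function f(x) = (m/2 − ∑_{i=1}^m x_i)^2 − 1/4 on {0,1}^m with m odd, f is nonnegative on the cube, and there exists a degree-m pseudo-density D with E_x D(x) f(x) = −1/4. -/
/-- The real value of a Boolean cube coordinate (`{0,1}` encoding). -/
def bval (b : Bool) : ℝ := if b then 1 else 0

/-- Expectation over the uniform distribution on `{0,1}^m`. -/
noncomputable def cubeAvg (m : ℕ) (f : (Fin m → Bool) → ℝ) : ℝ :=
  (∑ x : Fin m → Bool, f x) / 2 ^ m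

/-- `g : {0,1}^m → ℝ` has (multilinear) degree at most `k`. -/
def HasDegLE (m k : ℕ) (g : (Fin m → Bool) → ℝ) : Prop :=
  ∃ c : Finset (Fin m) → ℝ, (∀ S : Finset (Fin m), k < S.card → c S = 0) ∧
    ∀ x, g x = ∑ S : Finset (Fin m), c S * ∏ i ∈ S, bval (x i)

/-- A degree-`d` pseudo-density on `{0,1}^m`: `E D = 1` and `E D·g² ≥ 0`
for every `g` of degree at most `d/2`. -/
def IsPseudoDensity (m d : ℕ) (D : (Fin m → Bool) → ℝ) : Prop :=
  cubeAvg m D = 1 ∧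
    ∀ g : (Fin m → Bool) → ℝ, HasDegLE m (d / 2) g →
      0 ≤ cubeAvg m (fun x => D x * g x ^ 2)


namespace SG
open Finset Polynomial

variable {m : ℕ}

def toSet (x : Fin m → Bool) : Finset (Fin m) := Finset.univ.filter (fun i => x i = true)

def wt (x : Fin m → Bool) : ℕ := (toSet x).card

lemma mem_toSet {x : Fin m → Bool} {i : Fin m} : i ∈ toSet x ↔ x i = true := by
  simp [toSet]

lemma toSet_mem (T : Finset (Fin m)) : toSet (fun i => i ∈ T) = T := by
  ext i; simp [toSet]

lemma wt_le (x : Fin m → Bool) : wt x ≤ m := by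
  simpa [wt] using (Finset.card_le_univ (toSet x))

lemma bval_prod_eq (x : Fin m → Bool) (A : Finset (Fin m)) :
    (∏ i ∈ A, bval (x i)) = if A ⊆ toSet x then 1 else 0 := by
  by_cases h : A ⊆ toSet x
  · rw [if_pos h]
    apply Finset.prod_eq_one
    intro i hi
    have : x i = true := mem_toSet.mp (h hi)
    simp [bval, this]
  · rw [if_neg h]
    obtain ⟨i, hiA, hix⟩ := Finset.not_subset.mp h
    refine Finset.prod_eq_zero hiA ?_
    have : x i = false := by
      have := (mem_toSet (x := x) (i := i)).not.mp hix
      simpa using this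
    simp [bval, this]

def cubeSlice (m k : ℕ) : Finset (Fin m → Bool) := Finset.univ.filter (fun x => wt x = k)

lemma mem_cubeSlice {k : ℕ} {x : Fin m → Bool} : x ∈ cubeSlice m k ↔ wt x = k := by
  simp [cubeSlice]

noncomputable def sliceSum (m k : ℕ) (u : (Fin m → Bool) → ℝ) : ℝ := ∑ x ∈ cubeSlice m k, u x

lemma sum_cube_eq_sum_slices (u : (Fin m → Bool) → ℝ) :
    ∑ x : Fin m → Bool, u x = ∑ k ∈ Finset.range (m+1), sliceSum m k u := by
  simp only [sliceSum]
  exact (Finset.sum_fiberwise_of_maps_to (fun x _ => Finset.mem_range.mpr (Nat.lt_succ_of_le (wt_le x))) u).symm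

lemma slice_superset_card (k : ℕ) (C : Finset (Fin m)) :
    ((cubeSlice m k).filter (fun x => C ⊆ toSet x)).card
      = if C.card ≤ k then (m - C.card).choose (k - C.card) else 0 := by
  by_cases hck : C.card ≤ k
  · rw [if_pos hck]
    have hpc : (Finset.powersetCard (k - C.card) (Finset.univ \ C)).card
        = (m - C.card).choose (k - C.card) := by
      rw [Finset.card_powersetCard, Finset.card_sdiff_of_subset (Finset.subset_univ C)]
      simp
    rw [← hpc]
    apply Finset.card_bij' (fun x _ => toSet x \ C)
      (fun T _ => fun i => decide (i ∈ T ∪ C))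
    · intro x hx
      rw [Finset.mem_filter, mem_cubeSlice] at hx
      rw [Finset.mem_powersetCard]
      refine ⟨fun i hi => ?_, ?_⟩
      · rw [Finset.mem_sdiff] at hi
        exact Finset.mem_sdiff.mpr ⟨Finset.mem_univ _, hi.2⟩
      · rw [Finset.card_sdiff_of_subset hx.2]
        rw [show (toSet x).card = k from hx.1]
    · intro T hT
      rw [Finset.mem_powersetCard] at hT
      obtain ⟨hTsub, hTcard⟩ := hT
      have hdisj : Disjoint T C := by
        rw [Finset.disjoint_left]
        intro a haT haC
        have := hTsub haT
        rw [Finset.mem_sdiff] at this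
        exact this.2 haC
      rw [Finset.mem_filter, mem_cubeSlice]
      constructor
      · show (toSet (fun i => decide (i ∈ T ∪ C))).card = k
        rw [toSet_mem, Finset.card_union_of_disjoint hdisj, hTcard]
        omega
      · rw [toSet_mem]
        exact Finset.subset_union_right
    · intro x hx
      rw [Finset.mem_filter, mem_cubeSlice] at hx
      have hu : toSet x \ C ∪ C = toSet x := Finset.sdiff_union_of_subset hx.2
      funext i
      rw [hu]
      cases hxi : x i <;> simp [mem_toSet, hxi]
    · intro T hT
      rw [Finset.mem_powersetCard] at hT
      have hdisj : Disjoint T C := by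
        rw [Finset.disjoint_left]
        intro a haT haC
        have := hT.1 haT
        rw [Finset.mem_sdiff] at this
        exact this.2 haC
      rw [toSet_mem]
      exact Finset.union_sdiff_cancel_right hdisj
  · rw [if_neg hck]
    rw [Finset.card_eq_zero, Finset.filter_eq_empty_iff]
    intro x hx
    rw [mem_cubeSlice] at hx
    intro hsub
    exact hck (hx ▸ Finset.card_le_card hsub)


/-! ### Chunk 2: polynomials, Lagrange weights, the pseudo-density -/

noncomputable def ffp (m c : ℕ) : Polynomial ℝ :=
  Polynomial.C ((∏ i ∈ Finset.range c, ((m : ℝ) - i))⁻¹) *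
    ∏ i ∈ Finset.range c, (Polynomial.X - Polynomial.C (i : ℝ))

lemma ffp_natDegree_le (m c : ℕ) : (ffp m c).natDegree ≤ c := by
  refine le_trans (Polynomial.natDegree_mul_le) ?_
  have h1 : (Polynomial.C ((∏ i ∈ Finset.range c, ((m : ℝ) - i))⁻¹)).natDegree = 0 :=
    Polynomial.natDegree_C _
  have h2 : (∏ i ∈ Finset.range c, (Polynomial.X - Polynomial.C (i : ℝ))).natDegree ≤ c := by
    refine le_trans (Polynomial.natDegree_prod_le _ _) ?_
    calc ∑ i ∈ Finset.range c, (Polynomial.X - Polynomial.C (i : ℝ)).natDegree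
        ≤ ∑ _i ∈ Finset.range c, 1 := by
          apply Finset.sum_le_sum
          intro i _
          exact le_of_eq (Polynomial.natDegree_X_sub_C _)
      _ = c := by simp
  omega

lemma prod_range_cast_sub (a c : ℕ) (hca : c ≤ a) :
    (∏ i ∈ Finset.range c, ((a : ℝ) - i)) = (a.descFactorial c : ℝ) := by
  rw [Nat.descFactorial_eq_prod_range, Nat.cast_prod]
  apply Finset.prod_congr rfl
  intro i hi
  rw [Finset.mem_range] at hi
  have : i ≤ a := le_trans (le_of_lt hi) hca
  rw [Nat.cast_sub this]

lemma cast_descFactorial_eq (a c : ℕ) (hca : c ≤ a) :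
    (a.descFactorial c : ℝ) = (a.factorial : ℝ) / ((a - c).factorial : ℝ) := by
  have h := Nat.factorial_mul_factorial_dvd_factorial hca
  have h2 : a.descFactorial c * (a - c).factorial = a.factorial := by
    rw [mul_comm]
    exact Nat.factorial_mul_descFactorial hca
  field_simp
  exact_mod_cast congrArg (fun n : ℕ => (n : ℝ)) h2

lemma ffp_eval_nat (m c k : ℕ) (hkm : k ≤ m) (hcm : c ≤ m) :
    (m.choose k : ℝ) * (ffp m c).eval (k : ℝ)
      = if c ≤ k then ((m - c).choose (k - c) : ℝ) else 0 := by
  rw [ffp]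
  simp only [Polynomial.eval_mul, Polynomial.eval_C, Polynomial.eval_prod,
    Polynomial.eval_sub, Polynomial.eval_X]
  by_cases hck : c ≤ k
  · rw [if_pos hck]
    rw [prod_range_cast_sub m c hcm, prod_range_cast_sub k c hck]
    have hdm : (m.descFactorial c : ℝ) ≠ 0 := by
      rw [cast_descFactorial_eq m c hcm]
      positivity
    rw [cast_descFactorial_eq m c hcm, cast_descFactorial_eq k c hck]
    rw [Nat.cast_choose ℝ hkm, Nat.cast_choose ℝ (by omega : k - c ≤ m - c)]
    have e1 : m - c - (k - c) = m - k := by omega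
    rw [e1]
    have f1 : ((m.factorial : ℝ)) ≠ 0 := by positivity
    have f2 : ((k.factorial : ℝ)) ≠ 0 := by positivity
    have f3 : (((m - k).factorial : ℝ)) ≠ 0 := by positivity
    have f4 : (((k - c).factorial : ℝ)) ≠ 0 := by positivity
    have f5 : (((m - c).factorial : ℝ)) ≠ 0 := by positivity
    field_simp
  · rw [if_neg hck]
    have : (∏ i ∈ Finset.range c, ((k : ℝ) - i)) = 0 := by
      apply Finset.prod_eq_zero (Finset.mem_range.mpr (by omega : k < c))
      simp
    rw [this]
    ring

lemma card_cubeSlice (m k : ℕ) : (cubeSlice m k).card = m.choose k := by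
  have h := slice_superset_card (m := m) k ∅
  simp only [Finset.card_empty, Nat.zero_le, if_pos, Nat.sub_zero] at h
  rw [← h]
  congr 1
  exact (Finset.filter_true_of_mem (fun x _ => Finset.empty_subset _)).symm

lemma sliceSum_indicator (k : ℕ) (C : Finset (Fin m)) :
    sliceSum m k (fun x => ∏ i ∈ C, bval (x i))
      = (((cubeSlice m k).filter (fun x => C ⊆ toSet x)).card : ℝ) := by
  rw [sliceSum]
  rw [Finset.card_filter]
  rw [Nat.cast_sum]
  apply Finset.sum_congr rfl
  intro x _
  rw [bval_prod_eq]
  by_cases h : C ⊆ toSet x <;> simp [h]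

lemma sliceSum_monoSet (k : ℕ) (hkm : k ≤ m) (C : Finset (Fin m)) :
    sliceSum m k (fun x => ∏ i ∈ C, bval (x i))
      = (m.choose k : ℝ) * (ffp m C.card).eval (k : ℝ) := by
  rw [sliceSum_indicator, slice_superset_card, ffp_eval_nat m C.card k hkm
    (by simpa using Finset.card_le_univ C)]
  by_cases h : C.card ≤ k <;> simp [h]

noncomputable def lagW (m k : ℕ) : ℝ :=
  Polynomial.eval ((m : ℝ) / 2) (Lagrange.basis (Finset.range (m + 1)) (fun i => (i : ℝ)) k)

lemma sum_lagW_eval (F : Polynomial ℝ) (hF : F.natDegree ≤ m) :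
    ∑ k ∈ Finset.range (m + 1), lagW m k * F.eval (k : ℝ) = F.eval ((m : ℝ) / 2) := by
  have hinj : Set.InjOn (fun i : ℕ => (i : ℝ)) ↑(Finset.range (m + 1)) :=
    fun a _ b _ h => Nat.cast_injective h
  have hdeg : F.degree < ((Finset.range (m + 1)).card : ℕ) := by
    rw [Finset.card_range]
    refine lt_of_le_of_lt Polynomial.degree_le_natDegree ?_
    exact_mod_cast Nat.lt_succ_of_le hF
  have heq := Lagrange.eq_interpolate hinj hdeg
  conv_rhs => rw [heq]
  rw [Lagrange.interpolate_apply, Polynomial.eval_finset_sum]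
  apply Finset.sum_congr rfl
  intro k _
  rw [Polynomial.eval_mul, Polynomial.eval_C, lagW]
  ring

noncomputable def Dfun (m : ℕ) (x : Fin m → Bool) : ℝ :=
  2 ^ m * lagW m (wt x) / (m.choose (wt x))

lemma cubeAvg_Dfun_mul (u : (Fin m → Bool) → ℝ) :
    cubeAvg m (fun x => Dfun m x * u x)
      = ∑ k ∈ Finset.range (m + 1), lagW m k / (m.choose k) * sliceSum m k u := by
  rw [cubeAvg, sum_cube_eq_sum_slices]
  rw [Finset.sum_div]
  apply Finset.sum_congr rfl
  intro k hk
  rw [Finset.mem_range] at hk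
  have hslice : sliceSum m k (fun x => Dfun m x * u x)
      = (2 ^ m * lagW m k / (m.choose k)) * sliceSum m k u := by
    rw [sliceSum, sliceSum, Finset.mul_sum]
    apply Finset.sum_congr rfl
    intro x hx
    rw [mem_cubeSlice] at hx
    rw [Dfun, hx]
  rw [hslice]
  have h2 : (2 : ℝ) ^ m ≠ 0 := by positivity
  rw [div_eq_iff h2]
  ring

lemma cubeAvg_Dfun_eval (W : Polynomial ℝ) (hW : W.natDegree ≤ m)
    (u : (Fin m → Bool) → ℝ)
    (hu : ∀ k, k ≤ m → sliceSum m k u = (m.choose k : ℝ) * W.eval (k : ℝ)) :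
    cubeAvg m (fun x => Dfun m x * u x) = W.eval ((m : ℝ) / 2) := by
  rw [cubeAvg_Dfun_mul]
  rw [← sum_lagW_eval W hW]
  apply Finset.sum_congr rfl
  intro k hk
  rw [Finset.mem_range] at hk
  rw [hu k (by omega)]
  have hch : ((m.choose k : ℝ)) ≠ 0 := by
    have := Nat.choose_pos (by omega : k ≤ m)
    positivity
  field_simp


/-! ### Chunk 3: E[D] = 1, E[D f] = -1/4, nonnegativity of f -/

lemma sum_bval (x : Fin m → Bool) : (∑ i, bval (x i)) = (wt x : ℝ) := by
  rw [wt, toSet]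
  rw [Finset.card_filter, Nat.cast_sum]
  apply Finset.sum_congr rfl
  intro i _
  by_cases h : x i <;> simp [bval, h]

lemma sliceSum_const_poly (W : Polynomial ℝ) (k : ℕ) (u : (Fin m → Bool) → ℝ)
    (hu : ∀ x, wt x = k → u x = W.eval (k : ℝ)) :
    sliceSum m k u = (m.choose k : ℝ) * W.eval (k : ℝ) := by
  rw [sliceSum]
  rw [Finset.sum_congr rfl (fun x hx => hu x (mem_cubeSlice.mp hx))]
  rw [Finset.sum_const, ← card_cubeSlice, nsmul_eq_mul]

lemma Dfun_avg_one : cubeAvg m (Dfun m) = 1 := by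
  have h : cubeAvg m (Dfun m) = cubeAvg m (fun x => Dfun m x * (fun _ => (1 : ℝ)) x) := by
    simp
  rw [h, cubeAvg_Dfun_eval (1 : Polynomial ℝ) (by simp)]
  · simp
  · intro k _
    exact sliceSum_const_poly 1 k _ (fun x _ => by simp)

lemma Dfun_avg_f (hm3 : 3 ≤ m) (f : (Fin m → Bool) → ℝ)
    (hf : ∀ x, f x = ((m : ℝ) / 2 - ∑ i : Fin m, bval (x i)) ^ 2 - 1 / 4) :
    cubeAvg m (fun x => Dfun m x * f x) = -(1 / 4) := by
  set W : Polynomial ℝ :=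
    (Polynomial.C ((m : ℝ) / 2) - Polynomial.X) ^ 2 - Polynomial.C (1 / 4) with hW
  have hdeg : W.natDegree ≤ m := by
    have h1 : ((Polynomial.C ((m : ℝ) / 2) - Polynomial.X) ^ 2).natDegree ≤ 2 := by
      refine le_trans (Polynomial.natDegree_pow_le) ?_
      have : (Polynomial.C ((m : ℝ) / 2) - Polynomial.X).natDegree ≤ 1 := by
        refine le_trans (Polynomial.natDegree_sub_le _ _) ?_
        simp
      omega
    have := Polynomial.natDegree_sub_le ((Polynomial.C ((m : ℝ) / 2) - Polynomial.X) ^ 2)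
      (Polynomial.C (1 / 4))
    simp only [Polynomial.natDegree_C, Nat.max_zero] at this
    rw [← hW] at this
    omega
  rw [cubeAvg_Dfun_eval W hdeg f]
  · rw [hW]
    simp
  · intro k hk
    apply sliceSum_const_poly
    intro x hx
    rw [hf x, sum_bval, hx, hW]
    simp

lemma f_nonneg (hm : Odd m) (x : Fin m → Bool) :
    0 ≤ ((m : ℝ) / 2 - ∑ i : Fin m, bval (x i)) ^ 2 - 1 / 4 := by
  rw [sum_bval]
  obtain ⟨l, hl⟩ := hm
  set z : ℤ := (m : ℤ) - 2 * (wt x : ℤ) with hz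
  have hzodd : z ≠ 0 := by omega
  have hz1 : 1 ≤ z ^ 2 := by nlinarith [Int.one_le_abs hzodd, abs_nonneg z, sq_abs z]
  have hcast : ((m : ℝ) / 2 - (wt x : ℝ)) = (z : ℝ) / 2 := by
    rw [hz]
    push_cast
    ring
  rw [hcast]
  have : (1 : ℝ) ≤ (z : ℝ) ^ 2 := by exact_mod_cast hz1
  nlinarith


/-! ### Chunk 4: harmonic coefficient functions -/

def Homog (j : ℕ) (c : Finset (Fin m) → ℝ) : Prop := ∀ A, c A ≠ 0 → A.card = j

def Harm (j : ℕ) (c : Finset (Fin m) → ℝ) : Prop :=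
  Homog j c ∧ ∀ F : Finset (Fin m), F.card + 1 = j → (∑ i, c (insert i F)) = 0

noncomputable def Gfn (c : Finset (Fin m) → ℝ) (B : Finset (Fin m)) : ℝ :=
  ∑ A ∈ Finset.univ.filter (fun A => B ⊆ A), c A

lemma Gfn_top {j : ℕ} {c : Finset (Fin m) → ℝ} (hc : Homog j c) {C : Finset (Fin m)}
    (hC : C.card = j) : Gfn c C = c C := by
  rw [Gfn]
  apply Finset.sum_eq_single_of_mem
  · simp
  · intro A hA hAne
    rw [Finset.mem_filter] at hA
    by_contra h
    have hcard := hc A h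
    exact hAne (Finset.eq_of_subset_of_card_le hA.2 (by omega)).symm

lemma sum_Gfn_insert {j : ℕ} {c : Finset (Fin m) → ℝ} (hc : Homog j c) (B : Finset (Fin m)) :
    ∑ i ∈ Finset.univ \ B, Gfn c (insert i B)
      = ((j - B.card : ℕ) : ℝ) * Gfn c B := by
  have step1 : ∀ i, Gfn c (insert i B) = ∑ A, (if insert i B ⊆ A then c A else 0) := by
    intro i
    rw [Gfn, Finset.sum_filter]
  rw [Finset.sum_congr rfl (fun i _ => step1 i)]
  rw [Finset.sum_comm]
  have step2 : ∀ A, (∑ i ∈ Finset.univ \ B, if insert i B ⊆ A then c A else 0)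
      = (if B ⊆ A then (((A \ B).card : ℕ) : ℝ) * c A else 0) := by
    intro A
    by_cases hBA : B ⊆ A
    · rw [if_pos hBA]
      have hiff : ∀ i, insert i B ⊆ A ↔ (i ∈ A ∧ B ⊆ A) := fun i => Finset.insert_subset_iff
      rw [Finset.sum_ite, Finset.sum_const_zero, add_zero, Finset.sum_const, nsmul_eq_mul]
      have hseteq : (Finset.univ \ B).filter (fun i => insert i B ⊆ A) = A \ B := by
        ext i
        simp only [Finset.mem_filter, Finset.mem_sdiff, Finset.mem_univ, true_and]
        rw [hiff i]
        constructor
        · rintro ⟨hiB, hiA, -⟩; exact ⟨hiA, hiB⟩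
        · rintro ⟨hiA, hiB⟩; exact ⟨hiB, hiA, hBA⟩
      rw [hseteq]
    · rw [if_neg hBA]
      apply Finset.sum_eq_zero
      intro i _
      rw [if_neg]
      intro hsub
      exact hBA (le_trans (Finset.subset_insert i B) hsub)
  rw [Finset.sum_congr rfl (fun A _ => step2 A)]
  rw [Gfn, Finset.sum_filter, Finset.mul_sum]
  apply Finset.sum_congr rfl
  intro A _
  by_cases hBA : B ⊆ A
  · rw [if_pos hBA, if_pos hBA]
    by_cases hcA : c A = 0
    · rw [hcA]; ring
    · have : A.card = j := hc A hcA
      rw [Finset.card_sdiff_of_subset hBA, this]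
  · rw [if_neg hBA, if_neg hBA]; ring

lemma Gfn_zero_aux {j : ℕ} {c : Finset (Fin m) → ℝ} (hc : Harm j c) :
    ∀ r B, B.card + 1 + r = j → Gfn c B = 0 := by
  intro r
  induction r with
  | zero =>
    intro B hB
    have hstep := sum_Gfn_insert hc.1 B
    have hone : (j - B.card : ℕ) = 1 := by omega
    rw [hone] at hstep
    simp only [Nat.cast_one, one_mul] at hstep
    rw [← hstep]
    have hins : ∀ i ∈ Finset.univ \ B, Gfn c (insert i B) = c (insert i B) := by
      intro i hi
      rw [Finset.mem_sdiff] at hi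
      exact Gfn_top hc.1 (by rw [Finset.card_insert_of_notMem hi.2]; omega)
    rw [Finset.sum_congr rfl hins]
    have hB0 : c B = 0 := by
      by_contra h
      have := hc.1 B h
      omega
    have hsplit : (∑ i, c (insert i B)) =
        (∑ i ∈ Finset.univ \ B, c (insert i B)) + ∑ i ∈ B, c (insert i B) := by
      rw [Finset.sum_sdiff (Finset.subset_univ B)]
    have hinB : (∑ i ∈ B, c (insert i B)) = 0 := by
      apply Finset.sum_eq_zero
      intro i hi
      rw [Finset.insert_eq_self.mpr hi]
      exact hB0
    have hall := hc.2 B (by omega)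
    rw [hsplit, hinB, add_zero] at hall
    exact hall
  | succ r ih =>
    intro B hB
    have hstep := sum_Gfn_insert hc.1 B
    have hz : (∑ i ∈ Finset.univ \ B, Gfn c (insert i B)) = 0 := by
      apply Finset.sum_eq_zero
      intro i hi
      rw [Finset.mem_sdiff] at hi
      exact ih (insert i B) (by rw [Finset.card_insert_of_notMem hi.2]; omega)
    rw [hz] at hstep
    have hne : (((j - B.card : ℕ) : ℝ)) ≠ 0 := by
      have : j - B.card = r + 2 := by omega
      rw [this]
      positivity
    exact ((mul_eq_zero.mp hstep.symm).resolve_left hne)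

lemma Gfn_zero {j : ℕ} {c : Finset (Fin m) → ℝ} (hc : Harm j c) {B : Finset (Fin m)}
    (hB : B.card < j) : Gfn c B = 0 :=
  Gfn_zero_aux hc (j - 1 - B.card) B (by omega)

lemma harm_sum_subset_zero {j : ℕ} {c : Finset (Fin m) → ℝ} (hc : Harm j c) (hj : 1 ≤ j)
    {T : Finset (Fin m)} (hT : m - T.card < j) :
    (∑ A ∈ T.powerset, c A) = 0 := by
  have hrw : (∑ A : Finset (Fin m), if A ⊆ T then c A else 0) = ∑ A ∈ T.powerset, c A := by
    rw [← Finset.sum_filter]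
    congr 1
    ext A
    simp [Finset.mem_powerset]
  rw [← hrw]
  have key : ∀ A : Finset (Fin m), (if A ⊆ T then c A else 0)
      = ∑ B ∈ (Finset.univ \ T).powerset, (if B ⊆ A then ((-1 : ℝ) ^ B.card) * c A else 0) := by
    intro A
    have hps : (A ∩ (Finset.univ \ T)).powerset
        = (Finset.univ \ T).powerset.filter (fun B => B ⊆ A) := by
      ext B
      simp only [Finset.mem_powerset, Finset.mem_filter, Finset.subset_inter_iff]
      tauto
    have hsumZ : (∑ B ∈ (A ∩ (Finset.univ \ T)).powerset, (-1 : ℤ) ^ B.card)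
        = (if A ∩ (Finset.univ \ T) = ∅ then 1 else 0) :=
      Finset.sum_powerset_neg_one_pow_card
    have hsum : (∑ B ∈ (A ∩ (Finset.univ \ T)).powerset, (-1 : ℝ) ^ B.card)
        = (if A ∩ (Finset.univ \ T) = ∅ then 1 else 0) := by
      exact_mod_cast hsumZ
    rw [hps] at hsum
    have hempty : A ∩ (Finset.univ \ T) = ∅ ↔ A ⊆ T := by
      constructor
      · intro h i hiA
        by_contra hiT
        have : i ∈ A ∩ (Finset.univ \ T) := by
          rw [Finset.mem_inter, Finset.mem_sdiff]
          exact ⟨hiA, Finset.mem_univ _, hiT⟩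
        rw [h] at this
        exact absurd this (Finset.notMem_empty i)
      · intro h
        rw [Finset.eq_empty_iff_forall_notMem]
        intro i hi
        rw [Finset.mem_inter, Finset.mem_sdiff] at hi
        exact hi.2.2 (h hi.1)
    rw [← Finset.sum_filter]
    rw [← Finset.sum_mul, hsum]
    by_cases hAT : A ⊆ T
    · rw [if_pos hAT, if_pos (hempty.mpr hAT), one_mul]
    · rw [if_neg hAT, if_neg (fun h => hAT (hempty.mp h)), zero_mul]
  rw [Finset.sum_congr rfl (fun A _ => key A)]
  rw [Finset.sum_comm]
  apply Finset.sum_eq_zero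
  intro B hB
  rw [Finset.mem_powerset] at hB
  have hBcard : B.card < j := by
    have h1 : B.card ≤ (Finset.univ \ T).card := Finset.card_le_card hB
    have h2 : (Finset.univ \ T).card = m - T.card := by
      rw [Finset.card_sdiff_of_subset (Finset.subset_univ T)]
      simp
    omega
  have : (∑ A, if B ⊆ A then ((-1 : ℝ) ^ B.card) * c A else 0)
      = ((-1 : ℝ) ^ B.card) * Gfn c B := by
    rw [Gfn, Finset.sum_filter, Finset.mul_sum]
    apply Finset.sum_congr rfl
    intro A _
    by_cases h : B ⊆ A <;> simp [h]
  rw [this, Gfn_zero hc hBcard, mul_zero]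


/-! ### Chunk 5: multilinear functions from coefficients, pair polynomial, orthogonality -/

noncomputable def mono (c : Finset (Fin m) → ℝ) (x : Fin m → Bool) : ℝ :=
  ∑ A, c A * ∏ i ∈ A, bval (x i)

lemma bval_prod_mul (x : Fin m → Bool) (A B : Finset (Fin m)) :
    (∏ i ∈ A, bval (x i)) * (∏ i ∈ B, bval (x i)) = ∏ i ∈ A ∪ B, bval (x i) := by
  simp only [bval_prod_eq, Finset.union_subset_iff]
  by_cases hA : A ⊆ toSet x <;> by_cases hB : B ⊆ toSet x <;> simp [hA, hB]

lemma tri_zero (T : ℕ → ℝ) (a : ℕ)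
    (hM : ∀ s, s ≤ a → (∑ r ∈ Finset.range (a+1), (r.choose s : ℝ) * T r) = 0) :
    ∀ s, s ≤ a → T s = 0 := by
  suffices h : ∀ k s, s ≤ a → a - s ≤ k → T s = 0 by
    intro s hs
    exact h a s hs (by omega)
  intro k
  induction k with
  | zero =>
    intro s hs hk
    have hM' := hM s hs
    rw [Finset.sum_eq_single s] at hM'
    · simpa using hM'
    · intro r hr hrs
      rw [Finset.mem_range] at hr
      have : r < s := by omega
      rw [Nat.choose_eq_zero_of_lt this]
      simp
    · intro h
      exact absurd (Finset.mem_range.mpr (by omega)) h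
  | succ k ih =>
    intro s hs hk
    have hM' := hM s hs
    rw [Finset.sum_eq_single s] at hM'
    · simpa using hM'
    · intro r hr hrs
      rw [Finset.mem_range] at hr
      rcases lt_or_gt_of_ne hrs with h | h
      · rw [Nat.choose_eq_zero_of_lt h]
        simp
      · rw [ih r (by omega) (by omega)]
        ring
    · intro h
      exact absurd (Finset.mem_range.mpr (by omega)) h

lemma harm_pair_sum_zero {j' : ℕ} {c' : Finset (Fin m) → ℝ} (hc' : Harm j' c')
    (A : Finset (Fin m)) (hA : A.card < j') (u : ℕ → ℝ) :
    (∑ B, c' B * u ((A ∪ B).card)) = 0 := by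
  set a := A.card with ha
  set T : ℕ → ℝ := fun s => ∑ B, c' B * (if (A ∩ B).card = s then 1 else 0) with hT
  have hTzero : ∀ s, s ≤ a → T s = 0 := by
    apply tri_zero
    intro s hsa
    -- ∑_r C(r,s) T r = ∑_B c' B * C((A∩B).card, s)
    have hswap : (∑ r ∈ Finset.range (a+1), (r.choose s : ℝ) * T r)
        = ∑ B, c' B * (((A ∩ B).card.choose s : ℝ)) := by
      rw [hT]
      simp only [Finset.mul_sum]
      rw [Finset.sum_comm]
      apply Finset.sum_congr rfl
      intro B _
      rw [Finset.sum_eq_single ((A ∩ B).card)]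
      · simp [mul_comm]
      · intro r hr hne
        rw [if_neg (fun h => hne h.symm)]
        ring
      · intro h
        exfalso
        apply h
        rw [Finset.mem_range]
        have : (A ∩ B).card ≤ a := by
          rw [ha]
          exact Finset.card_le_card (Finset.inter_subset_left)
        omega
    rw [hswap]
    -- = ∑_{B' ∈ powersetCard s A} Gfn c' B' = 0
    have hexp : (∑ B, c' B * (((A ∩ B).card.choose s : ℝ)))
        = ∑ B' ∈ Finset.powersetCard s A, Gfn c' B' := by
      have hG : ∀ B' : Finset (Fin m), Gfn c' B' = ∑ B, (if B' ⊆ B then c' B else 0) := by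
        intro B'
        rw [Gfn, Finset.sum_filter]
      rw [Finset.sum_congr rfl (fun B' _ => hG B')]
      rw [Finset.sum_comm]
      apply Finset.sum_congr rfl
      intro B _
      have hcount : ∀ B' ∈ Finset.powersetCard s A, (if B' ⊆ B then c' B else 0)
          = c' B * (if B' ∈ Finset.powersetCard s (A ∩ B) then 1 else 0) := by
        intro B' hB'
        rw [Finset.mem_powersetCard] at hB'
        by_cases h : B' ⊆ B
        · rw [if_pos h, if_pos, mul_one]
          rw [Finset.mem_powersetCard]
          exact ⟨Finset.subset_inter hB'.1 h, hB'.2⟩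
        · rw [if_neg h, if_neg, mul_zero]
          rw [Finset.mem_powersetCard]
          rintro ⟨hsub, -⟩
          exact h (le_trans hsub Finset.inter_subset_right)
      rw [Finset.sum_congr rfl hcount]
      rw [← Finset.mul_sum]
      congr 1
      have : (∑ B' ∈ Finset.powersetCard s A, if B' ∈ Finset.powersetCard s (A ∩ B) then (1:ℝ) else 0)
          = ((Finset.powersetCard s A).filter (fun B' => B' ∈ Finset.powersetCard s (A ∩ B))).card := by
        rw [Finset.card_filter]
        rw [Finset.sum_ite, Finset.sum_const, Finset.sum_const]
        push_cast
        simp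
      rw [this]
      have hfe : (Finset.powersetCard s A).filter (fun B' => B' ∈ Finset.powersetCard s (A ∩ B))
          = Finset.powersetCard s (A ∩ B) := by
        ext B'
        simp only [Finset.mem_filter, Finset.mem_powersetCard]
        constructor
        · tauto
        · intro h
          exact ⟨⟨le_trans h.1 Finset.inter_subset_left, h.2⟩, h⟩
      rw [hfe, Finset.card_powersetCard]
    rw [hexp]
    apply Finset.sum_eq_zero
    intro B' hB'
    rw [Finset.mem_powersetCard] at hB'
    exact Gfn_zero hc' (by omega)
  -- now the main sum
  have hmain : (∑ B, c' B * u ((A ∪ B).card))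
      = ∑ s ∈ Finset.range (a+1), u (j' + a - s) * T s := by
    rw [hT]
    simp only [Finset.mul_sum]
    rw [Finset.sum_comm]
    apply Finset.sum_congr rfl
    intro B _
    by_cases hcB : c' B = 0
    · rw [hcB]
      simp
    · have hBcard : B.card = j' := hc'.1 B hcB
      have hAB : (A ∪ B).card = j' + a - (A ∩ B).card := by
        have := Finset.card_union_add_card_inter A B
        omega
      rw [Finset.sum_eq_single ((A ∩ B).card)]
      · rw [if_pos rfl, mul_one, hAB]
        ring
      · intro r hr hne
        rw [if_neg (fun h => hne h.symm)]
        ring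
      · intro h
        exfalso
        apply h
        rw [Finset.mem_range]
        have : (A ∩ B).card ≤ a := Finset.card_le_card (Finset.inter_subset_left)
        omega
  rw [hmain]
  apply Finset.sum_eq_zero
  intro s hs
  rw [Finset.mem_range] at hs
  rw [hTzero s (by omega)]
  ring

noncomputable def pairPoly (c c' : Finset (Fin m) → ℝ) : Polynomial ℝ :=
  ∑ A, ∑ B, Polynomial.C (c A * c' B) * ffp m ((A ∪ B).card)

lemma pairPoly_eval (c c' : Finset (Fin m) → ℝ) (k : ℕ) (hkm : k ≤ m) :
    (m.choose k : ℝ) * (pairPoly c c').eval (k : ℝ)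
      = sliceSum m k (fun x => mono c x * mono c' x) := by
  have hrhs : sliceSum m k (fun x => mono c x * mono c' x)
      = ∑ A, ∑ B, (c A * c' B) * sliceSum m k (fun x => ∏ i ∈ A ∪ B, bval (x i)) := by
    rw [sliceSum]
    have hpt : ∀ x, mono c x * mono c' x
        = ∑ A, ∑ B, (c A * c' B) * ∏ i ∈ A ∪ B, bval (x i) := by
      intro x
      rw [mono, mono, Finset.sum_mul_sum]
      apply Finset.sum_congr rfl
      intro A _
      apply Finset.sum_congr rfl
      intro B _
      rw [← bval_prod_mul]
      ring
    rw [Finset.sum_congr rfl (fun x _ => hpt x)]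
    rw [Finset.sum_comm]
    apply Finset.sum_congr rfl
    intro A _
    rw [Finset.sum_comm]
    apply Finset.sum_congr rfl
    intro B _
    rw [sliceSum, Finset.mul_sum]
  rw [hrhs, pairPoly]
  rw [Polynomial.eval_finset_sum, Finset.mul_sum]
  apply Finset.sum_congr rfl
  intro A _
  rw [Polynomial.eval_finset_sum, Finset.mul_sum]
  apply Finset.sum_congr rfl
  intro B _
  rw [sliceSum_monoSet k hkm]
  rw [Polynomial.eval_mul, Polynomial.eval_C]
  ring

lemma pairPoly_natDegree_le {j j' : ℕ} {c c' : Finset (Fin m) → ℝ}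
    (hc : Homog j c) (hc' : Homog j' c') :
    (pairPoly c c').natDegree ≤ j + j' := by
  rw [pairPoly]
  apply Polynomial.natDegree_sum_le_of_forall_le
  intro A _
  apply Polynomial.natDegree_sum_le_of_forall_le
  intro B _
  by_cases h : c A * c' B = 0
  · rw [h]
    simp
  · have hA : c A ≠ 0 := fun hh => h (by rw [hh]; ring)
    have hB : c' B ≠ 0 := fun hh => h (by rw [hh]; ring)
    refine le_trans (Polynomial.natDegree_mul_le) ?_
    have h1 := ffp_natDegree_le m ((A ∪ B).card)
    have h2 : (A ∪ B).card ≤ j + j' := by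
      refine le_trans (Finset.card_union_le A B) ?_
      rw [hc A hA, hc' B hB]
    simp only [Polynomial.natDegree_C]
    omega

lemma sliceSum_cross_zero {j j' : ℕ} {c c' : Finset (Fin m) → ℝ}
    (hc : Harm j c) (hc' : Harm j' c') (hlt : j < j') (k : ℕ) :
    sliceSum m k (fun x => mono c x * mono c' x) = 0 := by
  have hpt : ∀ x, mono c x * mono c' x
      = ∑ A, c A * (∑ B, c' B * ∏ i ∈ A ∪ B, bval (x i)) := by
    intro x
    rw [mono, mono, Finset.sum_mul_sum]
    apply Finset.sum_congr rfl
    intro A _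
    rw [Finset.mul_sum]
    apply Finset.sum_congr rfl
    intro B _
    rw [← bval_prod_mul]
    ring
  rw [sliceSum, Finset.sum_congr rfl (fun x _ => hpt x)]
  rw [Finset.sum_comm]
  apply Finset.sum_eq_zero
  intro A _
  rw [← Finset.mul_sum]
  by_cases hcA : c A = 0
  · rw [hcA, zero_mul]
  · have hAcard : A.card = j := hc.1 A hcA
    have hinner : (∑ x ∈ cubeSlice m k, ∑ B, c' B * ∏ i ∈ A ∪ B, bval (x i)) = 0 := by
      rw [Finset.sum_comm]
      have hfor : ∀ B, (∑ x ∈ cubeSlice m k, c' B * ∏ i ∈ A ∪ B, bval (x i))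
          = c' B * (((cubeSlice m k).filter (fun x => (A ∪ B) ⊆ toSet x)).card : ℝ) := by
        intro B
        rw [← Finset.mul_sum]
        congr 1
        exact sliceSum_indicator k (A ∪ B)
      rw [Finset.sum_congr rfl (fun B _ => hfor B)]
      have hcount : ∀ B : Finset (Fin m),
          (((cubeSlice m k).filter (fun x => (A ∪ B) ⊆ toSet x)).card : ℝ)
          = (fun r => if r ≤ k then (((m - r).choose (k - r) : ℕ) : ℝ) else 0) ((A ∪ B).card) := by
        intro B
        rw [slice_superset_card]
        by_cases h : (A ∪ B).card ≤ k <;> simp [h]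
      rw [Finset.sum_congr rfl (fun B _ => by rw [hcount B])]
      have hfin := harm_pair_sum_zero hc' A (show A.card < j' by omega)
        (fun r => if r ≤ k then (((m - r).choose (k - r) : ℕ) : ℝ) else 0)
      exact hfin
    rw [hinner, mul_zero]


/-! ### Chunk 6: positivity of the diagonal evaluation -/

lemma mono_eq_powerset_sum (c : Finset (Fin m) → ℝ) (x : Fin m → Bool) :
    mono c x = ∑ A ∈ (toSet x).powerset, c A := by
  rw [mono]
  have : ∀ A : Finset (Fin m), c A * ∏ i ∈ A, bval (x i) = if A ∈ (toSet x).powerset then c A else 0 := by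
    intro A
    rw [bval_prod_eq]
    by_cases h : A ⊆ toSet x
    · rw [if_pos h, if_pos (Finset.mem_powerset.mpr h), mul_one]
    · rw [if_neg h, if_neg (fun hh => h (Finset.mem_powerset.mp hh)), mul_zero]
  rw [Finset.sum_congr rfl (fun A _ => this A)]
  exact Finset.sum_ite_mem _ _ _ |>.trans (by rw [Finset.univ_inter])

lemma mono_low_zero {j : ℕ} {c : Finset (Fin m) → ℝ} (hc : Homog j c)
    {x : Fin m → Bool} (hx : wt x < j) : mono c x = 0 := by
  rw [mono]
  apply Finset.sum_eq_zero
  intro A _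
  by_cases hcA : c A = 0
  · rw [hcA, zero_mul]
  · have hA : A.card = j := hc A hcA
    rw [bval_prod_eq, if_neg, mul_zero]
    intro hsub
    have h2 := Finset.card_le_card hsub
    have h3 : (toSet x).card = wt x := rfl
    omega

lemma mono_high_zero {j : ℕ} {c : Finset (Fin m) → ℝ} (hc : Harm j c)
    {x : Fin m → Bool} (hx : m - wt x < j) (hj : 1 ≤ j) : mono c x = 0 := by
  rw [mono_eq_powerset_sum]
  exact harm_sum_subset_zero hc hj hx

lemma sliceSum_sq_nonneg (c : Finset (Fin m) → ℝ) (k : ℕ) :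
    0 ≤ sliceSum m k (fun x => mono c x * mono c x) := by
  rw [sliceSum]
  apply Finset.sum_nonneg
  intro x _
  exact mul_self_nonneg _

noncomputable def PiP (m j : ℕ) : Polynomial ℝ :=
  (∏ i ∈ Finset.range j, (Polynomial.X - Polynomial.C (i : ℝ))) *
    (∏ i ∈ Finset.range j, (Polynomial.C ((m : ℝ) - i) - Polynomial.X))

lemma prod_linear_natDegree_le (j : ℕ) (a : ℕ → ℝ) :
    (∏ i ∈ Finset.range j, (Polynomial.X - Polynomial.C (a i))).natDegree ≤ j := by
  refine le_trans (Polynomial.natDegree_prod_le _ _) ?_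
  refine le_trans (Finset.sum_le_sum (fun i _ => le_of_eq (Polynomial.natDegree_X_sub_C (a i)))) ?_
  simp

lemma prod_linear_natDegree_le' (j : ℕ) (a : ℕ → ℝ) :
    (∏ i ∈ Finset.range j, (Polynomial.C (a i) - Polynomial.X)).natDegree ≤ j := by
  refine le_trans (Polynomial.natDegree_prod_le _ _) ?_
  refine le_trans (Finset.sum_le_sum (fun i _ => ?_))
    (le_of_eq (by simp : (∑ _i ∈ Finset.range j, 1) = j))
  have hx := Polynomial.natDegree_sub_le (Polynomial.C (a i)) (Polynomial.X : Polynomial ℝ)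
  rw [Polynomial.natDegree_C, Polynomial.natDegree_X] at hx
  simpa using hx

lemma PiP_natDegree_le (j : ℕ) : (PiP m j).natDegree ≤ 2 * j := by
  rw [PiP]
  refine le_trans (Polynomial.natDegree_mul_le) ?_
  have h1 := prod_linear_natDegree_le j (fun i => (i:ℝ))
  have h2 := prod_linear_natDegree_le' j (fun i => ((m:ℝ) - i))
  omega

lemma PiP_eval_low_zero {j k : ℕ} (hk : k < j) : (PiP m j).eval (k : ℝ) = 0 := by
  rw [PiP, Polynomial.eval_mul]
  have : Polynomial.eval ((k:ℝ)) (∏ i ∈ Finset.range j, (Polynomial.X - Polynomial.C ((i:ℝ)))) = 0 := by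
    rw [Polynomial.eval_prod]
    apply Finset.prod_eq_zero (Finset.mem_range.mpr hk)
    simp
  rw [this, zero_mul]

lemma PiP_eval_high_zero {j k : ℕ} (hk1 : m - j < k) (hk2 : k ≤ m) :
    (PiP m j).eval (k : ℝ) = 0 := by
  rw [PiP, Polynomial.eval_mul]
  have hmem : m - k ∈ Finset.range j := Finset.mem_range.mpr (by omega)
  have : Polynomial.eval ((k:ℝ)) (∏ i ∈ Finset.range j, (Polynomial.C ((m:ℝ) - i) - Polynomial.X)) = 0 := by
    rw [Polynomial.eval_prod]
    apply Finset.prod_eq_zero hmem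
    simp only [Polynomial.eval_sub, Polynomial.eval_C, Polynomial.eval_X]
    have : ((m - k : ℕ) : ℝ) = (m : ℝ) - k := by
      rw [Nat.cast_sub hk2]
    rw [this]
    ring
  rw [this, mul_zero]

lemma PiP_eval_j_pos {j : ℕ} (hj : 2 * j < m) : 0 < (PiP m j).eval (j : ℝ) := by
  rw [PiP, Polynomial.eval_mul, Polynomial.eval_prod, Polynomial.eval_prod]
  apply mul_pos
  · apply Finset.prod_pos
    intro i hi
    rw [Finset.mem_range] at hi
    simp only [Polynomial.eval_sub, Polynomial.eval_C, Polynomial.eval_X]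
    have : (i : ℝ) < (j : ℝ) := by exact_mod_cast hi
    linarith
  · apply Finset.prod_pos
    intro i hi
    rw [Finset.mem_range] at hi
    simp only [Polynomial.eval_sub, Polynomial.eval_C, Polynomial.eval_X]
    have h1 : (i : ℝ) < (j : ℝ) := by exact_mod_cast hi
    have h2 : (2 * j : ℝ) < (m : ℝ) := by exact_mod_cast hj
    push_cast at h2 ⊢
    linarith

lemma PiP_eval_half_pos {j : ℕ} (hj : 2 * j < m) : 0 < (PiP m j).eval ((m : ℝ) / 2) := by
  rw [PiP, Polynomial.eval_mul, Polynomial.eval_prod, Polynomial.eval_prod]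
  have key : ∀ i ∈ Finset.range j, (0:ℝ) < (m:ℝ)/2 - i := by
    intro i hi
    rw [Finset.mem_range] at hi
    have h1 : (i : ℝ) < j := by exact_mod_cast hi
    have h2 : (2 * j : ℝ) ≤ (m : ℝ) := by exact_mod_cast le_of_lt hj
    push_cast at h2
    linarith
  apply mul_pos
  · apply Finset.prod_pos
    intro i hi
    simpa using key i hi
  · apply Finset.prod_pos
    intro i hi
    simp only [Polynomial.eval_sub, Polynomial.eval_C, Polynomial.eval_X]
    have := key i hi
    linarith

lemma pairPoly_eval_nat_eq (c c' : Finset (Fin m) → ℝ) (k : ℕ) (hkm : k ≤ m) :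
    (pairPoly c c').eval (k : ℝ)
      = sliceSum m k (fun x => mono c x * mono c' x) / (m.choose k : ℝ) := by
  have hch : ((m.choose k : ℝ)) ≠ 0 := by
    have := Nat.choose_pos hkm
    positivity
  rw [eq_div_iff hch, ← pairPoly_eval c c' k hkm]
  ring

lemma pairPoly_diag_nonneg {j : ℕ} {c : Finset (Fin m) → ℝ} (hc : Harm j c)
    (hj : 2 * j < m) : 0 ≤ (pairPoly c c).eval ((m : ℝ) / 2) := by
  set P := pairPoly c c with hP
  have hPdeg : P.natDegree ≤ 2 * j := by
    rw [hP]
    refine le_trans (pairPoly_natDegree_le hc.1 hc.1) (by omega)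
  -- values at nat points
  have hval : ∀ k : ℕ, k ≤ m →
      P.eval ((k : ℝ)) = sliceSum m k (fun x => mono c x * mono c x) / (m.choose k : ℝ) :=
    fun k hk => pairPoly_eval_nat_eq c c k hk
  have hnonneg : ∀ k : ℕ, k ≤ m → 0 ≤ P.eval ((k : ℝ)) := by
    intro k hk
    rw [hval k hk]
    apply div_nonneg (sliceSum_sq_nonneg c k)
    positivity
  have hlow : ∀ k : ℕ, k < j → P.eval ((k : ℝ)) = 0 := by
    intro k hk
    rw [hval k (by omega)]
    have : sliceSum m k (fun x => mono c x * mono c x) = 0 := by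
      rw [sliceSum]
      apply Finset.sum_eq_zero
      intro x hx
      rw [mem_cubeSlice] at hx
      rw [mono_low_zero hc.1 (by omega), zero_mul]
    rw [this, zero_div]
  have hhigh : ∀ k : ℕ, m - j < k → k ≤ m → P.eval ((k : ℝ)) = 0 := by
    intro k hk1 hk2
    have hj1 : 1 ≤ j := by omega
    rw [hval k hk2]
    have : sliceSum m k (fun x => mono c x * mono c x) = 0 := by
      rw [sliceSum]
      apply Finset.sum_eq_zero
      intro x hx
      rw [mem_cubeSlice] at hx
      rw [mono_high_zero hc (by omega) hj1, zero_mul]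
    rw [this, zero_div]
  -- the factorization identity
  set Q : Polynomial ℝ :=
    Polynomial.C (P.eval ((j : ℝ))) * PiP m j - Polynomial.C ((PiP m j).eval ((j:ℝ))) * P with hQ
  have hQzero : Q = 0 := by
    set s : Finset ℝ := (Finset.range (j+1) ∪ Finset.Ico (m - j + 1) (m + 1)).image
      (fun k : ℕ => (k : ℝ)) with hs
    apply Polynomial.eq_zero_of_natDegree_lt_card_of_eval_eq_zero' Q s
    · intro r hr
      rw [hs, Finset.mem_image] at hr
      obtain ⟨k, hk, rfl⟩ := hr
      rw [Finset.mem_union] at hk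
      rw [hQ]
      simp only [Polynomial.eval_sub, Polynomial.eval_mul, Polynomial.eval_C]
      rcases hk with hk | hk
      · rw [Finset.mem_range] at hk
        rcases Nat.lt_or_ge k j with h | h
        · rw [hlow k h, PiP_eval_low_zero h]
          ring
        · have hkj : k = j := by omega
          rw [hkj]
          ring
      · rw [Finset.mem_Ico] at hk
        rw [hhigh k (by omega) (by omega), PiP_eval_high_zero (by omega) (by omega)]
        ring
    · have hcard : s.card = 2 * j + 1 := by
        rw [hs]
        rw [Finset.card_image_of_injective _ (fun a b h => Nat.cast_injective h)]
        rw [Finset.card_union_of_disjoint]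
        · rw [Finset.card_range, Nat.card_Ico]
          omega
        · rw [Finset.disjoint_left]
          intro k hk1 hk2
          rw [Finset.mem_range] at hk1
          rw [Finset.mem_Ico] at hk2
          omega
      rw [hcard]
      have hQdeg : Q.natDegree ≤ 2 * j := by
        rw [hQ]
        refine le_trans (Polynomial.natDegree_sub_le _ _) ?_
        have d1 : (Polynomial.C (P.eval ((j : ℝ))) * PiP m j).natDegree ≤ 2 * j := by
          refine le_trans (Polynomial.natDegree_mul_le) ?_
          have := PiP_natDegree_le (m := m) j
          simp only [Polynomial.natDegree_C]
          omega
        have d2 : (Polynomial.C ((PiP m j).eval ((j:ℝ))) * P).natDegree ≤ 2 * j := by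
          refine le_trans (Polynomial.natDegree_mul_le) ?_
          simp only [Polynomial.natDegree_C]
          omega
        omega
      omega
  -- conclude
  have hkey : P.eval ((j:ℝ)) * (PiP m j).eval ((m:ℝ)/2)
      = (PiP m j).eval ((j:ℝ)) * P.eval ((m:ℝ)/2) := by
    have := congrArg (Polynomial.eval ((m:ℝ)/2)) hQzero
    rw [hQ] at this
    simp only [Polynomial.eval_sub, Polynomial.eval_mul, Polynomial.eval_C,
      Polynomial.eval_zero] at this
    linarith
  have hPj : 0 ≤ P.eval ((j:ℝ)) := hnonneg j (by omega)
  have h1 := PiP_eval_j_pos (m := m) hj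
  have h2 := PiP_eval_half_pos (m := m) hj
  nlinarith


/-! ### Chunk 7: harmonic decomposition -/

noncomputable def raiseFn (b : Finset (Fin m) → ℝ) (A : Finset (Fin m)) : ℝ :=
  ∑ i ∈ A, b (A.erase i)

noncomputable def deltaFn (c : Finset (Fin m) → ℝ) (F : Finset (Fin m)) : ℝ :=
  ∑ i ∈ Finset.univ \ F, c (insert i F)

noncomputable def raiseLM (m : ℕ) :
    EuclideanSpace ℝ (Finset (Fin m)) →ₗ[ℝ] EuclideanSpace ℝ (Finset (Fin m)) where
  toFun b := WithLp.toLp 2 (fun A => raiseFn b A)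
  map_add' b b' := by
    ext A
    show (∑ i ∈ A, (b + b') (A.erase i)) = raiseFn b A + raiseFn b' A
    have hpt : ∀ i, (b + b') (A.erase i) = b (A.erase i) + b' (A.erase i) := fun i => rfl
    rw [Finset.sum_congr rfl (fun i _ => hpt i), raiseFn, raiseFn, Finset.sum_add_distrib]
  map_smul' r b := by
    ext A
    show (∑ i ∈ A, (r • b) (A.erase i)) = r * raiseFn b A
    have hpt : ∀ i, (r • b) (A.erase i) = r * b (A.erase i) := fun i => rfl
    rw [Finset.sum_congr rfl (fun i _ => hpt i), raiseFn, Finset.mul_sum]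

lemma adj_identity (c b : Finset (Fin m) → ℝ) :
    (∑ A, raiseFn b A * c A) = ∑ F, deltaFn c F * b F := by
  have hl : (∑ A, raiseFn b A * c A)
      = ∑ A, ∑ i ∈ A, b (A.erase i) * c A := by
    apply Finset.sum_congr rfl
    intro A _
    rw [raiseFn, Finset.sum_mul]
  have hr : (∑ F, deltaFn c F * b F)
      = ∑ F, ∑ i ∈ Finset.univ \ F, c (insert i F) * b F := by
    apply Finset.sum_congr rfl
    intro F _
    rw [deltaFn, Finset.sum_mul]
  rw [hl, hr]
  rw [Finset.sum_sigma', Finset.sum_sigma']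
  apply Finset.sum_nbij' (fun p => (⟨p.1.erase p.2, p.2⟩ : Σ _F : Finset (Fin m), Fin m))
    (fun p => (⟨insert p.2 p.1, p.2⟩ : Σ _A : Finset (Fin m), Fin m))
  · intro p hp
    rw [Finset.mem_sigma] at hp ⊢
    refine ⟨Finset.mem_univ _, ?_⟩
    rw [Finset.mem_sdiff]
    exact ⟨Finset.mem_univ _, Finset.notMem_erase _ _⟩
  · intro p hp
    rw [Finset.mem_sigma] at hp ⊢
    exact ⟨Finset.mem_univ _, Finset.mem_insert_self _ _⟩
  · intro p hp
    rw [Finset.mem_sigma] at hp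
    have hi : p.2 ∈ p.1 := hp.2
    exact Sigma.ext (by simpa using Finset.insert_erase hi) (by simp)
  · intro p hp
    rw [Finset.mem_sigma] at hp
    have hi : p.2 ∉ p.1 := (Finset.mem_sdiff.mp hp.2).2
    exact Sigma.ext (by simpa using Finset.erase_insert hi) (by simp)
  · intro p hp
    rw [Finset.mem_sigma] at hp
    have hi : p.2 ∈ p.1 := hp.2
    rw [Finset.insert_erase hi]
    ring

lemma exists_harm_decomp {d : ℕ} (hd : 1 ≤ d) (c : Finset (Fin m) → ℝ) (hc : Homog d c) :
    ∃ h b : Finset (Fin m) → ℝ, Harm d h ∧ Homog (d-1) b ∧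
      ∀ A, c A = h A + raiseFn b A := by
  classical
  set K := LinearMap.range (raiseLM m) with hK
  set ce : EuclideanSpace ℝ (Finset (Fin m)) := WithLp.toLp 2 c with hce
  set w : EuclideanSpace ℝ (Finset (Fin m)) := ce - (K.orthogonalProjectionOnto ce : _) with hwdef
  have hworth : w ∈ Kᗮ := Submodule.sub_starProjection_mem_orthogonal (K := K) ce
  obtain ⟨b0, hb0⟩ := LinearMap.mem_range.mp (K.orthogonalProjectionOnto ce).2
  -- all lowered coordinates of w vanish
  have hdelta : ∀ F, deltaFn w F = 0 := by
    have hall : ∀ b : EuclideanSpace ℝ (Finset (Fin m)),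
        (∑ F, deltaFn w F * b F) = 0 := by
      intro b
      have hKb : (raiseLM m) b ∈ K := LinearMap.mem_range.mpr ⟨b, rfl⟩
      have h0 : (inner ℝ ((raiseLM m) b) w : ℝ) = 0 :=
        (Submodule.mem_orthogonal K w).mp hworth _ hKb
      have hinner : (inner ℝ ((raiseLM m) b) w : ℝ) = ∑ A, raiseFn b A * w A := by
        rw [PiLp.inner_apply]
        apply Finset.sum_congr rfl
        intro A _
        rw [RCLike.inner_apply']
        simp only [starRingEnd_apply, star_trivial]
        rfl
      rw [hinner] at h0
      rw [← adj_identity w b]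
      exact h0
    have hsq := hall (WithLp.toLp 2 (fun F => deltaFn w F))
    have : ∀ F ∈ Finset.univ, deltaFn w F * deltaFn w F = 0 := by
      intro F _
      have hnn : ∀ F ∈ (Finset.univ : Finset (Finset (Fin m))),
          0 ≤ deltaFn w F * deltaFn w F := fun F _ => mul_self_nonneg _
      exact (Finset.sum_eq_zero_iff_of_nonneg hnn).mp hsq F (Finset.mem_univ F)
    intro F
    have := this F (Finset.mem_univ F)
    nlinarith [this]
  -- define h and b
  set h : Finset (Fin m) → ℝ := fun A => if A.card = d then w A else 0 with hh
  set b : Finset (Fin m) → ℝ := fun B => if B.card = d - 1 then b0 B else 0 with hb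
  refine ⟨h, b, ⟨?_, ?_⟩, ?_, ?_⟩
  · -- Homog d h
    intro A hA
    rw [hh] at hA
    by_contra hcard
    simp only [if_neg hcard] at hA
    exact hA rfl
  · -- harmonicity condition
    intro F hF
    have hsplit : (∑ i, h (insert i F))
        = (∑ i ∈ Finset.univ \ F, h (insert i F)) + ∑ i ∈ F, h (insert i F) := by
      rw [Finset.sum_sdiff (Finset.subset_univ F)]
    have hinF : (∑ i ∈ F, h (insert i F)) = 0 := by
      apply Finset.sum_eq_zero
      intro i hi
      rw [Finset.insert_eq_self.mpr hi, hh]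
      simp only
      rw [if_neg (by omega)]
    have houtF : (∑ i ∈ Finset.univ \ F, h (insert i F))
        = deltaFn w F := by
      rw [deltaFn]
      apply Finset.sum_congr rfl
      intro i hi
      rw [Finset.mem_sdiff] at hi
      rw [hh]
      simp only
      rw [if_pos (by rw [Finset.card_insert_of_notMem hi.2]; omega)]
    rw [hsplit, hinF, houtF, hdelta, add_zero]
  · -- Homog (d-1) b
    intro B hB
    rw [hb] at hB
    by_contra hcard
    simp only [if_neg hcard] at hB
    exact hB rfl
  · -- the decomposition identity
    intro A
    by_cases hcard : A.card = d
    · have h1 : h A = w A := by rw [hh]; simp only; rw [if_pos hcard]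
      have h2 : raiseFn b A = raiseFn b0 A := by
        rw [raiseFn, raiseFn]
        apply Finset.sum_congr rfl
        intro i hi
        rw [hb]
        simp only
        rw [if_pos (by rw [Finset.card_erase_of_mem hi]; omega)]
      have h3 : raiseFn b0 A = (K.orthogonalProjectionOnto ce : EuclideanSpace ℝ (Finset (Fin m))) A := by
        have := congrFun (congrArg (fun (v : EuclideanSpace ℝ (Finset (Fin m))) => (v : Finset (Fin m) → ℝ)) hb0) A
        exact this
      have h4 : w A = ce A - (K.orthogonalProjectionOnto ce : EuclideanSpace ℝ (Finset (Fin m))) A := rfl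
      rw [h1, h2, h3, h4]
      have : ce A = c A := rfl
      rw [this]
      ring
    · have h1 : h A = 0 := by rw [hh]; simp only; rw [if_neg hcard]
      have h2 : raiseFn b A = 0 := by
        rw [raiseFn]
        apply Finset.sum_eq_zero
        intro i hi
        have hA1 : 1 ≤ A.card := Finset.card_pos.mpr ⟨i, hi⟩
        rw [hb]
        simp only
        rw [if_neg (by rw [Finset.card_erase_of_mem hi]; omega)]
      have hcA : c A = 0 := by
        by_contra hne
        exact hcard (hc A hne)
      rw [h1, h2]
      show c A = 0 + 0
      rw [hcA]
      ring


/-! ### Chunk 8: representations as sums of q(S) * harmonic -/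

def IsRep (t : ℕ) (g : (Fin m → Bool) → ℝ) : Prop :=
  ∃ (N : ℕ) (jj : Fin N → ℕ) (H : Fin N → Finset (Fin m) → ℝ) (q : Fin N → Polynomial ℝ),
    (∀ i, Harm (jj i) (H i)) ∧ (∀ i, (q i).natDegree + jj i ≤ t) ∧
    ∀ x, g x = ∑ i, (q i).eval ((wt x : ℕ) : ℝ) * mono (H i) x

lemma IsRep_congr {t : ℕ} {g g' : (Fin m → Bool) → ℝ} (h : ∀ x, g x = g' x)
    (hg : IsRep t g) : IsRep t g' := by
  obtain ⟨N, jj, H, q, h1, h2, h3⟩ := hg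
  exact ⟨N, jj, H, q, h1, h2, fun x => (h x) ▸ h3 x⟩

lemma IsRep_zero (t : ℕ) : IsRep t (fun _ : Fin m → Bool => (0:ℝ)) :=
  ⟨0, Fin.elim0, Fin.elim0, Fin.elim0, fun i => i.elim0, fun i => i.elim0, fun x => by simp⟩

lemma IsRep_monotone {t t' : ℕ} (htt : t ≤ t') {g : (Fin m → Bool) → ℝ}
    (hg : IsRep t g) : IsRep t' g := by
  obtain ⟨N, jj, H, q, h1, h2, h3⟩ := hg
  exact ⟨N, jj, H, q, h1, fun i => le_trans (h2 i) htt, h3⟩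

lemma IsRep_harm {j t : ℕ} {h : Finset (Fin m) → ℝ} (hh : Harm j h) (hjt : j ≤ t) :
    IsRep t (mono h) := by
  refine ⟨1, fun _ => j, fun _ => h, fun _ => 1, fun _ => hh, fun _ => by simp [hjt], fun x => ?_⟩
  simp

lemma IsRep_add {t : ℕ} {g g' : (Fin m → Bool) → ℝ} (hg : IsRep t g) (hg' : IsRep t g') :
    IsRep t (fun x => g x + g' x) := by
  obtain ⟨N, jj, H, q, h1, h2, h3⟩ := hg
  obtain ⟨N', jj', H', q', h1', h2', h3'⟩ := hg'
  refine ⟨N + N', Fin.append jj jj', Fin.append H H', Fin.append q q', ?_, ?_, ?_⟩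
  · intro i
    refine Fin.addCases (fun i => ?_) (fun i => ?_) i
    · rw [Fin.append_left, Fin.append_left]; exact h1 i
    · rw [Fin.append_right, Fin.append_right]; exact h1' i
  · intro i
    refine Fin.addCases (fun i => ?_) (fun i => ?_) i
    · rw [Fin.append_left, Fin.append_left]; exact h2 i
    · rw [Fin.append_right, Fin.append_right]; exact h2' i
  · intro x
    show g x + g' x = _
    rw [Fin.sum_univ_add]
    rw [h3 x, h3' x]
    congr 1
    · apply Finset.sum_congr rfl
      intro i _
      rw [Fin.append_left, Fin.append_left]
    · apply Finset.sum_congr rfl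
      intro i _
      rw [Fin.append_right, Fin.append_right]

lemma IsRep_mul_linear {t : ℕ} {g : (Fin m → Bool) → ℝ} (e : ℝ) (hg : IsRep t g) :
    IsRep (t + 1) (fun x => (((wt x : ℕ) : ℝ) - e) * g x) := by
  obtain ⟨N, jj, H, q, h1, h2, h3⟩ := hg
  refine ⟨N, jj, H, fun i => (Polynomial.X - Polynomial.C e) * q i, h1, ?_, ?_⟩
  · intro i
    have h2i := h2 i
    refine le_trans (Nat.add_le_add_right Polynomial.natDegree_mul_le _) ?_
    rw [Polynomial.natDegree_X_sub_C]
    omega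
  · intro x
    show (((wt x : ℕ) : ℝ) - e) * g x = _
    rw [h3 x, Finset.mul_sum]
    apply Finset.sum_congr rfl
    intro i _
    rw [Polynomial.eval_mul]
    simp only [Polynomial.eval_sub, Polynomial.eval_X, Polynomial.eval_C]
    ring

lemma prod_bval_mul_sum (x : Fin m → Bool) (B : Finset (Fin m)) :
    (∏ i ∈ B, bval (x i)) * (∑ i ∈ B, bval (x i))
      = (∏ i ∈ B, bval (x i)) * (B.card : ℝ) := by
  by_cases hall : B ⊆ toSet x
  · congr 1
    have : ∀ i ∈ B, bval (x i) = 1 := by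
      intro i hi
      have : x i = true := mem_toSet.mp (hall hi)
      simp [bval, this]
    rw [Finset.sum_congr rfl this, Finset.sum_const, nsmul_eq_mul, mul_one]
  · rw [bval_prod_eq, if_neg hall, zero_mul, zero_mul]

lemma mono_raise {e : ℕ} {b : Finset (Fin m) → ℝ} (hb : Homog e b) (x : Fin m → Bool) :
    mono (raiseFn b) x = (((wt x : ℕ) : ℝ) - (e : ℝ)) * mono b x := by
  have hl : mono (raiseFn b) x = ∑ A, ∑ i ∈ A, b (A.erase i) * ∏ i' ∈ A, bval (x i') := by
    rw [mono]
    apply Finset.sum_congr rfl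
    intro A _
    rw [raiseFn, Finset.sum_mul]
  rw [hl, Finset.sum_sigma']
  have hswap : (∑ p ∈ (Finset.univ : Finset (Finset (Fin m))).sigma (fun A => A),
        b (p.1.erase p.2) * ∏ i' ∈ p.1, bval (x i'))
      = ∑ p ∈ (Finset.univ : Finset (Finset (Fin m))).sigma (fun F => Finset.univ \ F),
        b p.1 * ∏ i' ∈ insert p.2 p.1, bval (x i') := by
    apply Finset.sum_nbij' (fun p => (⟨p.1.erase p.2, p.2⟩ : Σ _F : Finset (Fin m), Fin m))
      (fun p => (⟨insert p.2 p.1, p.2⟩ : Σ _A : Finset (Fin m), Fin m))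
    · intro p hp
      rw [Finset.mem_sigma] at hp ⊢
      refine ⟨Finset.mem_univ _, ?_⟩
      rw [Finset.mem_sdiff]
      exact ⟨Finset.mem_univ _, Finset.notMem_erase _ _⟩
    · intro p hp
      rw [Finset.mem_sigma] at hp ⊢
      exact ⟨Finset.mem_univ _, Finset.mem_insert_self _ _⟩
    · intro p hp
      rw [Finset.mem_sigma] at hp
      have hi : p.2 ∈ p.1 := hp.2
      exact Sigma.ext (by simpa using Finset.insert_erase hi) (by simp)
    · intro p hp
      rw [Finset.mem_sigma] at hp
      have hi : p.2 ∉ p.1 := (Finset.mem_sdiff.mp hp.2).2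
      exact Sigma.ext (by simpa using Finset.erase_insert hi) (by simp)
    · intro p hp
      rw [Finset.mem_sigma] at hp
      have hi : p.2 ∈ p.1 := hp.2
      rw [Finset.insert_erase hi]
  rw [hswap, Finset.sum_sigma]
  have hinner : ∀ B : Finset (Fin m),
      (∑ i ∈ Finset.univ \ B, b B * ∏ i' ∈ insert i B, bval (x i'))
      = b B * ((∏ i' ∈ B, bval (x i')) * ((((wt x : ℕ) : ℝ)) - ∑ i ∈ B, bval (x i))) := by
    intro B
    have hins : ∀ i ∈ Finset.univ \ B, b B * ∏ i' ∈ insert i B, bval (x i')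
        = b B * (bval (x i) * ∏ i' ∈ B, bval (x i')) := by
      intro i hi
      rw [Finset.mem_sdiff] at hi
      rw [Finset.prod_insert hi.2]
    rw [Finset.sum_congr rfl hins]
    have : (∑ i ∈ Finset.univ \ B, b B * (bval (x i) * ∏ i' ∈ B, bval (x i')))
        = b B * ((∏ i' ∈ B, bval (x i')) * (∑ i ∈ Finset.univ \ B, bval (x i))) := by
      rw [Finset.mul_sum, Finset.mul_sum]
      apply Finset.sum_congr rfl
      intro i _
      ring
    rw [this]
    congr 1
    congr 1
    have hsd : (∑ i ∈ Finset.univ \ B, bval (x i))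
        = (∑ i, bval (x i)) - ∑ i ∈ B, bval (x i) := by
      rw [eq_sub_iff_add_eq]
      exact Finset.sum_sdiff (Finset.subset_univ B)
    rw [hsd, sum_bval]
  have hfinal : ∀ B : Finset (Fin m),
      b B * ((∏ i' ∈ B, bval (x i')) * ((((wt x : ℕ) : ℝ)) - ∑ i ∈ B, bval (x i)))
      = (((wt x : ℕ) : ℝ) - (e : ℝ)) * (b B * ∏ i' ∈ B, bval (x i')) := by
    intro B
    by_cases hbB : b B = 0
    · rw [hbB]; ring
    · have hcard : B.card = e := hb B hbB
      have hps := prod_bval_mul_sum x B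
      rw [hcard] at hps
      have hexp : (∏ i' ∈ B, bval (x i')) * ((((wt x : ℕ) : ℝ)) - ∑ i ∈ B, bval (x i))
          = (∏ i' ∈ B, bval (x i')) * (((wt x : ℕ) : ℝ))
            - (∏ i ∈ B, bval (x i)) * ∑ i ∈ B, bval (x i) := by ring
      rw [hexp, hps]
      ring
  rw [Finset.sum_congr rfl (fun B _ => hinner B)]
  rw [Finset.sum_congr rfl (fun B _ => hfinal B)]
  rw [← Finset.mul_sum, mono]

lemma mono_add_coeff (u v : Finset (Fin m) → ℝ) (x : Fin m → Bool) :
    mono (fun A => u A + v A) x = mono u x + mono v x := by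
  rw [mono, mono, mono, ← Finset.sum_add_distrib]
  apply Finset.sum_congr rfl
  intro A _
  ring

lemma homog_rep : ∀ d : ℕ, ∀ c : Finset (Fin m) → ℝ, Homog d c → IsRep d (mono c) := by
  intro d
  induction d with
  | zero =>
    intro c hc
    exact IsRep_harm ⟨hc, fun F hF => by omega⟩ (le_refl 0)
  | succ d ih =>
    intro c hc
    obtain ⟨h, b, hh, hb, hdec⟩ := exists_harm_decomp (by omega : 1 ≤ d + 1) c hc
    have hd1 : d + 1 - 1 = d := by omega
    rw [hd1] at hb
    have hsplit : ∀ x, mono c x = mono h x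
        + ((((wt x : ℕ) : ℝ)) - (d : ℝ)) * mono b x := by
      intro x
      have h1 : mono c x = mono h x + mono (raiseFn b) x := by
        have : mono c x = mono (fun A => h A + raiseFn b A) x := by
          rw [mono, mono]
          apply Finset.sum_congr rfl
          intro A _
          rw [hdec A]
        rw [this, mono_add_coeff]
      rw [h1, mono_raise hb]
    apply IsRep_congr (fun x => (hsplit x).symm)
    apply IsRep_add
    · exact IsRep_harm hh (le_refl _)
    · exact IsRep_mul_linear (d : ℝ) (ih b hb)

def trunc (d : ℕ) (c : Finset (Fin m) → ℝ) : Finset (Fin m) → ℝ :=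
  fun A => if A.card = d then c A else 0

lemma trunc_homog (d : ℕ) (c : Finset (Fin m) → ℝ) : Homog d (trunc d c) := by
  intro A hA
  rw [trunc] at hA
  by_contra h
  rw [if_neg h] at hA
  exact hA rfl

lemma mono_trunc_sum (t : ℕ) (c : Finset (Fin m) → ℝ) (hc : ∀ A, t < A.card → c A = 0)
    (x : Fin m → Bool) :
    mono c x = ∑ d ∈ Finset.range (t+1), mono (trunc d c) x := by
  have : ∀ d, mono (trunc d c) x = ∑ A, (if A.card = d then c A else 0) * ∏ i ∈ A, bval (x i) := by
    intro d
    rw [mono]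
    apply Finset.sum_congr rfl
    intro A _
    rw [trunc]
  rw [Finset.sum_congr rfl (fun d _ => this d), Finset.sum_comm, mono]
  apply Finset.sum_congr rfl
  intro A _
  rw [← Finset.sum_mul]
  congr 1
  rw [Finset.sum_ite_eq (Finset.range (t+1)) (A.card) (fun _ => c A)]
  by_cases h : A.card ≤ t
  · rw [if_pos (Finset.mem_range.mpr (by omega))]
  · rw [if_neg (by rw [Finset.mem_range]; omega), hc A (by omega)]

lemma degLE_rep (t : ℕ) (c : Finset (Fin m) → ℝ) (hc : ∀ A, t < A.card → c A = 0) :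
    IsRep t (mono c) := by
  have hstep : ∀ n, n ≤ t + 1 → IsRep t (fun x => ∑ d ∈ Finset.range n, mono (trunc d c) x) := by
    intro n
    induction n with
    | zero =>
      intro _
      apply IsRep_congr (g := fun _ => (0:ℝ)) (fun x => by simp)
      exact IsRep_zero t
    | succ n ih =>
      intro hn
      have hrep := IsRep_monotone (by omega : n ≤ t) (homog_rep n (trunc n c) (trunc_homog n c))
      have := IsRep_add (ih (by omega)) hrep
      apply IsRep_congr (fun x => ?_) this
      rw [Finset.sum_range_succ]
    
  apply IsRep_congr (fun x => (mono_trunc_sum t c hc x).symm)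
  exact hstep (t+1) (le_refl _)


/-! ### Chunk 9a: pair expectations -/

lemma cubeAvg_sum {ι : Type*} (s : Finset ι) (F : ι → (Fin m → Bool) → ℝ) :
    cubeAvg m (fun x => ∑ i ∈ s, F i x) = ∑ i ∈ s, cubeAvg m (F i) := by
  rw [cubeAvg]
  rw [Finset.sum_comm]
  rw [Finset.sum_div]
  rfl

lemma cubeAvg_pair {j j' : ℕ} {c c' : Finset (Fin m) → ℝ}
    (hc : Homog j c) (hc' : Homog j' c') (q q' : Polynomial ℝ)
    (hdeg : q.natDegree + j + (q'.natDegree + j') ≤ m) :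
    cubeAvg m (fun x => Dfun m x *
        ((q.eval ((wt x : ℕ) : ℝ) * mono c x) * (q'.eval ((wt x : ℕ) : ℝ) * mono c' x)))
      = (q.eval ((m:ℝ)/2) * q'.eval ((m:ℝ)/2)) * (pairPoly c c').eval ((m:ℝ)/2) := by
  set W : Polynomial ℝ := q * q' * pairPoly c c' with hW
  have hWdeg : W.natDegree ≤ m := by
    rw [hW]
    refine le_trans (Polynomial.natDegree_mul_le) ?_
    have h1 : (q * q').natDegree ≤ q.natDegree + q'.natDegree := Polynomial.natDegree_mul_le
    have h2 := pairPoly_natDegree_le hc hc'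
    omega
  have hu : ∀ k, k ≤ m → sliceSum m k (fun x =>
      (q.eval ((wt x : ℕ) : ℝ) * mono c x) * (q'.eval ((wt x : ℕ) : ℝ) * mono c' x))
      = (m.choose k : ℝ) * W.eval (k : ℝ) := by
    intro k hk
    have hpt : ∀ x ∈ cubeSlice m k,
        (q.eval ((wt x : ℕ) : ℝ) * mono c x) * (q'.eval ((wt x : ℕ) : ℝ) * mono c' x)
        = (q.eval ((k : ℕ) : ℝ) * q'.eval ((k : ℕ) : ℝ)) * (mono c x * mono c' x) := by
      intro x hx
      rw [mem_cubeSlice] at hx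
      rw [hx]
      ring
    rw [sliceSum, Finset.sum_congr rfl hpt, ← Finset.mul_sum]
    have hss : (∑ x ∈ cubeSlice m k, mono c x * mono c' x)
        = (m.choose k : ℝ) * (pairPoly c c').eval (k : ℝ) := by
      rw [← sliceSum]
      exact (pairPoly_eval c c' k hk).symm
    rw [hss, hW]
    simp only [Polynomial.eval_mul]
    ring
  have := cubeAvg_Dfun_eval W hWdeg _ hu
  rw [this, hW]
  simp only [Polynomial.eval_mul]

lemma pairPoly_comm_sliceSum (c c' : Finset (Fin m) → ℝ) (k : ℕ) :
    sliceSum m k (fun x => mono c x * mono c' x)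
      = sliceSum m k (fun x => mono c' x * mono c x) := by
  rw [sliceSum, sliceSum]
  exact Finset.sum_congr rfl (fun x _ => mul_comm _ _)

lemma pairPoly_cross_zero {j j' : ℕ} {c c' : Finset (Fin m) → ℝ}
    (hc : Harm j c) (hc' : Harm j' c') (hne : j ≠ j') (hsum : j + j' < m + 1) :
    pairPoly c c' = 0 := by
  have hssz : ∀ k : ℕ, k ≤ m → sliceSum m k (fun x => mono c x * mono c' x) = 0 := by
    intro k _
    rcases Nat.lt_or_ge j j' with h | h
    · exact sliceSum_cross_zero hc hc' h k
    · rw [pairPoly_comm_sliceSum]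
      exact sliceSum_cross_zero hc' hc (by omega) k
  set s : Finset ℝ := (Finset.range (m+1)).image (fun k : ℕ => (k : ℝ)) with hs
  apply Polynomial.eq_zero_of_natDegree_lt_card_of_eval_eq_zero' _ s
  · intro r hr
    rw [hs, Finset.mem_image] at hr
    obtain ⟨k, hk, rfl⟩ := hr
    rw [Finset.mem_range] at hk
    rw [pairPoly_eval_nat_eq c c' k (by omega), hssz k (by omega), zero_div]
  · have hcard : s.card = m + 1 := by
      rw [hs, Finset.card_image_of_injective _ (fun a b h => Nat.cast_injective h),
        Finset.card_range]
    rw [hcard]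
    have := pairPoly_natDegree_le hc.1 hc'.1
    omega

lemma harm_lincomb {ι : Type*} (s : Finset ι) (a : ι → ℝ) (h : ι → Finset (Fin m) → ℝ)
    (j : ℕ) (hh : ∀ i ∈ s, Harm j (h i)) :
    Harm j (fun A => ∑ i ∈ s, a i * h i A) := by
  constructor
  · intro A hA
    by_contra hcard
    apply hA
    apply Finset.sum_eq_zero
    intro i hi
    by_cases hz : h i A = 0
    · rw [hz, mul_zero]
    · exact absurd ((hh i hi).1 A hz) hcard
  · intro F hF
    rw [Finset.sum_comm]
    apply Finset.sum_eq_zero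
    intro i hi
    rw [← Finset.mul_sum, (hh i hi).2 F hF, mul_zero]

lemma sum_swap4 {γ : Type*} (s : Finset γ)
    (f : Finset (Fin m) → Finset (Fin m) → γ → γ → ℝ) :
    (∑ A : Finset (Fin m), ∑ B : Finset (Fin m), ∑ i ∈ s, ∑ i' ∈ s, f A B i i')
      = ∑ i ∈ s, ∑ i' ∈ s, ∑ A : Finset (Fin m), ∑ B : Finset (Fin m), f A B i i' := by
  have step1 : (∑ A : Finset (Fin m), ∑ B : Finset (Fin m), ∑ i ∈ s, ∑ i' ∈ s, f A B i i')
      = ∑ A : Finset (Fin m), ∑ i ∈ s, ∑ B : Finset (Fin m), ∑ i' ∈ s, f A B i i' :=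
    Finset.sum_congr rfl (fun A _ => Finset.sum_comm)
  have step2 : (∑ A : Finset (Fin m), ∑ i ∈ s, ∑ B : Finset (Fin m), ∑ i' ∈ s, f A B i i')
      = ∑ i ∈ s, ∑ A : Finset (Fin m), ∑ B : Finset (Fin m), ∑ i' ∈ s, f A B i i' :=
    Finset.sum_comm
  have step3 : (∑ i ∈ s, ∑ A : Finset (Fin m), ∑ B : Finset (Fin m), ∑ i' ∈ s, f A B i i')
      = ∑ i ∈ s, ∑ A : Finset (Fin m), ∑ i' ∈ s, ∑ B : Finset (Fin m), f A B i i' :=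
    Finset.sum_congr rfl (fun i _ => Finset.sum_congr rfl (fun A _ => Finset.sum_comm))
  have step4 : (∑ i ∈ s, ∑ A : Finset (Fin m), ∑ i' ∈ s, ∑ B : Finset (Fin m), f A B i i')
      = ∑ i ∈ s, ∑ i' ∈ s, ∑ A : Finset (Fin m), ∑ B : Finset (Fin m), f A B i i' :=
    Finset.sum_congr rfl (fun i _ => Finset.sum_comm)
  rw [step1, step2, step3, step4]

lemma pairEval_expand (ν : ℝ) (c c' : Finset (Fin m) → ℝ) :
    (pairPoly c c').eval ν
      = ∑ A, ∑ B, (c A * c' B) * (ffp m ((A ∪ B).card)).eval ν := by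
  rw [pairPoly, Polynomial.eval_finset_sum]
  apply Finset.sum_congr rfl
  intro A _
  rw [Polynomial.eval_finset_sum]
  apply Finset.sum_congr rfl
  intro B _
  rw [Polynomial.eval_mul, Polynomial.eval_C]

lemma pairEval_bilin {ι : Type*} (ν : ℝ) (s : Finset ι) (a : ι → ℝ)
    (h : ι → Finset (Fin m) → ℝ) :
    (pairPoly (fun A => ∑ i ∈ s, a i * h i A) (fun B => ∑ i' ∈ s, a i' * h i' B)).eval ν
      = ∑ i ∈ s, ∑ i' ∈ s, (a i * a i') * (pairPoly (h i) (h i')).eval ν := by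
  rw [pairEval_expand]
  have hterm : ∀ A B : Finset (Fin m),
      ((∑ i ∈ s, a i * h i A) * (∑ i' ∈ s, a i' * h i' B)) * (ffp m ((A ∪ B).card)).eval ν
      = ∑ i ∈ s, ∑ i' ∈ s, (a i * a i') * ((h i A * h i' B) * (ffp m ((A ∪ B).card)).eval ν) := by
    intro A B
    rw [Finset.sum_mul_sum]
    rw [Finset.sum_mul]
    apply Finset.sum_congr rfl
    intro i _
    rw [Finset.sum_mul]
    apply Finset.sum_congr rfl
    intro i' _
    ring
  rw [Finset.sum_congr rfl (fun A _ => Finset.sum_congr rfl (fun B _ => hterm A B))]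
  rw [sum_swap4 s (fun A B i i' => (a i * a i') * ((h i A * h i' B) * (ffp m ((A ∪ B).card)).eval ν))]
  apply Finset.sum_congr rfl
  intro i _
  apply Finset.sum_congr rfl
  intro i' _
  rw [pairEval_expand]
  rw [Finset.mul_sum]
  apply Finset.sum_congr rfl
  intro A _
  rw [Finset.mul_sum]


/-! ### Chunk 10: the PSD property and the main theorem -/

lemma psd_main (hm : Odd m) (g : (Fin m → Bool) → ℝ) (hg : HasDegLE m (m / 2) g) :
    0 ≤ cubeAvg m (fun x => Dfun m x * g x ^ 2) := by
  classical
  set t := m / 2 with ht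
  have h2t : 2 * t + 1 = m := by
    obtain ⟨l, hl⟩ := hm
    omega
  obtain ⟨c, hcdeg, hgc⟩ := hg
  have hgm : ∀ x, g x = mono c x := fun x => hgc x
  obtain ⟨N, jj, H, q, hH, hqd, hrep⟩ := degLE_rep t c (fun A hA => hcdeg A hA)
  set ν : ℝ := (m : ℝ) / 2 with hν
  set qv : Fin N → ℝ := fun i => (q i).eval ν with hqv
  set X : Fin N → Fin N → ℝ :=
    fun i i' => (qv i * qv i') * (pairPoly (H i) (H i')).eval ν with hX
  -- expectation expands into the double sum of X
  have hexp : cubeAvg m (fun x => Dfun m x * g x ^ 2)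
      = ∑ i : Fin N, ∑ i' : Fin N, X i i' := by
    have hpt : ∀ x, Dfun m x * g x ^ 2
        = ∑ i : Fin N, ∑ i' : Fin N, Dfun m x *
            (((q i).eval ((wt x : ℕ) : ℝ) * mono (H i) x) *
             ((q i').eval ((wt x : ℕ) : ℝ) * mono (H i') x)) := by
      intro x
      rw [hgm x, hrep x, sq, Finset.sum_mul_sum]
      rw [Finset.mul_sum]
      apply Finset.sum_congr rfl
      intro i _
      rw [Finset.mul_sum]
    have h1 : cubeAvg m (fun x => Dfun m x * g x ^ 2)
        = cubeAvg m (fun x => ∑ i : Fin N, ∑ i' : Fin N, Dfun m x *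
            (((q i).eval ((wt x : ℕ) : ℝ) * mono (H i) x) *
             ((q i').eval ((wt x : ℕ) : ℝ) * mono (H i') x))) := by
      congr 1
      funext x
      exact hpt x
    rw [h1, cubeAvg_sum]
    apply Finset.sum_congr rfl
    intro i _
    rw [cubeAvg_sum]
    apply Finset.sum_congr rfl
    intro i' _
    have hdeg : (q i).natDegree + jj i + ((q i').natDegree + jj i') ≤ m := by
      have := hqd i
      have := hqd i'
      omega
    rw [cubeAvg_pair (hH i).1 (hH i').1 (q i) (q i') hdeg]
  rw [hexp]
  -- group by degree
  set u : ℕ → Finset (Fin m) → ℝ :=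
    fun j A => ∑ i ∈ Finset.univ.filter (fun i => jj i = j), qv i * H i A with hu
  have hgroup : (∑ i : Fin N, ∑ i' : Fin N, X i i')
      = ∑ j ∈ Finset.range (t+1), (pairPoly (u j) (u j)).eval ν := by
    have hbil : ∀ j, (pairPoly (u j) (u j)).eval ν
        = ∑ i ∈ Finset.univ.filter (fun i => jj i = j),
            ∑ i' ∈ Finset.univ.filter (fun i => jj i = j),
              (qv i * qv i') * (pairPoly (H i) (H i')).eval ν := by
      intro j
      exact pairEval_bilin ν (Finset.univ.filter (fun i => jj i = j)) qv H
    rw [Finset.sum_congr rfl (fun j _ => hbil j)]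
    -- now reduce to fiberwise sum
    have hfib := Finset.sum_fiberwise_of_maps_to
      (fun (i : Fin N) (_ : i ∈ Finset.univ) =>
        Finset.mem_range.mpr (by have := hqd i; omega : jj i < t + 1))
      (fun i => ∑ i' : Fin N, X i i')
    rw [← hfib]
    apply Finset.sum_congr rfl
    intro j _
    apply Finset.sum_congr rfl
    intro i hi
    rw [Finset.mem_filter] at hi
    -- it remains: ∑_{i' ∈ filter (jj = j)} X i i' = ∑ i' X i i'
    have hzero : ∀ i' : Fin N, jj i' ≠ j → X i i' = 0 := by
      intro i' hne
      simp only [hX]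
      have hppz : pairPoly (H i) (H i') = 0 := by
        apply pairPoly_cross_zero (hH i) (hH i')
        · rw [hi.2]
          exact fun hh => hne hh.symm
        · have := hqd i
          have := hqd i'
          omega
      rw [hppz]
      simp
    rw [Finset.sum_filter]
    apply Finset.sum_congr rfl
    intro i' _
    by_cases h : jj i' = j
    · rw [if_pos h]
    · rw [if_neg h, hzero i' h]
  rw [hgroup]
  apply Finset.sum_nonneg
  intro j hj
  rw [Finset.mem_range] at hj
  have hharm : Harm j (u j) := by
    rw [hu]
    apply harm_lincomb
    intro i hi
    rw [Finset.mem_filter] at hi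
    rw [← hi.2]
    exact hH i
  have := pairPoly_diag_nonneg hharm (by omega : 2 * j < m)
  rw [hν]
  exact this

end SG

/-- For odd `m ≥ 3`, the function `f(x) = (m/2 − ∑_i x_i)² − 1/4` is
nonnegative on `{0,1}^m`, and there is a degree-`m` pseudo-density `D` with
`E_x D(x)·f(x) = −1/4`. -/
theorem stmt4 (m : ℕ) (hm : Odd m) (hm3 : 3 ≤ m)
    (f : (Fin m → Bool) → ℝ)
    (hf : ∀ x, f x = ((m : ℝ) / 2 - ∑ i : Fin m, bval (x i)) ^ 2 - 1 / 4) :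
    (∀ x, 0 ≤ f x) ∧
      ∃ D : (Fin m → Bool) → ℝ,
        IsPseudoDensity m m D ∧ cubeAvg m (fun x => D x * f x) = -(1 / 4) := by
  constructor
  · intro x
    rw [hf x]
    exact SG.f_nonneg hm x
  · refine ⟨SG.Dfun m, ⟨SG.Dfun_avg_one, ?_⟩, SG.Dfun_avg_f hm3 f hf⟩
    intro g hg
    exact SG.psd_main hm g hg
end

section
/- For every nonnegative matrix M ∈ ℝ^{p×q} and every η ∈ (0,1], if M admits a psd factorization M_{ij} = Tr(A_i B_j) with A_i, B_j ∈ S_+^r, ‖A_i‖ ≤ γ, ‖B_j‖_* ≤ 1, then there exist psd matrices P_i, Q_j with: M_{ij} ≤ Tr(P_i Q_j) ≤ M_{ij} + η‖M‖_∞·Tr(B_j); (1/p)∑_i P_i = Id; ‖P_i‖ ≤ 1 + γ/(η‖M‖_∞); and ‖Q_j‖_* ≤ γ + η‖M‖_∞. -/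
/-- The (ℓ² → ℓ²) operator norm of a real square matrix. -/
noncomputable def opNorm {r : ℕ} (A : Matrix (Fin r) (Fin r) ℝ) : ℝ :=
  ‖Matrix.toEuclideanCLM (𝕜 := ℝ) A‖

/-- The trace (nuclear) norm of a real square matrix: `Tr √(Aᵀ A)`. -/
noncomputable def traceNorm {r : ℕ} (A : Matrix (Fin r) (Fin r) ℝ) : ℝ :=
  ((Matrix.posSemidef_conjTranspose_mul_self A).1.eigenvectorUnitary.1 *
    Matrix.diagonal (Real.sqrt ∘ (Matrix.posSemidef_conjTranspose_mul_self A).1.eigenvalues) *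
    (star (Matrix.posSemidef_conjTranspose_mul_self A).1.eigenvectorUnitary :
      Matrix (Fin r) (Fin r) ℝ)).trace


section Stmt5Helpers
open Matrix
variable {r : ℕ}

open scoped MatrixOrder in
noncomputable def Matrix.PosSemidef.sqrt {X : Matrix (Fin r) (Fin r) ℝ} (_hX : X.PosSemidef) :
    Matrix (Fin r) (Fin r) ℝ := CFC.sqrt X

open scoped MatrixOrder in
lemma Matrix.PosSemidef.sqrt_mul_self {X : Matrix (Fin r) (Fin r) ℝ} (hX : X.PosSemidef) :
    hX.sqrt * hX.sqrt = X := CFC.sqrt_mul_sqrt_self X hX.nonneg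

open scoped MatrixOrder in
lemma Matrix.PosSemidef.posSemidef_sqrt {X : Matrix (Fin r) (Fin r) ℝ} (hX : X.PosSemidef) :
    hX.sqrt.PosSemidef := Matrix.nonneg_iff_posSemidef.mp (CFC.sqrt_nonneg X)

lemma psd_diag_nonneg {X : Matrix (Fin r) (Fin r) ℝ} (hX : X.PosSemidef) (i : Fin r) :
    0 ≤ X i i := by simpa using hX.dotProduct_mulVec_nonneg (Pi.single i 1)

lemma psd_trace_nonneg {X : Matrix (Fin r) (Fin r) ℝ} (hX : X.PosSemidef) :
    0 ≤ X.trace := Finset.sum_nonneg fun i _ => psd_diag_nonneg hX i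

lemma psd_smul {X : Matrix (Fin r) (Fin r) ℝ} (hX : X.PosSemidef) {a : ℝ} (ha : 0 ≤ a) :
    (a • X).PosSemidef := by
  refine PosSemidef.of_dotProduct_mulVec_nonneg ?_ fun x => ?_
  · rw [Matrix.IsHermitian, conjTranspose_smul, hX.1]; simp
  · rw [smul_mulVec, dotProduct_smul, smul_eq_mul]
    exact mul_nonneg ha (hX.dotProduct_mulVec_nonneg x)

lemma psd_trace_mul_nonneg {X Y : Matrix (Fin r) (Fin r) ℝ} (hX : X.PosSemidef)
    (hY : Y.PosSemidef) : 0 ≤ (X * Y).trace := by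
  have hpsd : (hX.sqrt * Y * hX.sqrt).PosSemidef := by
    have := hY.mul_mul_conjTranspose_same hX.sqrt
    rwa [hX.posSemidef_sqrt.1] at this
  have heq : (X * Y).trace = (hX.sqrt * Y * hX.sqrt).trace := by
    calc (X * Y).trace = (hX.sqrt * (hX.sqrt * Y)).trace := by
          rw [← mul_assoc, hX.sqrt_mul_self]
    _ = ((hX.sqrt * Y) * hX.sqrt).trace := trace_mul_comm _ _
    _ = (hX.sqrt * Y * hX.sqrt).trace := rfl
  rw [heq]; exact psd_trace_nonneg hpsd

open scoped MatrixOrder in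
lemma traceNorm_psd {X : Matrix (Fin r) (Fin r) ℝ} (hX : X.PosSemidef) :
    traceNorm X = X.trace := by
  have hH := (Matrix.posSemidef_conjTranspose_mul_self X).1
  have h1 : traceNorm X = (cfc Real.sqrt (Xᴴ * X)).trace := by
    rw [hH.cfc_eq]; unfold traceNorm IsHermitian.cfc; simp [Unitary.conjStarAlgAut_apply]
  rw [h1, ← cfcₙ_eq_cfc, ← CFC.sqrt_eq_real_sqrt _ (Matrix.posSemidef_conjTranspose_mul_self X).nonneg,
    hX.1, CFC.sqrt_mul_self X hX.nonneg]
lemma norm_sq_eq_dot (y : EuclideanSpace ℝ (Fin r)) :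
    ‖y‖ ^ 2 = (WithLp.equiv 2 _ y) ⬝ᵥ (WithLp.equiv 2 _ y) := by
  rw [← real_inner_self_eq_norm_sq, EuclideanSpace.inner_eq_star_dotProduct]
  simp

lemma clm_apply_eq (X : Matrix (Fin r) (Fin r) ℝ) (x : EuclideanSpace ℝ (Fin r)) :
    WithLp.equiv 2 _ ((Matrix.toEuclideanCLM (𝕜 := ℝ) X) x) = X *ᵥ (WithLp.equiv 2 _ x) := by
  simp [Matrix.toLin'_apply]

lemma loewner_of_opnorm {X : Matrix (Fin r) (Fin r) ℝ} (hX : X.IsHermitian) {t : ℝ}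
    (h : opNorm X ≤ t) : (t • (1 : Matrix (Fin r) (Fin r) ℝ) - X).PosSemidef := by
  refine PosSemidef.of_dotProduct_mulVec_nonneg ?_ fun v => ?_
  · rw [Matrix.IsHermitian, Matrix.conjTranspose_sub, Matrix.conjTranspose_smul, hX,
      Matrix.conjTranspose_one]
    simp
  · have key : v ⬝ᵥ X *ᵥ v ≤ t * (v ⬝ᵥ v) := by
      set T := Matrix.toEuclideanCLM (𝕜 := ℝ) X
      set x : EuclideanSpace ℝ (Fin r) := (WithLp.equiv 2 _).symm v
      have hxv : WithLp.equiv 2 _ x = v := rfl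
      have h1 : v ⬝ᵥ X *ᵥ v = inner ℝ x (T x) := by
        rw [EuclideanSpace.inner_eq_star_dotProduct,
          show (T x).ofLp = X *ᵥ v from clm_apply_eq X x]
        rw [star_trivial, dotProduct_comm]; rfl
      have h2 : v ⬝ᵥ v = ‖x‖ ^ 2 := (norm_sq_eq_dot x).symm
      have h3 : inner ℝ x (T x) ≤ ‖x‖ * ‖T x‖ := real_inner_le_norm x (T x)
      have h4 : ‖T x‖ ≤ ‖T‖ * ‖x‖ := T.le_opNorm x
      have h5 : ‖T‖ ≤ t := h
      have h6 : (0:ℝ) ≤ ‖x‖ := norm_nonneg x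
      rw [h1, h2]
      nlinarith [norm_nonneg (T x)]
    have expand : star v ⬝ᵥ (t • (1 : Matrix (Fin r) (Fin r) ℝ) - X) *ᵥ v
        = t * (v ⬝ᵥ v) - v ⬝ᵥ X *ᵥ v := by
      rw [Matrix.sub_mulVec, Matrix.smul_mulVec, Matrix.one_mulVec, dotProduct_sub,
        dotProduct_smul, smul_eq_mul]
      simp
    rw [expand]
    linarith

set_option maxHeartbeats 2000000 in
lemma opnorm_le_of_loewner {X : Matrix (Fin r) (Fin r) ℝ} (hX : X.PosSemidef) {t : ℝ}
    (ht : 0 ≤ t) (h : (t • (1 : Matrix (Fin r) (Fin r) ℝ) - X).PosSemidef) :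
    opNorm X ≤ t := by
  have hq1 : ∀ v : Fin r → ℝ, v ⬝ᵥ X *ᵥ v ≤ t * (v ⬝ᵥ v) := by
    intro v
    have := h.dotProduct_mulVec_nonneg v
    rw [Matrix.sub_mulVec, Matrix.smul_mulVec, Matrix.one_mulVec, dotProduct_sub,
      dotProduct_smul, smul_eq_mul] at this
    simp only [star_trivial] at this
    linarith
  have hD : (t • X - X * X).PosSemidef := by
    set s := hX.sqrt with hs
    have hss : s * s = X := hX.sqrt_mul_self
    have hpsd : (s * (t • (1 : Matrix (Fin r) (Fin r) ℝ) - X) * s).PosSemidef := by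
      have := h.conjTranspose_mul_mul_same s
      rwa [hX.posSemidef_sqrt.1] at this
    have key : s * (t • (1 : Matrix (Fin r) (Fin r) ℝ) - X) * s = t • X - X * X := by
      rw [Matrix.mul_sub, Matrix.sub_mul, Matrix.mul_smul, Matrix.mul_one, Matrix.smul_mul, hss]
      congr 1
      calc s * X * s = s * (s * s) * s := by rw [hss]
        _ = s * s * (s * s) := by rw [← mul_assoc, mul_assoc]
        _ = X * X := by rw [hss]
    rwa [key] at hpsd
  have hq2 : ∀ v : Fin r → ℝ, v ⬝ᵥ (X * X) *ᵥ v ≤ t * (v ⬝ᵥ X *ᵥ v) := by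
    intro v
    have := hD.dotProduct_mulVec_nonneg v
    rw [Matrix.sub_mulVec, Matrix.smul_mulVec, dotProduct_sub, dotProduct_smul,
      smul_eq_mul] at this
    simp only [star_trivial] at this
    linarith
  rw [opNorm]
  refine ContinuousLinearMap.opNorm_le_bound _ ht fun x => ?_
  set v := WithLp.equiv 2 _ x with hv
  have hxsq : ‖x‖ ^ 2 = v ⬝ᵥ v := norm_sq_eq_dot x
  have hTx : ‖(Matrix.toEuclideanCLM (𝕜 := ℝ) X) x‖ ^ 2 = v ⬝ᵥ (X * X) *ᵥ v := by
    rw [norm_sq_eq_dot, clm_apply_eq]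
    have hsym : (X *ᵥ v) ⬝ᵥ (X *ᵥ v) = v ⬝ᵥ (X * X) *ᵥ v := by
      rw [dotProduct_mulVec (X *ᵥ v) X v]
      have : (X *ᵥ v) ᵥ* X = (X * X) *ᵥ v := by
        rw [← Matrix.mulVec_transpose]
        have hXt : Xᵀ = X := by
          rw [← Matrix.conjTranspose_eq_transpose_of_trivial]; exact hX.1
        rw [hXt, Matrix.mulVec_mulVec]
      rw [this, dotProduct_comm]
    rw [← hv, hsym]
  have hvv : (0:ℝ) ≤ v ⬝ᵥ v := by rw [← hxsq]; positivity
  have hXv : (0:ℝ) ≤ v ⬝ᵥ X *ᵥ v := by simpa using hX.dotProduct_mulVec_nonneg v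
  have chain : ‖(Matrix.toEuclideanCLM (𝕜 := ℝ) X) x‖ ^ 2 ≤ (t * ‖x‖) ^ 2 := by
    rw [hTx]
    calc v ⬝ᵥ (X * X) *ᵥ v ≤ t * (v ⬝ᵥ X *ᵥ v) := hq2 v
      _ ≤ t * (t * (v ⬝ᵥ v)) := by
          exact mul_le_mul_of_nonneg_left (hq1 v) ht
      _ = (t * ‖x‖) ^ 2 := by rw [← hxsq]; ring
  nlinarith [norm_nonneg ((Matrix.toEuclideanCLM (𝕜 := ℝ) X) x), norm_nonneg x,
    mul_nonneg ht (norm_nonneg x)]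
lemma psd_sum {ι : Type*} (s : Finset ι) (f : ι → Matrix (Fin r) (Fin r) ℝ)
    (h : ∀ i ∈ s, (f i).PosSemidef) : (∑ i ∈ s, f i).PosSemidef := by
  induction s using Finset.cons_induction with
  | empty => simpa using Matrix.PosSemidef.zero
  | cons a s ha ih =>
      rw [Finset.sum_cons]
      exact (h a (Finset.mem_cons_self a s)).add
        (ih fun i hi => h i (Finset.mem_cons_of_mem hi))


end Stmt5Helpers

open Matrix

set_option maxHeartbeats 2000000 in
/-- psd factorization rescaling: Let `M ∈ ℝ^{p×q}` be a nonnegative matrix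
with maximum entry `Minf > 0`, let `η ∈ (0,1]`, and suppose `M_{ij} = Tr(A_i B_j)` with
`A_i, B_j ∈ S_+^r`, `‖A_i‖ ≤ γ`, `‖B_j‖_* ≤ 1`.  Then there exist psd matrices `P_i, Q_j`
such that `M_{ij} ≤ Tr(P_i Q_j) ≤ M_{ij} + η‖M‖_∞·Tr(B_j)`, `(1/p)∑_i P_i = Id`,
`‖P_i‖ ≤ 1 + γ/(η‖M‖_∞)`, and `‖Q_j‖_* ≤ γ + η‖M‖_∞`. -/
theorem stmt5 (p q r : ℕ) (hp : 0 < p) (hq : 0 < q)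
    (M : Matrix (Fin p) (Fin q) ℝ) (hM : ∀ i j, 0 ≤ M i j)
    (η : ℝ) (hη0 : 0 < η) (hη1 : η ≤ 1)
    (Minf : ℝ) (hMub : ∀ i j, M i j ≤ Minf) (hMmem : ∃ i j, M i j = Minf)
    (hMpos : 0 < Minf)
    (γ : ℝ)
    (A : Fin p → Matrix (Fin r) (Fin r) ℝ) (B : Fin q → Matrix (Fin r) (Fin r) ℝ)
    (hA : ∀ i, (A i).PosSemidef) (hB : ∀ j, (B j).PosSemidef)
    (hfac : ∀ i j, M i j = (A i * B j).trace)
    (hAn : ∀ i, opNorm (A i) ≤ γ) (hBn : ∀ j, traceNorm (B j) ≤ 1) :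
    ∃ P : Fin p → Matrix (Fin r) (Fin r) ℝ, ∃ Q : Fin q → Matrix (Fin r) (Fin r) ℝ,
      (∀ i, (P i).PosSemidef) ∧ (∀ j, (Q j).PosSemidef) ∧
      (∀ i j, M i j ≤ (P i * Q j).trace ∧
        (P i * Q j).trace ≤ M i j + η * Minf * (B j).trace) ∧
      ((p : ℝ)⁻¹ • ∑ i, P i = (1 : Matrix (Fin r) (Fin r) ℝ)) ∧
      (∀ i, opNorm (P i) ≤ 1 + γ / (η * Minf)) ∧
      (∀ j, traceNorm (Q j) ≤ γ + η * Minf) := by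
  classical
  set c := η * Minf with hcdef
  have hc : 0 < c := mul_pos hη0 hMpos
  have hγ0 : 0 ≤ γ := by
    refine le_trans ?_ (hAn ⟨0, hp⟩)
    unfold opNorm
    exact norm_nonneg _
  have hp0 : (p : ℝ) ≠ 0 := Nat.cast_ne_zero.mpr hp.ne'
  have hApsd_sum : (∑ k, A k).PosSemidef := psd_sum _ _ fun i _ => hA i
  set A' : Matrix (Fin r) (Fin r) ℝ := c • 1 + (p : ℝ)⁻¹ • ∑ k, A k with hA'def
  have hA'posdef : A'.PosDef := by
    apply Matrix.PosDef.add_posSemidef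
    · rw [Matrix.smul_one_eq_diagonal]
      exact Matrix.posDef_diagonal_iff.mpr fun _ => hc
    · exact psd_smul hApsd_sum (by positivity)
  have hA'psd : A'.PosSemidef := hA'posdef.posSemidef
  set S := hA'psd.sqrt with hSdef
  have hSS : S * S = A' := hA'psd.sqrt_mul_self
  have hSpsd : S.PosSemidef := hA'psd.posSemidef_sqrt
  have hSherm : Sᴴ = S := hSpsd.1
  have hdet : IsUnit S.det := by
    have h1 : 0 < A'.det := hA'posdef.det_pos
    rw [← hSS, Matrix.det_mul] at h1
    refine isUnit_iff_ne_zero.mpr fun h => ?_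
    rw [h] at h1; simp at h1
  have hinv1 : S⁻¹ * S = 1 := Matrix.nonsing_inv_mul S hdet
  have hinv2 : S * S⁻¹ = 1 := Matrix.mul_nonsing_inv S hdet
  have hSinvherm : (S⁻¹)ᴴ = S⁻¹ := by rw [Matrix.conjTranspose_nonsing_inv, hSherm]
  have hId : S⁻¹ * A' * S⁻¹ = 1 := by
    rw [← hSS, ← mul_assoc, hinv1, one_mul, hinv2]
  set X : Fin p → Matrix (Fin r) (Fin r) ℝ := fun i => c • 1 + A i with hXdef
  have hXpsd : ∀ i, (X i).PosSemidef :=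
    fun i => (psd_smul Matrix.PosSemidef.one hc.le).add (hA i)
  refine ⟨fun i => S⁻¹ * X i * S⁻¹, fun j => S * B j * S, fun i => ?_, fun j => ?_, ?_, ?_, ?_, ?_⟩
  · have := (hXpsd i).mul_mul_conjTranspose_same S⁻¹
    rwa [hSinvherm] at this
  · have := (hB j).mul_mul_conjTranspose_same S
    rwa [hSherm] at this
  · intro i j
    have e1 : S⁻¹ * (S * (B j * S)) = B j * S := by rw [← mul_assoc, hinv1, one_mul]
    have e2 : (S⁻¹ * X i * S⁻¹) * (S * B j * S) = S⁻¹ * (X i * (B j * S)) := by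
      calc (S⁻¹ * X i * S⁻¹) * (S * B j * S)
          = S⁻¹ * (X i * (S⁻¹ * (S * (B j * S)))) := by simp only [mul_assoc]
        _ = S⁻¹ * (X i * (B j * S)) := by rw [e1]
    have e3 : (X i * (B j * S)) * S⁻¹ = X i * B j := by
      calc (X i * (B j * S)) * S⁻¹ = X i * (B j * (S * S⁻¹)) := by simp only [mul_assoc]
        _ = X i * B j := by rw [hinv2, mul_one]
    have htr : ((S⁻¹ * X i * S⁻¹) * (S * B j * S)).trace = M i j + c * (B j).trace := by
      rw [e2, Matrix.trace_mul_comm, e3, hXdef]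
      rw [Matrix.add_mul, Matrix.smul_mul, one_mul, Matrix.trace_add, Matrix.trace_smul,
        smul_eq_mul, ← hfac]
      ring
    constructor
    · rw [htr]
      have : 0 ≤ c * (B j).trace := mul_nonneg hc.le (psd_trace_nonneg (hB j))
      linarith
    · rw [htr]
  · have hsum2 : ∑ i : Fin p, X i = (p : ℝ) • (c • (1 : Matrix (Fin r) (Fin r) ℝ)) + ∑ i, A i := by
      rw [hXdef, Finset.sum_add_distrib, Finset.sum_const, Finset.card_univ, Fintype.card_fin,
        Nat.cast_smul_eq_nsmul]
    have hZ : (p : ℝ)⁻¹ • (∑ i : Fin p, X i) = A' := by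
      rw [hsum2, smul_add, smul_smul, inv_mul_cancel₀ hp0, one_smul, hA'def]
    calc (p : ℝ)⁻¹ • ∑ i, (S⁻¹ * X i * S⁻¹)
        = (p : ℝ)⁻¹ • ((S⁻¹ * ∑ i, X i) * S⁻¹) := by rw [← Finset.sum_mul, ← Finset.mul_sum]
      _ = (S⁻¹ * ((p : ℝ)⁻¹ • ∑ i, X i)) * S⁻¹ := by
          rw [← Matrix.smul_mul, ← Matrix.mul_smul]
      _ = 1 := by rw [hZ, hId]
  · intro i
    set t : ℝ := 1 + γ / (η * Minf) with htdef
    have ht0 : 0 ≤ t := by rw [htdef]; positivity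
    have htc : t * c = c + γ := by
      rw [htdef, hcdef]
      field_simp
    have hγL : (γ • (1 : Matrix (Fin r) (Fin r) ℝ) - A i).PosSemidef :=
      loewner_of_opnorm (hA i).1 (hAn i)
    have hM1 : t • A' - X i
        = (γ • (1 : Matrix (Fin r) (Fin r) ℝ) - A i) + (t * (p : ℝ)⁻¹) • ∑ k, A k := by
      rw [hA'def, hXdef, smul_add, smul_smul, smul_smul, htc, add_smul]
      module
    have hpsd1 : (t • A' - X i).PosSemidef := by
      rw [hM1]
      exact hγL.add (psd_smul hApsd_sum (by positivity))
    have hconj : (S⁻¹ * (t • A' - X i) * S⁻¹).PosSemidef := by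
      have := hpsd1.mul_mul_conjTranspose_same S⁻¹
      rwa [hSinvherm] at this
    have heq : S⁻¹ * (t • A' - X i) * S⁻¹
        = t • (1 : Matrix (Fin r) (Fin r) ℝ) - S⁻¹ * X i * S⁻¹ := by
      rw [Matrix.mul_sub, Matrix.sub_mul, Matrix.mul_smul, Matrix.smul_mul, hId]
    rw [heq] at hconj
    have hpsdP : (S⁻¹ * X i * S⁻¹).PosSemidef := by
      have := (hXpsd i).mul_mul_conjTranspose_same S⁻¹
      rwa [hSinvherm] at this
    exact opnorm_le_of_loewner hpsdP ht0 hconj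
  · intro j
    have hQpsd : (S * B j * S).PosSemidef := by
      have := (hB j).mul_mul_conjTranspose_same S
      rwa [hSherm] at this
    rw [traceNorm_psd hQpsd]
    have htrQ : (S * B j * S).trace = (A' * B j).trace := by
      rw [Matrix.trace_mul_cycle, hSS]
    have hexp : (A' * B j).trace
        = c * (B j).trace + (p : ℝ)⁻¹ * ∑ k, (A k * B j).trace := by
      rw [hA'def, Matrix.add_mul, Matrix.smul_mul, one_mul, Matrix.trace_add, Matrix.trace_smul,
        smul_eq_mul, Matrix.smul_mul, Matrix.trace_smul, smul_eq_mul, Finset.sum_mul,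
        Matrix.trace_sum]
    have hγL : ∀ k, (γ • (1 : Matrix (Fin r) (Fin r) ℝ) - A k).PosSemidef :=
      fun k => loewner_of_opnorm (hA k).1 (hAn k)
    have htrB0 : 0 ≤ (B j).trace := psd_trace_nonneg (hB j)
    have htrB1 : (B j).trace ≤ 1 := by
      rw [← traceNorm_psd (hB j)]; exact hBn j
    have htrAB : ∀ k, (A k * B j).trace ≤ γ * (B j).trace := by
      intro k
      have h0 : 0 ≤ ((γ • (1 : Matrix (Fin r) (Fin r) ℝ) - A k) * B j).trace :=
        psd_trace_mul_nonneg (hγL k) (hB j)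
      rw [Matrix.sub_mul, Matrix.smul_mul, one_mul, Matrix.trace_sub, Matrix.trace_smul,
        smul_eq_mul] at h0
      linarith
    have hsumb : ∑ k, (A k * B j).trace ≤ (p : ℝ) * (γ * (B j).trace) := by
      calc ∑ k, (A k * B j).trace ≤ ∑ _k : Fin p, γ * (B j).trace :=
            Finset.sum_le_sum fun k _ => htrAB k
        _ = (p : ℝ) * (γ * (B j).trace) := by
            rw [Finset.sum_const, Finset.card_univ, Fintype.card_fin, nsmul_eq_mul]
    have hfin : (p : ℝ)⁻¹ * ∑ k, (A k * B j).trace ≤ γ := by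
      have h1 : (p : ℝ)⁻¹ * ∑ k, (A k * B j).trace
          ≤ (p : ℝ)⁻¹ * ((p : ℝ) * (γ * (B j).trace)) := by
        apply mul_le_mul_of_nonneg_left hsumb (by positivity)
      rw [← mul_assoc, inv_mul_cancel₀ hp0, one_mul] at h1
      have h2 : γ * (B j).trace ≤ γ := by nlinarith
      linarith
    have hcb : c * (B j).trace ≤ c := by nlinarith
    rw [htrQ, hexp]
    linarith
end

section
/- Let F be a real symmetric matrix and Q a density matrix (psd with trace 1). Then for every λ ≥ (1/ε)·D(Q‖U), the Gibbs state X* = e^{−λF}/Tr(e^{−λF}) satisfies Tr(F X*) ≤ Tr(F Q) + ε, where U = Id/Tr(Id) is the maximally mixed state and D(X‖Y) = Tr(X(log X − log Y)) is the quantum relative entropy. -/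
private lemma klein_pt {x y : ℝ} (hx : 0 ≤ x) (hy : 0 < y) :
    x - y ≤ x * Real.log x - x * Real.log y := by
  rcases eq_or_lt_of_le hx with h | h
  · simp [← h]; linarith
  · have h1 : Real.log (y / x) ≤ y / x - 1 := Real.log_le_sub_one_of_pos (by positivity)
    rw [Real.log_div hy.ne' h.ne'] at h1
    have h2 : x * (y / x) = y := by field_simp
    nlinarith [mul_le_mul_of_nonneg_left h1 h.le]

private lemma klein_pt_strict {x y : ℝ} (hx : 0 ≤ x) (hy : 0 < y) (hxy : x ≠ y) :
    x - y < x * Real.log x - x * Real.log y := by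
  rcases eq_or_lt_of_le hx with h | h
  · simp [← h]; linarith
  · have hne : y / x ≠ 1 := by
      intro hc; apply hxy; field_simp at hc; linarith
    have h1 : Real.log (y / x) < y / x - 1 := Real.log_lt_sub_one_of_pos (by positivity) hne
    rw [Real.log_div hy.ne' h.ne'] at h1
    have h2 : x * (y / x) = y := by field_simp
    nlinarith [mul_lt_mul_of_pos_left h1 h]

private lemma entropy_ge {n : ℕ} (hn : 0 < n) (p : Fin n → ℝ) (hp : ∀ i, 0 ≤ p i)
    (hsum : ∑ i, p i = 1) : 0 ≤ (∑ i, p i * Real.log (p i)) + Real.log n := by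
  have hnR : (0:ℝ) < n := by exact_mod_cast hn
  have key : ∀ i ∈ Finset.univ, p i - (n:ℝ)⁻¹ ≤
      p i * Real.log (p i) - p i * Real.log ((n:ℝ)⁻¹) :=
    fun i _ => klein_pt (hp i) (by positivity)
  have h := Finset.sum_le_sum key
  rw [Finset.sum_sub_distrib, Finset.sum_sub_distrib, hsum] at h
  simp only [Real.log_inv, mul_neg, Finset.sum_neg_distrib, sub_neg_eq_add,
    Finset.sum_const, Finset.card_univ, Fintype.card_fin, nsmul_eq_mul] at h
  rw [← Finset.sum_mul, hsum, one_mul] at h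
  have : (n:ℝ) * (n:ℝ)⁻¹ = 1 := mul_inv_cancel₀ hnR.ne'
  linarith

private lemma entropy_eq_uniform {n : ℕ} (hn : 0 < n) (p : Fin n → ℝ) (hp : ∀ i, 0 ≤ p i)
    (hsum : ∑ i, p i = 1) (hzero : (∑ i, p i * Real.log (p i)) + Real.log n = 0) :
    ∀ i, p i = (n:ℝ)⁻¹ := by
  have hnR : (0:ℝ) < n := by exact_mod_cast hn
  intro i₀
  by_contra hne
  have key : ∀ i ∈ Finset.univ, p i - (n:ℝ)⁻¹ ≤
      p i * Real.log (p i) - p i * Real.log ((n:ℝ)⁻¹) :=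
    fun i _ => klein_pt (hp i) (by positivity)
  have h := Finset.sum_lt_sum key ⟨i₀, Finset.mem_univ i₀,
    klein_pt_strict (hp i₀) (by positivity) hne⟩
  rw [Finset.sum_sub_distrib, Finset.sum_sub_distrib, hsum] at h
  simp only [Real.log_inv, mul_neg, Finset.sum_neg_distrib, sub_neg_eq_add,
    Finset.sum_const, Finset.card_univ, Fintype.card_fin, nsmul_eq_mul] at h
  rw [← Finset.sum_mul, hsum, one_mul] at h
  have : (n:ℝ) * (n:ℝ)⁻¹ = 1 := mul_inv_cancel₀ hnR.ne'
  linarith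

private lemma klein_sum {n : ℕ} (hn : 0 < n) (c : Fin n → Fin n → ℝ) (p m : Fin n → ℝ)
    (hc : ∀ j i, 0 ≤ c j i) (hrow : ∀ j, ∑ i, c j i = 1) (hcol : ∀ i, ∑ j, c j i = 1)
    (hp : ∀ i, 0 ≤ p i) (hpsum : ∑ i, p i = 1) :
    ∑ j, ∑ i, c j i * (p i * m j) ≤
      (∑ i, p i * Real.log (p i)) + Real.log (∑ j, Real.exp (m j)) := by
  set Z : ℝ := ∑ j, Real.exp (m j) with hZdef
  have hZ : 0 < Z := Finset.sum_pos (fun j _ => Real.exp_pos _)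
    (Finset.univ_nonempty_iff.mpr ⟨⟨0, hn⟩⟩)
  set q : Fin n → ℝ := fun j => Real.exp (m j) / Z with hqdef
  have hq : ∀ j, 0 < q j := fun j => div_pos (Real.exp_pos _) hZ
  have hqsum : ∑ j, q j = 1 := by
    rw [hqdef, ← Finset.sum_div, ← hZdef, div_self hZ.ne']
  have hlogq : ∀ j, Real.log (q j) = m j - Real.log Z := by
    intro j
    rw [hqdef, Real.log_div (Real.exp_ne_zero _) hZ.ne', Real.log_exp]
  have key : ∀ j ∈ Finset.univ, ∑ i, c j i * (p i - q j) ≤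
      ∑ i, c j i * (p i * Real.log (p i) - p i * Real.log (q j)) := by
    intro j _
    exact Finset.sum_le_sum fun i _ =>
      mul_le_mul_of_nonneg_left (klein_pt (hp i) (hq j)) (hc j i)
  have h := Finset.sum_le_sum key
  have hL : ∑ j, ∑ i, c j i * (p i - q j) = 0 := by
    have e1 : ∀ j, ∑ i, c j i * (p i - q j) = (∑ i, c j i * p i) - q j := by
      intro j
      simp only [mul_sub]
      rw [Finset.sum_sub_distrib, ← Finset.sum_mul, hrow, one_mul]
    simp only [e1]
    rw [Finset.sum_sub_distrib, hqsum, Finset.sum_comm]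
    have : ∀ i, ∑ j, c j i * p i = p i := by
      intro i; rw [← Finset.sum_mul, hcol, one_mul]
    simp only [this, hpsum, sub_self]
  have hR : ∑ j, ∑ i, c j i * (p i * Real.log (p i) - p i * Real.log (q j)) =
      (∑ i, p i * Real.log (p i)) - (∑ j, ∑ i, c j i * (p i * m j)) + Real.log Z := by
    have e1 : ∀ j i, c j i * (p i * Real.log (p i) - p i * Real.log (q j)) =
        c j i * (p i * Real.log (p i)) - c j i * (p i * m j) + c j i * (p i * Real.log Z) := by
      intro j i; rw [hlogq j]; ring
    simp only [e1]
    rw [Finset.sum_comm]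
    simp only [Finset.sum_add_distrib, Finset.sum_sub_distrib]
    have e2 : ∀ i, ∑ j, c j i * (p i * Real.log (p i)) = p i * Real.log (p i) := by
      intro i; rw [← Finset.sum_mul, hcol, one_mul]
    have e3 : ∀ i, ∑ j, c j i * (p i * Real.log Z) = p i * Real.log Z := by
      intro i; rw [← Finset.sum_mul, hcol, one_mul]
    simp only [e2, e3]
    rw [← Finset.sum_mul, hpsum, one_mul, Finset.sum_comm]
  rw [hL, hR] at h
  linarith

private lemma conj_mul' {n : ℕ} {V : Matrix (Fin n) (Fin n) ℝ} (h : star V * V = 1)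
    (A B : Matrix (Fin n) (Fin n) ℝ) :
    (V * A * star V) * (V * B * star V) = V * (A * B) * star V := by
  simp only [Matrix.mul_assoc]
  rw [← Matrix.mul_assoc (star V) V, h, Matrix.one_mul]

private lemma trace_conj' {n : ℕ} {V : Matrix (Fin n) (Fin n) ℝ} (h : star V * V = 1)
    (A : Matrix (Fin n) (Fin n) ℝ) :
    (V * A * star V).trace = A.trace := by
  rw [Matrix.trace_mul_cycle, h, Matrix.one_mul]

/-- The quantum relative entropy `D(Q ‖ U) = Tr(Q (log Q − log U))` of a symmetric psd
matrix `Q` with respect to the maximally mixed state `U = Id/n`, computed spectrally: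
`∑_i λ_i log λ_i + log n`, where `λ_i` are the eigenvalues of `Q` (with `0 log 0 = 0`). -/
noncomputable def relEntUniform {n : ℕ} (Q : Matrix (Fin n) (Fin n) ℝ)
    (hQ : Q.IsHermitian) : ℝ :=
  (∑ i, hQ.eigenvalues i * Real.log (hQ.eigenvalues i)) + Real.log n

/-- Let `F` be a real symmetric matrix and `Q` a density matrix (psd, trace 1).
For every `λ ≥ (1/ε)·D(Q‖U)`, the Gibbs state `X* = e^{−λF}/Tr(e^{−λF})` satisfies
`Tr(F X*) ≤ Tr(F Q) + ε`. -/
theorem stmt6 (n : ℕ) (hn : 0 < n)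
    (F Q : Matrix (Fin n) (Fin n) ℝ)
    (hF : F.IsHermitian) (hQ : Q.PosSemidef) (hQtr : Q.trace = 1)
    (ε lam : ℝ) (hε : 0 < ε)
    (hlam : (1 / ε) * relEntUniform Q hQ.1 ≤ lam) :
    (F * ((NormedSpace.exp (-(lam • F))).trace⁻¹ •
        NormedSpace.exp (-(lam • F)))).trace ≤ (F * Q).trace + ε := by
  classical
  set f := hF.eigenvalues with hf
  set p := hQ.1.eigenvalues with hpdef
  set V : Matrix (Fin n) (Fin n) ℝ := (hF.eigenvectorUnitary : Matrix (Fin n) (Fin n) ℝ) with hVdef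
  set W : Matrix (Fin n) (Fin n) ℝ := (hQ.1.eigenvectorUnitary : Matrix (Fin n) (Fin n) ℝ) with hWdef
  have hVsV : star V * V = 1 := hF.eigenvectorUnitary.2.1
  have hVVs : V * star V = 1 := hF.eigenvectorUnitary.2.2
  have hWsW : star W * W = 1 := hQ.1.eigenvectorUnitary.2.1
  have hWWs : W * star W = 1 := hQ.1.eigenvectorUnitary.2.2
  have hFdec : F = V * Matrix.diagonal f * star V := by
    have := hF.spectral_theorem
    simpa [RCLike.ofReal_real_eq_id] using this
  have hQdec : Q = W * Matrix.diagonal p * star W := by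
    have := hQ.1.spectral_theorem
    simpa [RCLike.ofReal_real_eq_id] using this
  have hVunit : IsUnit V := ⟨⟨V, star V, hVVs, hVsV⟩, rfl⟩
  have hVinv : V⁻¹ = star V := Matrix.inv_eq_left_inv hVsV
  have hMdec : -(lam • F) = V * Matrix.diagonal (fun j => -(lam * f j)) * star V := by
    rw [hFdec]
    have h0 : (fun j => -(lam * f j)) = (-lam) • f := by funext j; simp
    have h1 : Matrix.diagonal (fun j => -(lam * f j)) = (-lam) • Matrix.diagonal f := by
      rw [h0, Matrix.diagonal_smul]
    rw [h1]
    simp [Matrix.mul_smul, Matrix.smul_mul]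
  have hEdec : NormedSpace.exp (-(lam • F)) =
      V * Matrix.diagonal (fun j => Real.exp (-(lam * f j))) * star V := by
    rw [hMdec, ← hVinv, Matrix.exp_conj _ _ hVunit, Matrix.exp_diagonal, Pi.exp_def]
    simp [← Real.exp_eq_exp_ℝ, hVinv]
  set A : Matrix (Fin n) (Fin n) ℝ := star V * W with hAdef
  have hsA : star A = star W * V := by
    rw [hAdef, star_mul, star_star]
  have hsAA : star A * A = 1 := by
    rw [hsA, hAdef, Matrix.mul_assoc, ← Matrix.mul_assoc V (star V) W, hVVs,
      Matrix.one_mul, hWsW]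
  have hAsA : A * star A = 1 := by
    rw [hsA, hAdef, Matrix.mul_assoc, ← Matrix.mul_assoc W (star W) V, hWWs,
      Matrix.one_mul, hVsV]
  have hcol : ∀ i, ∑ j, A j i * A j i = 1 := by
    intro i
    have h := congrFun (congrFun hsAA i) i
    simpa [Matrix.mul_apply, Matrix.star_apply, Matrix.one_apply_eq] using h
  have hrow : ∀ j, ∑ i, A j i * A j i = 1 := by
    intro j
    have h := congrFun (congrFun hAsA j) j
    simpa [Matrix.mul_apply, Matrix.star_apply, Matrix.one_apply_eq] using h
  have hZeq : (NormedSpace.exp (-(lam • F))).trace = ∑ j, Real.exp (-(lam * f j)) := by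
    rw [hEdec, trace_conj' hVsV, Matrix.trace_diagonal]
  have hFE : (F * NormedSpace.exp (-(lam • F))).trace
      = ∑ j, f j * Real.exp (-(lam * f j)) := by
    rw [hEdec, hFdec, conj_mul' hVsV, trace_conj' hVsV, Matrix.diagonal_mul_diagonal,
      Matrix.trace_diagonal]
  have hFQ : (F * Q).trace = ∑ j, ∑ i, (A j i * A j i) * (p i * f j) := by
    have e : (V * Matrix.diagonal f * star V) * (W * Matrix.diagonal p * star W)
        = V * (Matrix.diagonal f * (A * (Matrix.diagonal p * star A))) * star V := by
      rw [hsA, hAdef]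
      simp only [Matrix.mul_assoc]
      rw [hVVs, Matrix.mul_one]
    rw [hFdec, hQdec, e, trace_conj' hVsV]
    rw [Matrix.trace]
    congr 1
    funext j
    rw [Matrix.diag_apply, Matrix.diagonal_mul, Matrix.mul_apply, Finset.mul_sum]
    congr 1
    funext i
    rw [Matrix.mul_apply]
    simp only [Matrix.diagonal_mul, Matrix.star_apply, star_trivial]
    rw [Finset.sum_eq_single i (by intro b _ hb; simp [Matrix.diagonal_apply_ne' _ hb])
      (by intro h; exact absurd (Finset.mem_univ i) h)]
    rw [Matrix.diagonal_apply_eq]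
    ring
  have hppos : ∀ i, 0 ≤ p i := fun i => hQ.eigenvalues_nonneg i
  have hpsum : ∑ i, p i = 1 := by
    have : Q.trace = ∑ i, p i := by
      rw [hQdec, trace_conj' hWsW, Matrix.trace_diagonal]
    rw [← this, hQtr]
  have hRdef : relEntUniform Q hQ.1 = (∑ i, p i * Real.log (p i)) + Real.log n := rfl
  rw [hRdef] at hlam
  set P := ∑ i, p i * Real.log (p i) with hPdef
  have hR0 : 0 ≤ P + Real.log n := entropy_ge hn p hppos hpsum
  have hlam0 : 0 ≤ lam :=
    le_trans (mul_nonneg (by positivity) hR0) hlam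
  rcases hlam0.lt_or_eq with hl | hl
  · -- lam > 0
    set Z : ℝ := ∑ j, Real.exp (-(lam * f j)) with hZdef
    set T : ℝ := ∑ j, f j * Real.exp (-(lam * f j)) with hTdef
    have hZpos : 0 < Z := Finset.sum_pos (fun j _ => Real.exp_pos _)
      (Finset.univ_nonempty_iff.mpr ⟨⟨0, hn⟩⟩)
    have h1 := klein_sum hn (fun j i => A j i * A j i) p (fun j => -(lam * f j))
      (fun j i => mul_self_nonneg _) hrow hcol hppos hpsum
    have h2 : P + Real.log n ≤ lam * ε := by
      have h := mul_le_mul_of_nonneg_left hlam hε.le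
      have : ε * ((1/ε) * (P + Real.log n)) = P + Real.log n := by field_simp
      nlinarith
    have e4 : ∑ j, ∑ i, (A j i * A j i) * (p i * (-(lam * f j))) = -lam * ((F * Q).trace) := by
      rw [hFQ, Finset.mul_sum]
      refine Finset.sum_congr rfl fun j _ => ?_
      rw [Finset.mul_sum]
      exact Finset.sum_congr rfl fun i _ => by ring
    rw [e4] at h1
    set q : Fin n → ℝ := fun j => Real.exp (-(lam * f j)) / Z with hqdef
    have hqsum : ∑ j, q j = 1 := by
      rw [hqdef, ← Finset.sum_div, ← hZdef, div_self hZpos.ne']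
    have hent := entropy_ge hn q (fun j => div_nonneg (Real.exp_pos _).le hZpos.le) hqsum
    have hqlog : ∑ j, q j * Real.log (q j) = Z⁻¹ * (-lam * T) - Real.log Z := by
      have e5 : ∀ j, q j * Real.log (q j) =
          Z⁻¹ * (Real.exp (-(lam * f j)) * (-(lam * f j))) - q j * Real.log Z := by
        intro j
        rw [hqdef]
        rw [Real.log_div (Real.exp_ne_zero _) hZpos.ne', Real.log_exp]
        ring
      rw [Finset.sum_congr rfl fun j _ => e5 j, Finset.sum_sub_distrib, ← Finset.sum_mul,
        hqsum, one_mul, ← Finset.mul_sum]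
      congr 2
      rw [hTdef, Finset.mul_sum]
      exact Finset.sum_congr rfl fun j _ => by ring
    rw [hqlog] at hent
    rw [Matrix.mul_smul, Matrix.trace_smul, smul_eq_mul, hZeq, hFE]
    have key : lam * (Z⁻¹ * T) ≤ lam * ((F * Q).trace + ε) := by nlinarith
    have := le_of_mul_le_mul_left key hl
    linarith
  · -- lam = 0
    have hlz : lam = 0 := hl.symm
    subst hlz
    have hRle : P + Real.log n ≤ 0 := by
      have h := mul_le_mul_of_nonneg_left hlam hε.le
      have : ε * ((1/ε) * (P + Real.log n)) = P + Real.log n := by field_simp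
      nlinarith
    have hReq : P + Real.log n = 0 := le_antisymm hRle hR0
    have hpu : ∀ i, p i = (n:ℝ)⁻¹ := entropy_eq_uniform hn p hppos hpsum hReq
    have hQu : Q = (n:ℝ)⁻¹ • (1 : Matrix (Fin n) (Fin n) ℝ) := by
      rw [hQdec]
      have hd : Matrix.diagonal p = (n:ℝ)⁻¹ • (1 : Matrix (Fin n) (Fin n) ℝ) := by
        ext i j
        rcases eq_or_ne i j with h | h
        · subst h; simp [hpu]
        · simp [Matrix.diagonal_apply_ne _ h, Matrix.one_apply_ne h]
      rw [hd]
      simp [Matrix.mul_smul, Matrix.smul_mul, hWWs]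
    rw [hQu]
    simp only [zero_smul, neg_zero, NormedSpace.exp_zero, Matrix.trace_one,
      Fintype.card_fin]
    linarith
end

section
/- Let X(t) be a continuously differentiable symmetric-matrix-valued function with eigenvalues λ_i(t). Then Tr(X'(t) · d/dt e^{X(t)}) ≤ 2·Tr(e^{X(t)})·‖X'(t)‖², where ‖·‖ is the operator norm. -/
open scoped BigOperators
open Finset NormedSpace

variable {𝔸 : Type*} [NormedRing 𝔸] [NormedAlgebra ℝ 𝔸] [NormOneClass 𝔸] [CompleteSpace 𝔸]

set_option linter.unusedSectionVars false

/-- derivative of x ↦ x^k -/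
lemma hasFDerivAt_pow'' (k : ℕ) (A : 𝔸) :
    HasFDerivAt (fun x : 𝔸 => x ^ k)
      (∑ a ∈ range k, ContinuousLinearMap.mulLeftRight ℝ 𝔸 (A ^ a) (A ^ (k - 1 - a))) A := by
  induction k with
  | zero => simpa using hasFDerivAt_const (1 : 𝔸) A
  | succ k ih =>
    have h := ih.mul' (hasFDerivAt_id A)
    have heq : ((fun y : 𝔸 => y ^ k) * id) = fun y : 𝔸 => y ^ (k + 1) := by
      funext y; simp [pow_succ]
    rw [heq] at h
    convert h using 1
    · rfl
    ext H
    simp only [ContinuousLinearMap.add_apply, ContinuousLinearMap.coe_sum',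
      Finset.sum_apply, ContinuousLinearMap.mulLeftRight_apply,
      ContinuousLinearMap.smul_apply, ContinuousLinearMap.smulRight_apply,
      ContinuousLinearMap.coe_id', id_eq, smul_eq_mul]
    rw [Finset.sum_range_succ]
    have : ∀ a ∈ range k, A ^ a * H * A ^ (k + 1 - 1 - a) = A ^ a * H * (A ^ (k - 1 - a) * A) := by
      intro a ha
      rw [mem_range] at ha
      rw [← pow_succ]
      congr 2
      omega
    rw [Finset.sum_congr rfl this]
    simp [Nat.sub_self, pow_zero, mul_assoc, Finset.sum_mul, add_comm]

noncomputable def Pk (k : ℕ) (A : 𝔸) : 𝔸 →L[ℝ] 𝔸 :=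
  ∑ a ∈ range k, ContinuousLinearMap.mulLeftRight ℝ 𝔸 (A ^ a) (A ^ (k - 1 - a))

lemma Pk_norm_le (k : ℕ) {A : 𝔸} {R : ℝ} (hR : ‖A‖ ≤ R) (hR0 : 0 ≤ R) :
    ‖Pk k A‖ ≤ k * R ^ (k - 1) := by
  refine (norm_sum_le _ _).trans ?_
  have hb : ∀ a ∈ range k, ‖ContinuousLinearMap.mulLeftRight ℝ 𝔸 (A ^ a) (A ^ (k - 1 - a))‖
      ≤ R ^ (k - 1) := by
    intro a ha
    rw [mem_range] at ha
    refine (ContinuousLinearMap.opNorm_mulLeftRight_apply_apply_le ℝ 𝔸 _ _).trans ?_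
    calc ‖A ^ a‖ * ‖A ^ (k - 1 - a)‖ ≤ ‖A‖ ^ a * ‖A‖ ^ (k - 1 - a) :=
          mul_le_mul (norm_pow_le _ _) (norm_pow_le _ _) (norm_nonneg _)
            (pow_nonneg (norm_nonneg _) _)
      _ ≤ R ^ a * R ^ (k - 1 - a) :=
          mul_le_mul (pow_le_pow_left₀ (norm_nonneg _) hR _)
            (pow_le_pow_left₀ (norm_nonneg _) hR _) (pow_nonneg (norm_nonneg _) _) (pow_nonneg hR0 _)
      _ = R ^ (k - 1) := by rw [← pow_add]; congr 1; omega
  calc ∑ a ∈ range k, ‖ContinuousLinearMap.mulLeftRight ℝ 𝔸 (A ^ a) (A ^ (k - 1 - a))‖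
      ≤ ∑ _a ∈ range k, R ^ (k - 1) := Finset.sum_le_sum hb
    _ = k * R ^ (k - 1) := by simp [mul_comm]

lemma summable_aux (R : ℝ) :
    Summable (fun k : ℕ => (k.factorial : ℝ)⁻¹ * (k * R ^ (k - 1))) := by
  rw [← summable_nat_add_iff 1]
  have : (fun k : ℕ => (((k + 1).factorial : ℝ))⁻¹ * ((k + 1 : ℕ) * R ^ (k + 1 - 1)))
      = fun k : ℕ => R ^ k / k.factorial := by
    funext k
    rw [Nat.factorial_succ, Nat.add_sub_cancel]
    push_cast
    rw [mul_inv]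
    have h1 : ((k : ℝ) + 1) ≠ 0 := by positivity
    field_simp
  simp only [this]
  exact Real.summable_pow_div_factorial R

lemma norm_smul_Pk (c : ℝ) (T : 𝔸 →L[ℝ] 𝔸) : ‖c • T‖ = |c| * ‖T‖ := by
  rw [show ‖c • T‖ = ‖c‖ * ‖T‖ from norm_smul c T, Real.norm_eq_abs]

lemma summable_Pk (A : 𝔸) : Summable (fun k : ℕ => (k.factorial : ℝ)⁻¹ • Pk k A) := by
  refine Summable.of_norm_bounded (summable_aux ‖A‖) fun k => ?_
  rw [norm_smul_Pk, abs_of_nonneg (by positivity)]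
  exact mul_le_mul_of_nonneg_left (Pk_norm_le k le_rfl (norm_nonneg A)) (by positivity)

noncomputable def expD (A : 𝔸) : 𝔸 →L[ℝ] 𝔸 := ∑' k : ℕ, (k.factorial : ℝ)⁻¹ • Pk k A

lemma hasFDerivAt_exp' (A : 𝔸) : HasFDerivAt (exp : 𝔸 → 𝔸) (expD A) A := by
  have hball : ∀ x ∈ Metric.ball A 1, ‖x‖ ≤ ‖A‖ + 1 := by
    intro x hx
    rw [Metric.mem_ball, dist_eq_norm] at hx
    have : x = A + (x - A) := by abel
    calc ‖x‖ = ‖A + (x - A)‖ := by rw [← this]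
      _ ≤ ‖A‖ + ‖x - A‖ := norm_add_le _ _
      _ ≤ ‖A‖ + 1 := by linarith
  have h1 : TendstoUniformlyOn
      (fun N x => ∑ k ∈ Finset.range N, (k.factorial : ℝ)⁻¹ • Pk k x)
      (fun x => expD x) Filter.atTop (Metric.ball A 1) := by
    refine tendstoUniformlyOn_tsum_nat (summable_aux (‖A‖ + 1)) ?_
    intro k x hx
    rw [norm_smul_Pk, abs_of_nonneg (by positivity)]
    exact mul_le_mul_of_nonneg_left
      (Pk_norm_le k (hball x hx) (by positivity)) (by positivity)
  have h2 : ∀ (N : ℕ), ∀ x ∈ Metric.ball A 1,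
      HasFDerivAt (fun y : 𝔸 => ∑ k ∈ Finset.range N, (k.factorial : ℝ)⁻¹ • y ^ k)
        (∑ k ∈ Finset.range N, (k.factorial : ℝ)⁻¹ • Pk k x) x := by
    intro N x _
    exact HasFDerivAt.fun_sum fun k _ => (hasFDerivAt_pow'' k x).const_smul ((k.factorial : ℝ)⁻¹)
  have h3 : ∀ x ∈ Metric.ball A 1, Filter.Tendsto
      (fun N => ∑ k ∈ Finset.range N, (k.factorial : ℝ)⁻¹ • x ^ k)
      Filter.atTop (nhds (exp x)) := fun x _ => (exp_series_hasSum_exp' x).tendsto_sum_nat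
  exact hasFDerivAt_of_tendstoUniformlyOn Metric.isOpen_ball h1 h2 h3
    (Metric.mem_ball_self one_pos)

lemma hasSum_expD_apply (A H : 𝔸) :
    HasSum (fun k : ℕ => (k.factorial : ℝ)⁻¹ • (Pk k A H)) (expD A H) := by
  have h := (summable_Pk A).hasSum
  have h2 := (ContinuousLinearMap.apply ℝ 𝔸 H).hasSum h
  exact h2

section scalar

/-- divided-difference series for `exp` -/
noncomputable def Sdd (a b : ℝ) : ℝ :=
  ∑' k : ℕ, (k.factorial : ℝ)⁻¹ * ∑ m ∈ range k, b ^ m * a ^ (k - 1 - m)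

lemma Sdd_term_bound (a b : ℝ) (k : ℕ) :
    |(k.factorial : ℝ)⁻¹ * ∑ m ∈ range k, b ^ m * a ^ (k - 1 - m)|
      ≤ (k.factorial : ℝ)⁻¹ * (k * (max |a| |b|) ^ (k - 1)) := by
  set R := max |a| |b| with hR
  have hR0 : 0 ≤ R := le_trans (abs_nonneg a) (le_max_left _ _)
  rw [abs_mul, abs_of_nonneg (by positivity : (0:ℝ) ≤ (k.factorial : ℝ)⁻¹)]
  refine mul_le_mul_of_nonneg_left ?_ (by positivity)
  refine (Finset.abs_sum_le_sum_abs _ _).trans ?_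
  have : ∀ m ∈ range k, |b ^ m * a ^ (k - 1 - m)| ≤ R ^ (k - 1) := by
    intro m hm
    rw [mem_range] at hm
    rw [abs_mul, abs_pow, abs_pow]
    calc |b| ^ m * |a| ^ (k - 1 - m) ≤ R ^ m * R ^ (k - 1 - m) :=
        mul_le_mul (pow_le_pow_left₀ (abs_nonneg _) (le_max_right _ _) _)
          (pow_le_pow_left₀ (abs_nonneg _) (le_max_left _ _) _)
          (by positivity) (by positivity)
      _ = R ^ (k - 1) := by rw [← pow_add]; congr 1; omega
  calc ∑ m ∈ range k, |b ^ m * a ^ (k - 1 - m)| ≤ ∑ _m ∈ range k, R ^ (k - 1) :=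
        Finset.sum_le_sum this
    _ = k * R ^ (k - 1) := by simp [mul_comm]

lemma summable_Sdd (a b : ℝ) :
    Summable (fun k : ℕ => (k.factorial : ℝ)⁻¹ * ∑ m ∈ range k, b ^ m * a ^ (k - 1 - m)) := by
  refine Summable.of_norm_bounded (summable_aux (max |a| |b|)) fun k => ?_
  rw [Real.norm_eq_abs]; exact Sdd_term_bound a b k

lemma real_exp_tsum (a : ℝ) : Real.exp a = ∑' k : ℕ, a ^ k / k.factorial := by
  rw [Real.exp_eq_exp_ℝ, NormedSpace.exp_eq_tsum_div]

lemma real_exp_tsum' (a : ℝ) : Real.exp a = ∑' k : ℕ, (k.factorial : ℝ)⁻¹ * a ^ k := by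
  rw [real_exp_tsum]
  congr 1; funext k; rw [div_eq_inv_mul]

lemma summable_exp_aux (a : ℝ) : Summable (fun k : ℕ => (k.factorial : ℝ)⁻¹ * a ^ k) := by
  have := Real.summable_pow_div_factorial a
  refine this.congr fun k => ?_
  rw [div_eq_inv_mul]

lemma summable_kpow (a : ℝ) :
    Summable (fun k : ℕ => (k.factorial : ℝ)⁻¹ * ((k : ℝ) * a ^ (k - 1))) := by
  refine Summable.of_norm_bounded (summable_aux |a|) fun k => ?_
  rw [Real.norm_eq_abs, abs_mul, abs_mul, abs_pow]
  rw [abs_of_nonneg (by positivity : (0:ℝ) ≤ ((k.factorial : ℝ))⁻¹),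
    abs_of_nonneg (by positivity : (0:ℝ) ≤ (k:ℝ))]

lemma factorial_succ_inv (k : ℕ) :
    (((k+1).factorial : ℝ))⁻¹ * ((k:ℝ) + 1) = ((k.factorial : ℝ))⁻¹ := by
  rw [Nat.factorial_succ]
  push_cast
  have h1 : ((k:ℝ) + 1) ≠ 0 := by positivity
  have h2 : ((k.factorial : ℝ)) ≠ 0 := by positivity
  field_simp

lemma Sdd_eq_self (a : ℝ) : Sdd a a = Real.exp a := by
  have h1 : ∀ k : ℕ, (k.factorial : ℝ)⁻¹ * ∑ m ∈ range k, a ^ m * a ^ (k - 1 - m)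
      = (k.factorial : ℝ)⁻¹ * (k * a ^ (k - 1)) := by
    intro k
    congr 1
    have : ∀ m ∈ range k, a ^ m * a ^ (k - 1 - m) = a ^ (k - 1) := by
      intro m hm
      rw [mem_range] at hm
      rw [← pow_add]
      congr 1
      omega
    rw [Finset.sum_congr rfl this]
    simp [mul_comm]
  unfold Sdd
  rw [tsum_congr h1, (summable_kpow a).tsum_eq_zero_add]
  simp only [Nat.factorial_zero, Nat.cast_zero, zero_mul, mul_zero, zero_add]
  have h2 : ∀ k : ℕ, (((k+1).factorial : ℝ))⁻¹ * (((k+1 : ℕ) : ℝ) * a ^ (k + 1 - 1))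
      = ((k.factorial : ℝ))⁻¹ * a ^ k := by
    intro k
    rw [Nat.add_sub_cancel, ← mul_assoc]
    push_cast
    rw [factorial_succ_inv]
  rw [tsum_congr h2, ← real_exp_tsum']

lemma Sdd_eq_div (a b : ℝ) (hne : a ≠ b) :
    Sdd a b = (Real.exp b - Real.exp a) / (b - a) := by
  have hba : b - a ≠ 0 := sub_ne_zero.mpr (Ne.symm hne)
  rw [eq_div_iff hba]
  unfold Sdd
  rw [← tsum_mul_right]
  have h1 : ∀ k : ℕ, (k.factorial : ℝ)⁻¹ * (∑ m ∈ range k, b ^ m * a ^ (k - 1 - m)) * (b - a)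
      = (k.factorial : ℝ)⁻¹ * b ^ k - (k.factorial : ℝ)⁻¹ * a ^ k := by
    intro k
    rw [mul_assoc, geom_sum₂_mul, mul_sub]
  rw [tsum_congr h1, (summable_exp_aux b).tsum_sub (summable_exp_aux a),
    ← real_exp_tsum', ← real_exp_tsum']

lemma Sdd_le (a b : ℝ) : Sdd a b ≤ Real.exp a + Real.exp b := by
  rcases eq_or_ne a b with rfl | hne
  · rw [Sdd_eq_self]
    nlinarith [Real.exp_pos a]
  · rw [Sdd_eq_div a b hne]
    have hea := Real.exp_pos a
    have heb := Real.exp_pos b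
    rcases lt_or_gt_of_ne hne with h | h
    · -- a < b
      have key : Real.exp b * ((a - b) + 1) ≤ Real.exp a := by
        have := Real.add_one_le_exp (a - b)
        calc Real.exp b * ((a - b) + 1) ≤ Real.exp b * Real.exp (a - b) :=
              mul_le_mul_of_nonneg_left this heb.le
          _ = Real.exp a := by rw [← Real.exp_add]; ring_nf
      rw [div_le_iff₀ (by linarith : (0:ℝ) < b - a)]
      nlinarith
    · -- b < a
      have key : Real.exp a * ((b - a) + 1) ≤ Real.exp b := by
        have := Real.add_one_le_exp (b - a)
        calc Real.exp a * ((b - a) + 1) ≤ Real.exp a * Real.exp (b - a) :=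
              mul_le_mul_of_nonneg_left this hea.le
          _ = Real.exp b := by rw [← Real.exp_add]; ring_nf
      rw [div_le_iff_of_neg (by linarith : b - a < 0)]
      nlinarith

end scalar

section matrixpart

variable {n : ℕ}

noncomputable def entryCLM (i j : Fin n) : Matrix (Fin n) (Fin n) ℝ →L[ℝ] ℝ :=
  LinearMap.toContinuousLinearMap
    (Matrix.entryLinearMap ℝ ℝ i j)

@[simp] lemma entryCLM_apply (i j : Fin n) (M : Matrix (Fin n) (Fin n) ℝ) :
    entryCLM i j M = M i j := rfl

lemma euclideanCLM_isometry {V : Matrix (Fin n) (Fin n) ℝ} (hV : star V * V = 1)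
    (x : EuclideanSpace ℝ (Fin n)) :
    ‖Matrix.toEuclideanCLM (𝕜 := ℝ) V x‖ = ‖x‖ := by
  set T := Matrix.toEuclideanCLM (𝕜 := ℝ) (n := Fin n)
  have h1 : (star (T V)) * (T V) = 1 := by
    rw [← map_star, ← _root_.map_mul, hV, _root_.map_one]
  have h2 : (inner ℝ ((T V) x) ((T V) x) : ℝ) = inner ℝ x x := by
    rw [ContinuousLinearMap.star_eq_adjoint] at h1
    rw [← ContinuousLinearMap.adjoint_inner_left]
    have h3 : (ContinuousLinearMap.adjoint (T V)) ((T V) x)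
        = ((ContinuousLinearMap.adjoint (T V)) * (T V)) x := rfl
    rw [h3, h1]
    rfl
  rw [real_inner_self_eq_norm_sq, real_inner_self_eq_norm_sq] at h2
  nlinarith [norm_nonneg ((T V) x), norm_nonneg x]

lemma opnorm_conj_le (M : Matrix (Fin n) (Fin n) ℝ) {V : Matrix (Fin n) (Fin n) ℝ}
    (hV1 : star V * V = 1) (hV2 : V * star V = 1) :
    ‖Matrix.toEuclideanCLM (𝕜 := ℝ) (star V * M * V)‖
      ≤ ‖Matrix.toEuclideanCLM (𝕜 := ℝ) M‖ := by
  set T := Matrix.toEuclideanCLM (𝕜 := ℝ) (n := Fin n)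
  refine ContinuousLinearMap.opNorm_le_bound _ (norm_nonneg (T M)) fun x => ?_
  have hsV : star (star V) * star V = 1 := by rw [star_star]; exact hV2
  have h1 : T (star V * M * V) x = T (star V) (T M (T V x)) := by
    rw [_root_.map_mul, _root_.map_mul]; rfl
  rw [h1, euclideanCLM_isometry hsV]
  calc ‖T M (T V x)‖ ≤ ‖T M‖ * ‖T V x‖ := (T M).le_opNorm _
    _ = ‖T M‖ * ‖x‖ := by rw [euclideanCLM_isometry hV1]

lemma col_sq_le (M : Matrix (Fin n) (Fin n) ℝ) (i : Fin n) :
    ∑ j, (M j i) ^ 2 ≤ ‖Matrix.toEuclideanCLM (𝕜 := ℝ) M‖ ^ 2 := by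
  set T := Matrix.toEuclideanCLM (𝕜 := ℝ) (n := Fin n)
  set e : EuclideanSpace ℝ (Fin n) := EuclideanSpace.single i (1:ℝ) with he
  have h1 : ‖T M e‖ ≤ ‖T M‖ := by
    have := (T M).le_opNorm e
    rwa [EuclideanSpace.norm_single, norm_one, mul_one] at this
  have hTMe : T M e = (WithLp.equiv _ _).symm (M.mulVec (Pi.single i 1)) := by
    rfl
  have h2 : ‖T M e‖ ^ 2 = ∑ j, (M j i) ^ 2 := by
    rw [EuclideanSpace.norm_eq, Real.sq_sqrt (by positivity)]
    congr 1
    funext j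
    have h3 : (T M e) j = M j i := by
      rw [hTMe]
      show (M.mulVec (Pi.single i 1)) j = M j i
      rw [Matrix.mulVec_single]
      simp
    rw [h3, Real.norm_eq_abs, sq_abs]
  rw [← h2]
  exact pow_le_pow_left₀ (norm_nonneg _) h1 2

open Matrix in
lemma trace_exp_eq {A : Matrix (Fin n) (Fin n) ℝ} (hA : A.IsHermitian) :
    (NormedSpace.exp A).trace = ∑ i, Real.exp (hA.eigenvalues i) := by
  set U : Matrix (Fin n) (Fin n) ℝ := ↑(hA.eigenvectorUnitary)
  have hU1 : star U * U = 1 := Matrix.UnitaryGroup.star_mul_self _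
  have hU2 : U * star U = 1 := (Unitary.mem_iff.mp hA.eigenvectorUnitary.2).2
  have hspec : A = U * Matrix.diagonal (hA.eigenvalues) * star U := by
    have := hA.spectral_theorem
    rwa [RCLike.ofReal_real_eq_id, Function.id_comp] at this
  set u : (Matrix (Fin n) (Fin n) ℝ)ˣ := ⟨U, star U, hU2, hU1⟩
  have hconj := Matrix.exp_units_conj u (Matrix.diagonal hA.eigenvalues)
  have hconj' : NormedSpace.exp (U * Matrix.diagonal (hA.eigenvalues) * star U)
      = U * NormedSpace.exp (Matrix.diagonal hA.eigenvalues) * star U := hconj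
  have h5 : NormedSpace.exp A
      = U * NormedSpace.exp (Matrix.diagonal hA.eigenvalues) * star U :=
    (congrArg _ hspec).trans hconj'
  rw [h5, Matrix.trace_mul_cycle, show star U * U = 1 from hU1, one_mul]
  rw [Matrix.exp_diagonal, Matrix.trace_diagonal]
  congr 1
  funext i
  rw [Pi.exp_def, Real.exp_eq_exp_ℝ]


open Matrix in
lemma trace_bound {A H : Matrix (Fin n) (Fin n) ℝ} (hA : A.IsHermitian) (hH : H.IsHermitian)
    {τ : ℝ}
    (hT : HasSum (fun k : ℕ => (k.factorial : ℝ)⁻¹ *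
      ∑ a ∈ Finset.range k, (H * (A ^ a * H * A ^ (k - 1 - a))).trace) τ) :
    τ ≤ 2 * (NormedSpace.exp A).trace * ‖Matrix.toEuclideanCLM (𝕜 := ℝ) H‖ ^ 2 := by
  set U : Matrix (Fin n) (Fin n) ℝ := ↑(hA.eigenvectorUnitary) with hUdef
  set v := hA.eigenvalues with hv
  have hU1 : star U * U = 1 := Matrix.UnitaryGroup.star_mul_self _
  have hU2 : U * star U = 1 := (Unitary.mem_iff.mp hA.eigenvectorUnitary.2).2
  have hspec : A = U * Matrix.diagonal v * star U := by
    have := hA.spectral_theorem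
    rwa [RCLike.ofReal_real_eq_id, Function.id_comp] at this
  set Y := star U * H * U with hYdef
  have hYh : Y.IsHermitian := by
    rw [hYdef, Matrix.star_eq_conjTranspose]
    exact Matrix.isHermitian_conjTranspose_mul_mul U hH
  have hYsym : ∀ i j, Y j i = Y i j := fun i j => by
    rw [← hYh.apply i j, star_trivial]
  have hc_mul : ∀ M N : Matrix (Fin n) (Fin n) ℝ,
      star U * (M * N) * U = (star U * M * U) * (star U * N * U) := by
    intro M N
    calc star U * (M * N) * U = star U * M * ((U * star U) * N * U) := by
          rw [hU2, Matrix.one_mul]; noncomm_ring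
      _ = (star U * M * U) * (star U * N * U) := by noncomm_ring
  have htr : ∀ M : Matrix (Fin n) (Fin n) ℝ, (star U * M * U).trace = M.trace := by
    intro M
    rw [Matrix.trace_mul_cycle, hU2, Matrix.one_mul]
  have hcA : star U * A * U = Matrix.diagonal v := by
    rw [hspec]
    calc star U * (U * Matrix.diagonal v * star U) * U
        = (star U * U) * Matrix.diagonal v * (star U * U) := by noncomm_ring
      _ = Matrix.diagonal v := by rw [hU1, Matrix.one_mul, Matrix.mul_one]
  have hcpow : ∀ a : ℕ, star U * A ^ a * U = Matrix.diagonal (fun i => v i ^ a) := by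
    intro a
    induction a with
    | zero => simp [pow_zero, hU1]
    | succ a ih =>
      have : star U * A ^ (a + 1) * U = (star U * A ^ a * U) * (star U * A * U) := by
        rw [← hc_mul, ← pow_succ]
      rw [this, ih, hcA, Matrix.diagonal_mul_diagonal]
      simp [pow_succ]
  have hdiagtr : ∀ (w w' : Fin n → ℝ),
      ((Y * Matrix.diagonal w) * (Y * Matrix.diagonal w')).trace
        = ∑ i, ∑ j, Y i j * w j * (Y j i * w' i) := by
    intro w w'
    show ∑ i, ((Y * Matrix.diagonal w) * (Y * Matrix.diagonal w')) i i = _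
    refine Finset.sum_congr rfl fun i _ => ?_
    rw [Matrix.mul_apply]
    refine Finset.sum_congr rfl fun j _ => ?_
    rw [Matrix.mul_diagonal, Matrix.mul_diagonal]
  have htrace : ∀ a b : ℕ, (H * (A ^ a * H * A ^ b)).trace
      = ∑ i, ∑ j, Y i j * v j ^ a * (Y j i * v i ^ b) := by
    intro a b
    have hstep : star U * (H * (A ^ a * H * A ^ b)) * U
        = (Y * Matrix.diagonal (fun i => v i ^ a)) * (Y * Matrix.diagonal (fun i => v i ^ b)) := by
      rw [hc_mul, hc_mul, hc_mul, hcpow, hcpow, ← hYdef]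
      noncomm_ring
    rw [← htr (H * (A ^ a * H * A ^ b)), hstep, hdiagtr]
  have swap : ∀ (F : ℕ → Fin n → Fin n → ℝ) (k : ℕ),
      ∑ a ∈ Finset.range k, ∑ i, ∑ j, F a i j = ∑ i, ∑ j, ∑ a ∈ Finset.range k, F a i j := by
    intro F k
    rw [Finset.sum_comm]
    exact Finset.sum_congr rfl fun i _ => Finset.sum_comm
  have hk : ∀ k : ℕ, (k.factorial : ℝ)⁻¹ *
        ∑ a ∈ Finset.range k, (H * (A ^ a * H * A ^ (k - 1 - a))).trace
      = ∑ i, ∑ j, Y i j ^ 2 *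
        ((k.factorial : ℝ)⁻¹ * ∑ a ∈ Finset.range k, v j ^ a * v i ^ (k - 1 - a)) := by
    intro k
    rw [Finset.sum_congr rfl fun a (_ : a ∈ Finset.range k) => htrace a (k - 1 - a)]
    rw [swap (fun a i j => Y i j * v j ^ a * (Y j i * v i ^ (k - 1 - a))) k]
    simp only [Finset.mul_sum]
    refine Finset.sum_congr rfl fun i _ => Finset.sum_congr rfl fun j _ => ?_
    rw [hYsym i j]
    exact Finset.sum_congr rfl fun a _ => by ring
  simp only [hk] at hT
  have summab : ∀ i j : Fin n, Summable (fun k : ℕ => Y i j ^ 2 *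
      ((k.factorial : ℝ)⁻¹ * ∑ a ∈ Finset.range k, v j ^ a * v i ^ (k - 1 - a))) :=
    fun i j => (summable_Sdd (v i) (v j)).mul_left _
  have htau : τ = ∑ i, ∑ j, Y i j ^ 2 * Sdd (v i) (v j) := by
    rw [← hT.tsum_eq]
    rw [Summable.tsum_finsetSum fun i _ => hasSum_sum (fun j (_ : j ∈ Finset.univ) => (summab i j).hasSum)
      |>.summable]
    refine Finset.sum_congr rfl fun i _ => ?_
    rw [Summable.tsum_finsetSum fun j _ => summab i j]
    refine Finset.sum_congr rfl fun j _ => ?_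
    rw [tsum_mul_left]
    rfl
  set T := Matrix.toEuclideanCLM (𝕜 := ℝ) (n := Fin n)
  have hrow : ∀ i, ∑ j, Y i j ^ 2 ≤ ‖T H‖ ^ 2 := by
    intro i
    have h1 : ∑ j, Y i j ^ 2 = ∑ j, Y j i ^ 2 :=
      Finset.sum_congr rfl fun j _ => by rw [hYsym j i]
    rw [h1]
    refine (col_sq_le Y i).trans ?_
    exact pow_le_pow_left₀ (norm_nonneg _) (opnorm_conj_le H hU1 hU2) 2
  have hexp : ∀ i, (0:ℝ) ≤ Real.exp (v i) := fun i => (Real.exp_pos _).le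
  calc τ = ∑ i, ∑ j, Y i j ^ 2 * Sdd (v i) (v j) := htau
    _ ≤ ∑ i, ∑ j, Y i j ^ 2 * (Real.exp (v i) + Real.exp (v j)) := by
        refine Finset.sum_le_sum fun i _ => Finset.sum_le_sum fun j _ => ?_
        exact mul_le_mul_of_nonneg_left (Sdd_le (v i) (v j)) (sq_nonneg _)
    _ = (∑ i, ∑ j, Y i j ^ 2 * Real.exp (v i)) + ∑ i, ∑ j, Y i j ^ 2 * Real.exp (v j) := by
        rw [← Finset.sum_add_distrib]
        refine Finset.sum_congr rfl fun i _ => ?_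
        rw [← Finset.sum_add_distrib]
        exact Finset.sum_congr rfl fun j _ => by ring
    _ = (∑ i, ∑ j, Y i j ^ 2 * Real.exp (v i)) + ∑ i, ∑ j, Y i j ^ 2 * Real.exp (v i) := by
        congr 1
        rw [Finset.sum_comm]
        exact Finset.sum_congr rfl fun i _ => Finset.sum_congr rfl fun j _ => by rw [hYsym i j]
    _ = ∑ i, 2 * (Real.exp (v i) * ∑ j, Y i j ^ 2) := by
        rw [← two_mul]
        simp only [Finset.mul_sum]
        exact Finset.sum_congr rfl fun i _ => Finset.sum_congr rfl fun j _ => by ring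
    _ ≤ ∑ i, 2 * (Real.exp (v i) * ‖T H‖ ^ 2) := by
        refine Finset.sum_le_sum fun i _ => ?_
        have := mul_le_mul_of_nonneg_left (hrow i) (hexp i)
        linarith
    _ = 2 * (NormedSpace.exp A).trace * ‖T H‖ ^ 2 := by
        rw [trace_exp_eq hA]
        simp only [Finset.sum_mul, Finset.mul_sum]
        exact Finset.sum_congr rfl fun i _ => by ring

end matrixpart

/-- Let `X(t)` be a continuously differentiable symmetric-matrix-valued
function (differentiability expressed entrywise, with derivative `X'`), and let `E'` be
the (entrywise) derivative of `t ↦ e^{X(t)}` at `t`.  Then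
`Tr(X'(t) · d/dt e^{X(t)}) ≤ 2·Tr(e^{X(t)})·‖X'(t)‖²`. -/
theorem stmt10 (n : ℕ) (X X' : ℝ → Matrix (Fin n) (Fin n) ℝ)
    (hX : ∀ (i j : Fin n) (s : ℝ), HasDerivAt (fun u => X u i j) (X' s i j) s)
    (hXc : ∀ i j : Fin n, Continuous fun s => X' s i j)
    (hsym : ∀ s : ℝ, (X s).IsHermitian)
    (t : ℝ) (E' : Matrix (Fin n) (Fin n) ℝ)
    (hE : ∀ i j : Fin n, HasDerivAt (fun u => NormedSpace.exp (X u) i j) (E' i j) t) :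
    (X' t * E').trace ≤ 2 * (NormedSpace.exp (X t)).trace * (opNorm (X' t)) ^ 2 := by
  rcases Nat.eq_zero_or_pos n with rfl | hn
  · simp [Matrix.trace]
  haveI : Nonempty (Fin n) := ⟨⟨0, hn⟩⟩
  letI : SeminormedRing (Matrix (Fin n) (Fin n) ℝ) := Matrix.linftyOpSemiNormedRing
  letI : NormedRing (Matrix (Fin n) (Fin n) ℝ) := Matrix.linftyOpNormedRing
  letI : NormedAlgebra ℝ (Matrix (Fin n) (Fin n) ℝ) := Matrix.linftyOpNormedAlgebra
  haveI : CompleteSpace (Matrix (Fin n) (Fin n) ℝ) := FiniteDimensional.complete ℝ _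
  set A := X t with hAdef
  set H := X' t with hHdef
  have hA : A.IsHermitian := hsym t
  -- H is Hermitian
  have hH : H.IsHermitian := by
    rw [Matrix.IsHermitian]
    ext i j
    rw [Matrix.conjTranspose_apply, star_trivial]
    have h1 : HasDerivAt (fun u => X u j i) (X' t i j) t := by
      have h2 := hX i j t
      have h3 : (fun u => X u i j) = fun u => X u j i := by
        funext u
        rw [← (hsym u).apply j i, star_trivial]
      rwa [h3] at h2
    exact (h1.unique (hX j i t)).symm
  -- derivative of X as a matrix-valued function
  have hXd : HasDerivAt X (X' t) t := by
    have h2 : HasDerivAt (fun u => ∑ i : Fin n, ∑ j : Fin n,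
        X u i j • Matrix.single i j (1:ℝ))
        (∑ i : Fin n, ∑ j : Fin n, X' t i j • Matrix.single i j (1:ℝ)) t :=
      HasDerivAt.fun_sum fun i _ => HasDerivAt.fun_sum fun j _ => (hX i j t).smul_const _
    have h1 : ∀ u, ∑ i : Fin n, ∑ j : Fin n, X u i j • Matrix.single i j (1:ℝ) = X u := by
      intro u
      simp only [Matrix.smul_single, smul_eq_mul, mul_one]
      exact (Matrix.matrix_eq_sum_single (X u)).symm
    have h3 : ∑ i : Fin n, ∑ j : Fin n, X' t i j • Matrix.single i j (1:ℝ) = X' t := by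
      simp only [Matrix.smul_single, smul_eq_mul, mul_one]
      exact (Matrix.matrix_eq_sum_single (X' t)).symm
    rw [← h3]
    exact h2.congr_of_eventuallyEq (Filter.Eventually.of_forall fun u => (h1 u).symm)
  have hED : HasDerivAt (fun u => NormedSpace.exp (X u)) (expD A H) t :=
    (hasFDerivAt_exp' A).comp_hasDerivAt t hXd
  have hE'eq : E' = expD A H := by
    ext i j
    have h4 : HasDerivAt (fun u => NormedSpace.exp (X u) i j) (expD A H i j) t := by
      have h5 := (entryCLM i j).hasFDerivAt.comp_hasDerivAt t hED
      exact h5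
    exact (hE i j).unique h4
  -- trace continuous linear map  M ↦ (H * M).trace
  set traceCLM : Matrix (Fin n) (Fin n) ℝ →L[ℝ] ℝ :=
    LinearMap.toContinuousLinearMap
      ((Matrix.traceLinearMap (Fin n) ℝ ℝ).comp (LinearMap.mulLeft ℝ H)) with htCLM
  have htCLM_apply : ∀ M : Matrix (Fin n) (Fin n) ℝ, traceCLM M = (H * M).trace := fun M => rfl
  have hS : HasSum (fun k : ℕ => (k.factorial : ℝ)⁻¹ • (Pk k A H)) (expD A H) :=
    hasSum_expD_apply A H
  have hS2 := traceCLM.hasSum hS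
  have hterm : ∀ k : ℕ, traceCLM ((k.factorial : ℝ)⁻¹ • (Pk k A H))
      = (k.factorial : ℝ)⁻¹ * ∑ a ∈ Finset.range k, (H * (A ^ a * H * A ^ (k - 1 - a))).trace := by
    intro k
    rw [htCLM_apply]
    have h6 : Pk k A H = ∑ a ∈ Finset.range k, A ^ a * H * A ^ (k - 1 - a) := by
      rw [Pk]
      simp [ContinuousLinearMap.coe_sum', Finset.sum_apply,
        ContinuousLinearMap.mulLeftRight_apply]
    rw [h6, Matrix.mul_smul, Matrix.trace_smul, Matrix.mul_sum, Matrix.trace_sum, smul_eq_mul]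
  have hS3 : HasSum (fun k : ℕ => (k.factorial : ℝ)⁻¹ *
      ∑ a ∈ Finset.range k, (H * (A ^ a * H * A ^ (k - 1 - a))).trace)
      ((H * E').trace) := by
    have h7 := hS2
    rw [funext hterm] at h7
    rwa [htCLM_apply, ← hE'eq] at h7
  exact trace_bound hA hH hS3
end

section
/- For every subset α ⊆ [n] with |α| ≤ ℓ and a uniformly random m-subset S of [n], Pr[|α ∩ S| > d/2] ≤ binom(ℓ, ⌈d/2⌉)·binom(n, m−⌈d/2⌉)/binom(n, m) ≤ (ℓm/(n−m))^{d/2} for even d with d/2 ≤ min(ℓ, m). -/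
lemma aux_ratio (n m : ℕ) (hmn : m < n) :
    ∀ k, k ≤ m → Nat.choose n (m - k) * (n - m) ^ k ≤ Nat.choose n m * m ^ k := by
  intro k
  induction k with
  | zero => simp
  | succ k ih =>
    intro hk
    have hk' : k ≤ m := Nat.le_of_succ_le hk
    have ihk := ih hk'
    have key : Nat.choose n (m - (k + 1)) * (n - m) ≤ Nat.choose n (m - k) * m := by
      have h1 : m - k = (m - (k + 1)) + 1 := by omega
      have h2 := Nat.choose_succ_right_eq n (m - (k + 1))
      rw [← h1] at h2
      have hpos : 0 < n - (m - (k + 1)) := by omega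
      have hmul : Nat.choose n (m - (k + 1)) * (n - m) * (n - (m - (k + 1)))
          ≤ Nat.choose n (m - k) * m * (n - (m - (k + 1))) := by
        calc Nat.choose n (m - (k + 1)) * (n - m) * (n - (m - (k + 1)))
            = Nat.choose n (m - (k + 1)) * (n - (m - (k + 1))) * (n - m) := by ring
          _ = Nat.choose n (m - k) * (m - (k + 1) + 1) * (n - m) := by rw [← h2, ← h1]
          _ = Nat.choose n (m - k) * (m - k) * (n - m) := by rw [← h1]
          _ ≤ Nat.choose n (m - k) * m * (n - (m - (k + 1))) := by
              have : (m - k) * (n - m) ≤ m * (n - (m - (k + 1))) := by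
                apply Nat.mul_le_mul <;> omega
              calc Nat.choose n (m - k) * (m - k) * (n - m)
                  = Nat.choose n (m - k) * ((m - k) * (n - m)) := by ring
                _ ≤ Nat.choose n (m - k) * (m * (n - (m - (k + 1)))) :=
                    Nat.mul_le_mul_left _ this
                _ = Nat.choose n (m - k) * m * (n - (m - (k + 1))) := by ring
      exact Nat.le_of_mul_le_mul_right hmul hpos
    calc Nat.choose n (m - (k + 1)) * (n - m) ^ (k + 1)
        = Nat.choose n (m - (k + 1)) * (n - m) * (n - m) ^ k := by ring
      _ ≤ Nat.choose n (m - k) * m * (n - m) ^ k := Nat.mul_le_mul_right _ key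
      _ = Nat.choose n (m - k) * (n - m) ^ k * m := by ring
      _ ≤ Nat.choose n m * m ^ k * m := Nat.mul_le_mul_right _ ihk
      _ = Nat.choose n m * m ^ (k + 1) := by ring

/-- For every `α ⊆ [n]` with `|α| ≤ ℓ` and a uniformly random `m`-subset `S`
of `[n]`, with `d` even and `d/2 ≤ min(ℓ, m)`, `m < n`:
`Pr[|α ∩ S| > d/2] ≤ binom(ℓ, d/2)·binom(n, m−d/2)/binom(n, m) ≤ (ℓm/(n−m))^{d/2}`. -/
theorem stmt15 (n d ℓ m : ℕ) (hn : 1 ≤ n) (hd : 0 < d) (hℓ : 0 < ℓ) (hm : 0 < m)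
    (hdn : d ≤ n) (hℓn : ℓ ≤ n) (hmn : m < n) (hde : Even d)
    (hdℓ : d / 2 ≤ ℓ) (hdm : d / 2 ≤ m)
    (α : Finset (Fin n)) (hα : α.card ≤ ℓ) :
    (((Finset.powersetCard m (Finset.univ : Finset (Fin n))).filter
        (fun S => d / 2 < (α ∩ S).card)).card : ℝ) / (Nat.choose n m : ℝ)
      ≤ ((Nat.choose ℓ (d / 2) * Nat.choose n (m - d / 2) : ℕ) : ℝ) / (Nat.choose n m : ℝ) ∧
    ((Nat.choose ℓ (d / 2) * Nat.choose n (m - d / 2) : ℕ) : ℝ) / (Nat.choose n m : ℝ)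
      ≤ (((ℓ : ℝ) * m) / ((n : ℝ) - m)) ^ (d / 2) := by
  classical
  set k := d / 2 with hkdef
  have hchoose_pos : (0 : ℝ) < (Nat.choose n m : ℝ) := by
    exact_mod_cast Nat.choose_pos (le_of_lt hmn)
  constructor
  · have hcount : ((Finset.powersetCard m (Finset.univ : Finset (Fin n))).filter
        (fun S => k < (α ∩ S).card)).card ≤ Nat.choose ℓ k * Nat.choose n (m - k) := by
      -- injection into pairs (β, T)
      have g : ∀ S : Finset (Fin n), k < (α ∩ S).card →
          ∃ β, β ⊆ α ∩ S ∧ β.card = k := fun S h =>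
        Finset.exists_subset_card_eq (le_of_lt h)
      set F := (Finset.powersetCard m (Finset.univ : Finset (Fin n))).filter
        (fun S => k < (α ∩ S).card) with hF
      have hβ : ∀ S, k < (α ∩ S).card →
          (if h : k ≤ (α ∩ S).card then (Finset.exists_subset_card_eq h).choose else ∅) ⊆ α ∩ S
          ∧ (if h : k ≤ (α ∩ S).card then (Finset.exists_subset_card_eq h).choose else ∅).card
            = k := by
        intro S hS
        rw [dif_pos (le_of_lt hS)]
        exact (Finset.exists_subset_card_eq (le_of_lt hS)).choose_spec
      set b : Finset (Fin n) → Finset (Fin n) := fun S =>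
        if h : k ≤ (α ∩ S).card then (Finset.exists_subset_card_eq h).choose else ∅ with hb
      have hsub : F.card ≤ ((α.powersetCard k) ×ˢ
          ((Finset.univ : Finset (Fin n)).powersetCard (m - k))).card := by
        apply Finset.card_le_card_of_injOn (f := fun S => (b S, S \ b S))
        · intro S hS
          rw [hF, Finset.mem_coe, Finset.mem_filter] at hS
          obtain ⟨hβsub, hβcard⟩ := hβ S hS.2
          have hSm : S.card = m := by
            simpa [Finset.mem_powersetCard] using hS.1
          have hβS : b S ⊆ S := hβsub.trans Finset.inter_subset_right
          rw [Finset.mem_coe, Finset.mem_product]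
          constructor
          · rw [Finset.mem_powersetCard]
            exact ⟨hβsub.trans Finset.inter_subset_left, hβcard⟩
          · rw [Finset.mem_powersetCard]
            refine ⟨Finset.subset_univ _, ?_⟩
            rw [Finset.card_sdiff_of_subset hβS, hSm, hβcard]
        · intro S₁ hS₁ S₂ hS₂ heq
          rw [hF, Finset.mem_coe, Finset.mem_filter] at hS₁ hS₂
          obtain ⟨h1, h2⟩ := Prod.mk.injEq .. ▸ heq
          have hβS₁ : b S₁ ⊆ S₁ := (hβ S₁ hS₁.2).1.trans Finset.inter_subset_right
          have hβS₂ : b S₂ ⊆ S₂ := (hβ S₂ hS₂.2).1.trans Finset.inter_subset_right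
          calc S₁ = b S₁ ∪ (S₁ \ b S₁) := (Finset.union_sdiff_of_subset hβS₁).symm
            _ = b S₂ ∪ (S₂ \ b S₂) := by rw [h2, h1]
            _ = S₂ := Finset.union_sdiff_of_subset hβS₂
      calc F.card ≤ _ := hsub
        _ = Nat.choose α.card k * Nat.choose n (m - k) := by
            rw [Finset.card_product, Finset.card_powersetCard, Finset.card_powersetCard,
              Finset.card_univ, Fintype.card_fin]
        _ ≤ Nat.choose ℓ k * Nat.choose n (m - k) :=
            Nat.mul_le_mul_right _ (Nat.choose_le_choose k hα)
    gcongr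
  · -- ratio bound
    have hnm : (0 : ℝ) < (n : ℝ) - (m : ℝ) := by
      have : (m : ℝ) < n := by exact_mod_cast hmn
      linarith
    rw [div_pow, div_le_div_iff₀ hchoose_pos (by positivity)]
    have hnat : Nat.choose ℓ k * Nat.choose n (m - k) * (n - m) ^ k
        ≤ (ℓ * m) ^ k * Nat.choose n m := by
      calc Nat.choose ℓ k * Nat.choose n (m - k) * (n - m) ^ k
          = Nat.choose ℓ k * (Nat.choose n (m - k) * (n - m) ^ k) := by ring
        _ ≤ ℓ ^ k * (Nat.choose n m * m ^ k) :=
            Nat.mul_le_mul (Nat.choose_le_pow ℓ k) (aux_ratio n m hmn k hdm)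
        _ = (ℓ * m) ^ k * Nat.choose n m := by rw [mul_pow]; ring
    have hcast : ((n : ℝ) - m) = ((n - m : ℕ) : ℝ) := by
      rw [Nat.cast_sub (le_of_lt hmn)]
    rw [hcast]
    exact_mod_cast hnat
end

section
/- Let Π_n be a boolean CSP restricted to n variables, and let U be a subspace of functions {0,1}^n → ℝ of minimal dimension achieving a (c,s)-approximation for Π_n. Let M(ℑ, x) = c − ℑ(x), indexed by instances ℑ with max(ℑ) ≤ s and assignments x. Then rk_psd(M)² ≥ dim(U) ≥ rk_psd(M). -/
set_option maxHeartbeats 1000000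

section Aux
open Matrix

lemma trace_ct_factor {r : ℕ} (D C : Matrix (Fin r) (Fin r) ℝ) :
    ((Dᴴ * D) * (Cᴴ * C)).trace = ∑ j : Fin r, ∑ m : Fin r, (∑ k, C m k * D j k) ^ 2 := by
  have h1 : (Dᴴ * D * (Cᴴ * C)).trace = ((C * Dᴴ)ᴴ * (C * Dᴴ)).trace := by
    rw [Matrix.conjTranspose_mul, Matrix.conjTranspose_conjTranspose, Matrix.mul_assoc Dᴴ,
      Matrix.trace_mul_comm]
    simp only [Matrix.mul_assoc]
  rw [h1]
  simp only [Matrix.trace, Matrix.diag, Matrix.mul_apply, Matrix.conjTranspose_apply,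
    star_trivial, pow_two]

lemma trace_outer {d : ℕ} (u v : Fin d → ℝ) :
    (Matrix.vecMulVec u u * Matrix.vecMulVec v v).trace = (∑ k, u k * v k) ^ 2 := by
  simp only [Matrix.trace, Matrix.diag, Matrix.mul_apply, Matrix.vecMulVec_apply, pow_two,
    Finset.sum_mul, Finset.mul_sum]
  rw [Finset.sum_comm]
  exact Finset.sum_congr rfl fun _ _ => Finset.sum_congr rfl fun _ _ => by ring

lemma outer_psd {d : ℕ} (u : Fin d → ℝ) : (Matrix.vecMulVec u u).PosSemidef := by
  have h : Matrix.vecMulVec u u = (Matrix.replicateRow Unit u)ᴴ * Matrix.replicateRow Unit u := by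
    ext i j; simp [Matrix.mul_apply, Matrix.vecMulVec_apply]
  rw [h]; exact Matrix.posSemidef_conjTranspose_mul_self _

section PsdFact
open scoped MatrixOrder Matrix.Norms.L2Operator
lemma psd_fact {r : ℕ} {A : Matrix (Fin r) (Fin r) ℝ} (h : A.PosSemidef) :
    ∃ B : Matrix (Fin r) (Fin r) ℝ, A = Bᴴ * B := by
  obtain ⟨B, hB⟩ := CStarAlgebra.nonneg_iff_eq_star_mul_self.mp h.nonneg
  exact ⟨B, hB⟩
end PsdFact

end Aux


/-- The psd rank of a (nonnegative) matrix `M : I × J → ℝ`: the least `r` such that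
`M i j = Tr(A_i B_j)` for psd matrices `A_i, B_j ∈ S_+^r`. -/
noncomputable def PsdRank {I J : Type*} (M : I → J → ℝ) : ℕ :=
  sInf {r : ℕ |
    ∃ (A : I → Matrix (Fin r) (Fin r) ℝ) (B : J → Matrix (Fin r) (Fin r) ℝ),
      (∀ i, (A i).PosSemidef) ∧ (∀ j, (B j).PosSemidef) ∧
        ∀ i j, M i j = (A i * B j).trace}

/-- `sos_U(f) ≤ c`: `c − f` is a sum of squares of functions from the subspace `U`. -/
def SosUpperLE (n : ℕ) (U : Submodule ℝ ((Fin n → Bool) → ℝ))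
    (f : (Fin n → Bool) → ℝ) (c : ℝ) : Prop :=
  ∃ (t : ℕ) (g : Fin t → (Fin n → Bool) → ℝ),
    (∀ i, g i ∈ U) ∧ ∀ x, c - f x = ∑ i, (g i x) ^ 2

/-- `U` achieves a `(c,s)`-approximation for the family of instances `Insts`:
`max(ℑ) ≤ s` implies `sos_U(ℑ) ≤ c`. -/
def Achieves (n : ℕ) (Insts : Set ((Fin n → Bool) → ℝ)) (c s : ℝ)
    (U : Submodule ℝ ((Fin n → Bool) → ℝ)) : Prop :=
  ∀ F ∈ Insts, (∀ x, F x ≤ s) → SosUpperLE n U F c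

/-- Let `U` be a subspace of minimal dimension achieving a
`(c,s)`-approximation for a boolean CSP `Π_n` (formalized as an arbitrary family `Insts`
of instances, i.e. functions on `{0,1}^n`).  Let `M(ℑ,x) = c − ℑ(x)` be indexed by
instances with `max(ℑ) ≤ s` and assignments `x`.  Then
`rk_psd(M)² ≥ dim(U) ≥ rk_psd(M)`. -/
theorem stmt16 (n : ℕ) (c s : ℝ) (hs : s < c)
    (Insts : Set ((Fin n → Bool) → ℝ))
    (U : Submodule ℝ ((Fin n → Bool) → ℝ))
    (hU : Achieves n Insts c s U)
    (hmin : ∀ V : Submodule ℝ ((Fin n → Bool) → ℝ),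
      Achieves n Insts c s V → Module.finrank ℝ U ≤ Module.finrank ℝ V) :
    PsdRank (fun (F : {f // f ∈ Insts ∧ ∀ x, f x ≤ s}) (x : Fin n → Bool) => c - F.1 x)
        ≤ Module.finrank ℝ U ∧
      Module.finrank ℝ U ≤
        (PsdRank (fun (F : {f // f ∈ Insts ∧ ∀ x, f x ≤ s})
          (x : Fin n → Bool) => c - F.1 x)) ^ 2 := by
  classical
  constructor
  · -- Part 1: PsdRank ≤ finrank U
    have hex : ∀ F : {f // f ∈ Insts ∧ ∀ x, f x ≤ s},
        ∃ (t : ℕ) (g : Fin t → (Fin n → Bool) → ℝ),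
          (∀ i, g i ∈ U) ∧ ∀ x, c - F.1 x = ∑ i, (g i x) ^ 2 :=
      fun F => hU F.1 F.2.1 F.2.2
    choose t g hg hsum using hex
    let d := Module.finrank ℝ U
    let b : Module.Basis (Fin d) ℝ U := Module.finBasis ℝ U
    let α : ∀ F : {f // f ∈ Insts ∧ ∀ x, f x ≤ s}, Fin (t F) → Fin d → ℝ :=
      fun F i k => b.repr ⟨g F i, hg F i⟩ k
    let v : (Fin n → Bool) → Fin d → ℝ := fun x k => (b k : (Fin n → Bool) → ℝ) x
    have hgv : ∀ (F : {f // f ∈ Insts ∧ ∀ x, f x ≤ s}) (i : Fin (t F)) (x : Fin n → Bool),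
        g F i x = ∑ k, α F i k * v x k := by
      intro F i x
      have hrep := b.sum_repr ⟨g F i, hg F i⟩
      have h2 := congrArg (fun w : U => (w : (Fin n → Bool) → ℝ) x) hrep
      simpa [α, v, AddSubmonoidClass.coe_finset_sum, Finset.sum_apply,
        Pi.smul_apply, smul_eq_mul, mul_comm, -Module.Basis.sum_repr] using h2.symm
    refine Nat.sInf_le ?_
    refine ⟨fun F => ∑ i : Fin (t F), Matrix.vecMulVec (α F i) (α F i),
      fun x => Matrix.vecMulVec (v x) (v x), ?_, ?_, ?_⟩
    · intro F
      exact Finset.sum_induction _ _ (fun _ _ h1 h2 => h1.add h2)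
        Matrix.PosSemidef.zero (fun i _ => outer_psd (α F i))
    · intro x; exact outer_psd (v x)
    · intro F x
      rw [Finset.sum_mul, Matrix.trace_sum]
      calc c - F.1 x = ∑ i, (g F i x) ^ 2 := hsum F x
        _ = ∑ i, (∑ k, α F i k * v x k) ^ 2 :=
            Finset.sum_congr rfl fun i _ => by rw [hgv]
        _ = ∑ i, (Matrix.vecMulVec (α F i) (α F i) * Matrix.vecMulVec (v x) (v x)).trace :=
            Finset.sum_congr rfl fun i _ => (trace_outer _ _).symm
  · -- Part 2: finrank U ≤ PsdRank ^ 2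
    have hne : Set.Nonempty {r : ℕ |
        ∃ (A : {f // f ∈ Insts ∧ ∀ x, f x ≤ s} → Matrix (Fin r) (Fin r) ℝ)
          (B : (Fin n → Bool) → Matrix (Fin r) (Fin r) ℝ),
          (∀ i, (A i).PosSemidef) ∧ (∀ j, (B j).PosSemidef) ∧
            ∀ i j, c - i.1 j = (A i * B j).trace} := by
      let e : (Fin n → Bool) ≃ Fin (Fintype.card (Fin n → Bool)) := Fintype.equivFin _
      refine ⟨Fintype.card (Fin n → Bool),
        fun F => Matrix.diagonal (fun i => c - F.1 (e.symm i)),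
        fun x => Matrix.diagonal (fun i => if i = e x then 1 else 0), ?_, ?_, ?_⟩
      · intro F
        refine Matrix.PosSemidef.diagonal fun i => ?_
        have := F.2.2 (e.symm i)
        simp only [Pi.zero_apply]
        linarith
      · intro x
        refine Matrix.PosSemidef.diagonal fun i => ?_
        by_cases h : i = e x <;> simp [h]
      · intro F x
        rw [Matrix.diagonal_mul_diagonal, Matrix.trace_diagonal]
        rw [Finset.sum_eq_single (e x)]
        · simp
        · intro i _ hi; simp [hi]
        · intro h; exact absurd (Finset.mem_univ _) h
    generalize hrdef : PsdRank (fun (F : {f // f ∈ Insts ∧ ∀ x, f x ≤ s})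
        (x : Fin n → Bool) => c - F.1 x) = r
    have hmem : r ∈ {r : ℕ |
        ∃ (A : {f // f ∈ Insts ∧ ∀ x, f x ≤ s} → Matrix (Fin r) (Fin r) ℝ)
          (B : (Fin n → Bool) → Matrix (Fin r) (Fin r) ℝ),
          (∀ i, (A i).PosSemidef) ∧ (∀ j, (B j).PosSemidef) ∧
            ∀ i j, c - i.1 j = (A i * B j).trace} := by
      rw [← hrdef]
      exact Nat.sInf_mem hne
    obtain ⟨A, B, hA, hB, hAB⟩ := hmem
    choose C hC using fun x => (psd_fact (hB x))
    choose D hD using fun F => (psd_fact (hA F))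
    let φ : Fin r × Fin r → (Fin n → Bool) → ℝ := fun p x => C x p.1 p.2
    let V : Submodule ℝ ((Fin n → Bool) → ℝ) := Submodule.span ℝ (Set.range φ)
    have hVach : Achieves n Insts c s V := by
      intro F hF hFs
      let F' : {f // f ∈ Insts ∧ ∀ x, f x ≤ s} := ⟨F, hF, hFs⟩
      let gfun : Fin (r * r) → (Fin n → Bool) → ℝ := fun i x =>
        ∑ k, C x (finProdFinEquiv.symm i).2 k * D F' (finProdFinEquiv.symm i).1 k
      refine ⟨r * r, gfun, ?_, ?_⟩
      · intro i
        have heq : gfun i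
            = ∑ k, D F' (finProdFinEquiv.symm i).1 k • φ ((finProdFinEquiv.symm i).2, k) := by
          funext x
          simp only [gfun, φ, Finset.sum_apply, Pi.smul_apply, smul_eq_mul]
          exact Finset.sum_congr rfl fun k _ => mul_comm _ _
        rw [heq]
        exact Submodule.sum_mem _ fun k _ =>
          Submodule.smul_mem _ _ (Submodule.subset_span ⟨_, rfl⟩)
      · intro x
        have e0 := Fintype.sum_prod_type
          (fun (p : Fin r × Fin r) => (∑ k, C x p.2 k * D F' p.1 k) ^ 2)
        have e1 := Equiv.sum_comp (finProdFinEquiv (m := r) (n := r)).symm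
          (fun (p : Fin r × Fin r) => (∑ k, C x p.2 k * D F' p.1 k) ^ 2)
        have e2 : ∀ i : Fin (r * r),
            (∑ k, C x (finProdFinEquiv.symm i).2 k * D F' (finProdFinEquiv.symm i).1 k) ^ 2
              = (gfun i x) ^ 2 := fun i => rfl
        calc c - F x = (A F' * B x).trace := hAB F' x
          _ = ∑ j, ∑ m, (∑ k, C x m k * D F' j k) ^ 2 := by
              rw [hD, hC]; exact trace_ct_factor _ _
          _ = ∑ p : Fin r × Fin r, (∑ k, C x p.2 k * D F' p.1 k) ^ 2 := e0.symm
          _ = ∑ i : Fin (r * r),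
              (∑ k, C x (finProdFinEquiv.symm i).2 k * D F' (finProdFinEquiv.symm i).1 k) ^ 2 :=
              e1.symm
          _ = ∑ i, (gfun i x) ^ 2 := Finset.sum_congr rfl fun i _ => e2 i
    have h2 : Module.finrank ℝ V ≤ r * r := by
      have h3 := finrank_range_le_card (R := ℝ) φ
      simpa [Set.finrank, V] using h3
    calc Module.finrank ℝ U ≤ Module.finrank ℝ V := hmin V hVach
      _ ≤ r * r := h2
      _ = r ^ 2 := (sq r).symm
end

section
/- If f : {0,1}^m → ℝ_{≥0} has a sum-of-squares certificate of degree d+2 (i.e., f = ∑_j g_j² with deg(g_j) ≤ 1 + d/2), then for all n ≥ m the matrix M_n^f(S,x) = f(x_S), indexed by m-subsets S of [n] and x ∈ {0,1}^n, has psd rank at most 1 + n^{1+d/2}. -/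
open Matrix


/-- Restriction `x_S ∈ {0,1}^m` of `x ∈ {0,1}^n` to an `m`-element subset `S` (in
increasing order of coordinates). -/
noncomputable def restrict (m n : ℕ) (S : Finset (Fin n)) (x : Fin n → Bool) :
    Fin m → Bool :=
  if h : S.card = m then fun i => x ((S.orderIsoOfFin h) i) else fun _ => false

noncomputable def psiAux {n : ℕ} (k : ℕ) (A : Finset (Fin n)) (hA : A.Nonempty) :
    Fin k → Fin n := fun j =>
  (A.sort (· ≤ ·)).get ⟨min j ((A.sort (· ≤ ·)).length - 1), by
    have hlen : (A.sort (· ≤ ·)).length = A.card := A.length_sort _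
    have hpos : 0 < A.card := Finset.card_pos.mpr hA
    omega⟩

lemma psiAux_image {n k : ℕ} (A : Finset (Fin n)) (hA : A.Nonempty) (hk : A.card ≤ k) :
    Finset.image (psiAux k A hA) Finset.univ = A := by
  have hlen : (A.sort (· ≤ ·)).length = A.card := A.length_sort _
  apply Finset.ext
  intro a
  simp only [Finset.mem_image, Finset.mem_univ, true_and]
  constructor
  · rintro ⟨j, rfl⟩
    have : psiAux k A hA j ∈ A.sort (· ≤ ·) := by
      unfold psiAux; apply List.get_mem
    rwa [Finset.mem_sort] at this
  · intro ha
    have : a ∈ A.sort (· ≤ ·) := (Finset.mem_sort _).mpr ha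
    obtain ⟨i, hi⟩ := List.mem_iff_get.mp this
    have hik : (i : ℕ) < k := by have := i.2; omega
    refine ⟨⟨i, hik⟩, ?_⟩
    unfold psiAux
    rw [← hi]
    congr 1
    ext
    simp only []
    have := i.2
    omega

lemma card_bound (n k : ℕ) :
    Fintype.card {A : Finset (Fin n) // A.card ≤ k} ≤ 1 + n ^ k := by
  classical
  have : Fintype.card {A : Finset (Fin n) // A.card ≤ k}
      ≤ Fintype.card (Option (Fin k → Fin n)) := by
    apply Fintype.card_le_of_injective
      (fun A => if h : A.1.Nonempty then some (psiAux k A.1 h) else none)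
    rintro ⟨A, hA⟩ ⟨B, hB⟩ hAB
    simp only at hAB
    by_cases h1 : A.Nonempty <;> by_cases h2 : B.Nonempty <;>
      simp [h1, h2] at hAB
    · apply Subtype.ext
      calc A = Finset.image (psiAux k A h1) Finset.univ := (psiAux_image A h1 hA).symm
        _ = Finset.image (psiAux k B h2) Finset.univ := by rw [hAB]
        _ = B := psiAux_image B h2 hB
    · exact Subtype.ext ((Finset.not_nonempty_iff_eq_empty.mp h1).trans
        (Finset.not_nonempty_iff_eq_empty.mp h2).symm)
  simpa [Fintype.card_option, Fintype.card_fun, add_comm] using this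

lemma qf_vmv (r : ℕ) (v y : Fin r → ℝ) :
    dotProduct (star y) (vecMulVec v v *ᵥ y) = (∑ a, v a * y a) ^ 2 := by
  simp only [dotProduct, mulVec, vecMulVec_apply, star_trivial, sq, Finset.sum_mul_sum,
    dotProduct]
  refine Finset.sum_congr rfl fun a _ => ?_
  rw [Finset.mul_sum]
  exact Finset.sum_congr rfl fun b _ => by ring

lemma psd_vmv (r : ℕ) (v : Fin r → ℝ) : (vecMulVec v v).PosSemidef := by
  refine Matrix.PosSemidef.of_dotProduct_mulVec_nonneg ?_ ?_
  · ext a b; simp [vecMulVec_apply, mul_comm]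
  · intro y
    rw [qf_vmv]
    positivity

lemma psd_sum_vmv (r t : ℕ) (w : Fin t → Fin r → ℝ) :
    (∑ j, vecMulVec (w j) (w j)).PosSemidef := by
  classical
  refine Finset.sum_induction _ _ ?_ ?_ (fun j _ => psd_vmv r (w j))
  · intro M N hM hN
    exact Matrix.PosSemidef.of_dotProduct_mulVec_nonneg (hM.1.add hN.1) fun y => by
      rw [Matrix.add_mulVec, dotProduct_add]
      exact add_nonneg (hM.dotProduct_mulVec_nonneg y) (hN.dotProduct_mulVec_nonneg y)
  · exact ⟨Matrix.isHermitian_zero, fun y => by simp⟩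

lemma trace_vmv (r : ℕ) (w v : Fin r → ℝ) :
    ((vecMulVec w w) * (vecMulVec v v)).trace = (∑ a, w a * v a) ^ 2 := by
  simp only [Matrix.trace, Matrix.diag, Matrix.mul_apply, vecMulVec_apply, sq,
    Finset.sum_mul_sum]
  refine Finset.sum_congr rfl fun a _ => Finset.sum_congr rfl fun b _ => by ring

/-- If `f : {0,1}^m → ℝ_{≥0}` has a sum-of-squares certificate of degree
`d+2` (i.e. `f = ∑_j g_j²` with `deg(g_j) ≤ 1 + d/2`), then for all `n ≥ m` the matrix
`M_n^f(S,x) = f(x_S)`, indexed by `m`-subsets `S ⊆ [n]` and `x ∈ {0,1}^n`, has psd rank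
at most `1 + n^{1+d/2}`. -/
theorem stmt17 (m n d : ℕ) (hmn : m ≤ n)
    (f : (Fin m → Bool) → ℝ) (hf : ∀ x, 0 ≤ f x)
    (t : ℕ) (g : Fin t → (Fin m → Bool) → ℝ)
    (hdeg : ∀ j, HasDegLE m (1 + d / 2) (g j))
    (hsum : ∀ x, f x = ∑ j, (g j x) ^ 2) :
    PsdRank (fun (S : {S : Finset (Fin n) // S.card = m}) (x : Fin n → Bool) =>
        f (restrict m n S.1 x)) ≤ 1 + n ^ (1 + d / 2) := by
  classical
  set k := 1 + d / 2 with hk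
  set r := Fintype.card {A : Finset (Fin n) // A.card ≤ k} with hrdef
  set e : {A : Finset (Fin n) // A.card ≤ k} ≃ Fin r := Fintype.equivFin _ with he
  -- coefficients of the g's
  have hc := fun j => (hdeg j).choose_spec
  set c : Fin t → Finset (Fin m) → ℝ := fun j => (hdeg j).choose with hcdef
  have hc0 : ∀ j T, k < T.card → c j T = 0 := fun j => (hc j).1
  have hcg : ∀ j x, g j x = ∑ T : Finset (Fin m), c j T * ∏ i ∈ T, bval (x i) :=
    fun j => (hc j).2
  -- the embedding of [m] into S
  set emb : {S : Finset (Fin n) // S.card = m} → Fin m → Fin n :=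
    fun S i => ((S.1.orderIsoOfFin S.2) i : Fin n) with hembdef
  have hembinj : ∀ S, Function.Injective (emb S) := by
    intro S a b hab
    have := Subtype.ext hab
    exact (S.1.orderIsoOfFin S.2).injective this
  have hrestrict : ∀ (S : {S : Finset (Fin n) // S.card = m}) (x : Fin n → Bool),
      restrict m n S.1 x = fun i => x (emb S i) := by
    intro S x
    simp only [restrict, S.2, dif_pos, hembdef]
  -- vectors
  set v : (Fin n → Bool) → Fin r → ℝ :=
    fun x a => ∏ i ∈ (e.symm a).1, bval (x i) with hvdef
  set w : {S : Finset (Fin n) // S.card = m} → Fin t → Fin r → ℝ :=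
    fun S j a => ∑ T : Finset (Fin m),
      if T.image (emb S) = (e.symm a).1 then c j T else 0 with hwdef
  -- the key identity
  have key : ∀ S j x, (∑ a, w S j a * v x a) = g j (restrict m n S.1 x) := by
    intro S j x
    rw [hcg, hrestrict]
    rw [← Equiv.sum_comp e (fun a => w S j a * v x a)]
    have step : ∀ A : {A : Finset (Fin n) // A.card ≤ k},
        w S j (e A) * v x (e A)
          = ∑ T : Finset (Fin m),
              (if T.image (emb S) = A.1 then c j T * ∏ i ∈ A.1, bval (x i) else 0) := by
      intro A
      simp only [hwdef, hvdef, Equiv.symm_apply_apply, Finset.sum_mul, ite_mul, zero_mul]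
    simp only [step]
    rw [Finset.sum_comm]
    refine Finset.sum_congr rfl fun T _ => ?_
    by_cases hT : T.card ≤ k
    · have hcard : (T.image (emb S)).card ≤ k := by
        rw [Finset.card_image_of_injective _ (hembinj S)]; exact hT
      set A₀ : {A : Finset (Fin n) // A.card ≤ k} := ⟨T.image (emb S), hcard⟩ with hA₀
      rw [Finset.sum_eq_single A₀]
      · rw [if_pos rfl]
        congr 1
        rw [Finset.prod_image (fun a _ b _ h => hembinj S h)]
      · intro A _ hA
        rw [if_neg]
        intro h
        exact hA (Subtype.ext (h.symm : A.1 = A₀.1))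
      · intro h
        exact absurd (Finset.mem_univ A₀) h
    · have hc0T : c j T = 0 := hc0 j T (by omega)
      simp [hc0T]
  -- the factorization
  have hmem : r ∈ {r : ℕ |
      ∃ (A : {S : Finset (Fin n) // S.card = m} → Matrix (Fin r) (Fin r) ℝ)
        (B : (Fin n → Bool) → Matrix (Fin r) (Fin r) ℝ),
        (∀ i, (A i).PosSemidef) ∧ (∀ j, (B j).PosSemidef) ∧
          ∀ i j, f (restrict m n i.1 j) = (A i * B j).trace} := by
    refine ⟨fun S => ∑ j, vecMulVec (w S j) (w S j),
      fun x => vecMulVec (v x) (v x),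
      fun S => psd_sum_vmv r t (w S), fun x => psd_vmv r (v x), ?_⟩
    intro S x
    rw [Finset.sum_mul, Matrix.trace_sum]
    rw [hsum]
    refine Finset.sum_congr rfl fun j _ => ?_
    rw [trace_vmv, key]
  exact le_trans (Nat.sInf_le hmem) (card_bound n k)
end
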